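/- arXiv:2406.03635 — 5 statements merged into one kernel-verified Lean document; each statement's English description precedes it below -/
import Mathlib

section
/- Let D be a tournament missing disjoint paths of length 2 and let C = a_1b_1c_1, …, a_kb_kc_k be a double cycle in Δ(D). For every t ∈ {1,…,k} (indices modulo k, so index k+1 means 1), with all neighborhoods taken in the induced subdigraph D[K(C)]: (1) if c_t ∉ N⁻(a_t), then |N⁺⁺(a_t)| = |N⁻(a_t)| when b_{t+1} ∈ N⁻(a_t), and |N⁺⁺(a_t)| = |N⁻(a_t)| − 1 otherwise; (2) if a_t ∉ N⁻(c_t), then |N⁺⁺(c_t)| = |N⁻(c_t)| when b_{t+1} ∈ N⁻(c_t), and |N⁺⁺(c_t)| = |N⁻(c_t)| − 1 otherwise; (3) |N⁺⁺(b_t)| = |N⁻(b_t)| + 1 when b_{t+1} ∈ N⁻(b_t), and |N⁺⁺(b_t)| = |N⁻(b_t)| otherwise. -/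
namespace SSNC

variable {V : Type*}

/-- The arc relation of an oriented graph: no digons (hence irreflexive). -/
def Oriented (A : V → V → Prop) : Prop := ∀ u v, A u v → ¬ A v u

/-- `u ∈ N⁺⁺(v)`: the second out-neighborhood. -/
def SecondOut (A : V → V → Prop) (v u : V) : Prop :=
  u ≠ v ∧ ¬ A v u ∧ ∃ w, A v w ∧ A w u

/-- `{u, v}` is a missing edge of the digraph. -/
def IsMissing (A : V → V → Prop) (u v : V) : Prop :=
  u ≠ v ∧ ¬ A u v ∧ ¬ A v u

/-- The losing relation for a fixed labeling of the two pairs: `a→x`, `b→y`,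
`y ∉ N⁺(a) ∪ N⁺⁺(a)` and `x ∉ N⁺(b) ∪ N⁺⁺(b)`. -/
def LosesOrd (A : V → V → Prop) (a b x y : V) : Prop :=
  A a x ∧ A b y ∧ ¬ A a y ∧ ¬ SecondOut A a y ∧ ¬ A b x ∧ ¬ SecondOut A b x

/-- The missing edge `{a,b}` loses to the missing edge `{x,y}` (for some labeling). -/
def Loses (A : V → V → Prop) (a b x y : V) : Prop :=
  LosesOrd A a b x y ∨ LosesOrd A a b y x

/-- Degree of a vertex in the missing graph. -/
noncomputable def mdeg (A : V → V → Prop) (v : V) : ℕ :=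
  ({w | IsMissing A v w} : Set V).ncard

/-- The missing graph, as a simple graph. -/
def missingGraph (A : V → V → Prop) : SimpleGraph V where
  Adj u v := IsMissing A u v
  symm := by
    constructor
    rintro u v ⟨h1, h2, h3⟩
    exact ⟨h1.symm, h3, h2⟩
  loopless := by
    constructor
    rintro v ⟨h1, -, -⟩
    exact h1 rfl

/-- The missing graph is a vertex-disjoint union of paths
(equivalently: acyclic with maximum degree at most 2). -/
def MissingDisjointPaths (A : V → V → Prop) : Prop :=
  (missingGraph A).IsAcyclic ∧ ∀ v, mdeg A v ≤ 2

/-- The missing graph is a vertex-disjoint union of paths on exactly 3 vertices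
(equivalently: every missing edge has one endpoint of missing-degree 1 and one of
missing-degree 2). -/
def MissingPaths2 (A : V → V → Prop) : Prop :=
  ∀ u v, IsMissing A u v →
    (mdeg A u = 1 ∧ mdeg A v = 2) ∨ (mdeg A u = 2 ∧ mdeg A v = 1)

/-- The missing graph is a vertex-disjoint union of paths on 2 or 3 vertices. -/
def MissingPathsLe2 (A : V → V → Prop) : Prop :=
  ∀ u v, IsMissing A u v →
    (mdeg A u = 1 ∧ mdeg A v = 1) ∨ (mdeg A u = 1 ∧ mdeg A v = 2) ∨
    (mdeg A u = 2 ∧ mdeg A v = 1)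

/-- Out-degree of the missing edge `{u,v}` in the dependency digraph `Δ(D)`:
the number of missing edges it loses to. -/
noncomputable def outDegDelta (A : V → V → Prop) (u v : V) : ℕ :=
  ({f : Sym2 V | ∃ x y, f = s(x, y) ∧ IsMissing A x y ∧ Loses A u v x y}).ncard

/-- In-degree of the missing edge `{u,v}` in the dependency digraph `Δ(D)`:
the number of missing edges losing to it. -/
noncomputable def inDegDelta (A : V → V → Prop) (u v : V) : ℕ :=
  ({f : Sym2 V | ∃ x y, f = s(x, y) ∧ IsMissing A x y ∧ Loses A x y u v}).ncard

/-- `C = a₁b₁c₁, …, a_k b_k c_k` is a double cycle in `Δ(D)`: pairwise vertex-disjoint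
missing paths of length 2 (`k ≥ 2`), where each of `{aᵢ,bᵢ}, {bᵢ,cᵢ}` loses to each of
`{aᵢ₊₁,bᵢ₊₁}, {bᵢ₊₁,cᵢ₊₁}` (indices modulo `k`). -/
def IsDoubleCycle (A : V → V → Prop) (k : ℕ) (a b c : ZMod k → V) : Prop :=
  2 ≤ k ∧
  (∀ i, IsMissing A (a i) (b i) ∧ IsMissing A (b i) (c i) ∧ a i ≠ c i) ∧
  (∀ i j, i ≠ j → Disjoint ({a i, b i, c i} : Set V) {a j, b j, c j}) ∧
  (∀ i, Loses A (a i) (b i) (a (i + 1)) (b (i + 1)) ∧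
        Loses A (a i) (b i) (b (i + 1)) (c (i + 1)) ∧
        Loses A (b i) (c i) (a (i + 1)) (b (i + 1)) ∧
        Loses A (b i) (c i) (b (i + 1)) (c (i + 1)))

/-- `K(C)` for a double cycle `C`. -/
def Kset {k : ℕ} (a b c : ZMod k → V) : Set V :=
  {v | ∃ i, v = a i ∨ v = b i ∨ v = c i}

/-- Out-neighborhood in the subdigraph induced on `K`. -/
def outIn (A : V → V → Prop) (K : Set V) (v : V) : Set V := {u | u ∈ K ∧ A v u}

/-- In-neighborhood in the subdigraph induced on `K`. -/
def inIn (A : V → V → Prop) (K : Set V) (v : V) : Set V := {u | u ∈ K ∧ A u v}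

/-- Second out-neighborhood in the subdigraph induced on `K`. -/
def secondOutIn (A : V → V → Prop) (K : Set V) (v : V) : Set V :=
  {u | u ∈ K ∧ u ≠ v ∧ ¬ A v u ∧ ∃ w ∈ K, A v w ∧ A w u}

/-- Second in-neighborhood in the subdigraph induced on `K`. -/
def secondInIn (A : V → V → Prop) (K : Set V) (v : V) : Set V :=
  {u | u ∈ K ∧ u ≠ v ∧ ¬ A u v ∧ ∃ w ∈ K, A u w ∧ A w v}

/-! ### Auxiliary machinery for Lemma 4.12 -/

/-- No intermediate vertex `w` with `x→w→y`. -/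
def NoW (A : V → V → Prop) (x y : V) : Prop := ∀ w, ¬ (A x w ∧ A w y)

lemma noW_of_not_so {A : V → V → Prop} {x y : V} (h : ¬ SecondOut A x y)
    (hne : y ≠ x) (hn : ¬ A x y) : NoW A x y :=
  fun w hw => h ⟨hne, hn, w, hw.1, hw.2⟩

/-- "Case I" pattern between consecutive paths. -/
def PatI (A : V → V → Prop) {k : ℕ} (a b c : ZMod k → V) (i : ZMod k) : Prop :=
  A (b i) (b (i+1)) ∧
  A (a i) (a (i+1)) ∧ A (a i) (c (i+1)) ∧ A (c i) (a (i+1)) ∧ A (c i) (c (i+1)) ∧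
  A (b (i+1)) (a i) ∧ A (b (i+1)) (c i) ∧ A (a (i+1)) (b i) ∧ A (c (i+1)) (b i) ∧
  NoW A (a i) (b (i+1)) ∧ NoW A (c i) (b (i+1)) ∧ NoW A (b i) (a (i+1)) ∧
  NoW A (b i) (c (i+1))

/-- "Case II" pattern between consecutive paths. -/
def PatII (A : V → V → Prop) {k : ℕ} (a b c : ZMod k → V) (i : ZMod k) : Prop :=
  A (b (i+1)) (b i) ∧
  A (a i) (b (i+1)) ∧ A (c i) (b (i+1)) ∧ A (b i) (a (i+1)) ∧ A (b i) (c (i+1)) ∧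
  A (a (i+1)) (a i) ∧ A (a (i+1)) (c i) ∧ A (c (i+1)) (a i) ∧ A (c (i+1)) (c i) ∧
  NoW A (a i) (a (i+1)) ∧ NoW A (a i) (c (i+1)) ∧ NoW A (c i) (a (i+1)) ∧
  NoW A (c i) (c (i+1)) ∧ NoW A (b i) (b (i+1))

lemma PatI.swap {A : V → V → Prop} {k : ℕ} {a b c : ZMod k → V} {i : ZMod k}
    (h : PatI A a b c i) : PatI A c b a i := by
  obtain ⟨h1,h2,h3,h4,h5,h6,h7,h8,h9,h10,h11,h12,h13⟩ := h
  exact ⟨h1,h5,h4,h3,h2,h7,h6,h9,h8,h11,h10,h13,h12⟩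

lemma PatII.swap {A : V → V → Prop} {k : ℕ} {a b c : ZMod k → V} {i : ZMod k}
    (h : PatII A a b c i) : PatII A c b a i := by
  obtain ⟨h1,h2,h3,h4,h5,h6,h7,h8,h9,h10,h11,h12,h13,h14⟩ := h
  exact ⟨h1,h3,h2,h5,h4,h9,h8,h7,h6,h13,h12,h11,h10,h14⟩

/-- Bundle of structural facts derived from the hypotheses of Lemma 4.12. -/
structure Ctx (A : V → V → Prop) (k : ℕ) (a b c : ZMod k → V) (K : Set V) : Prop where
  hA : Oriented A
  hk : 2 ≤ k
  memK : ∀ x, x ∈ K ↔ ∃ i, x = a i ∨ x = b i ∨ x = c i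
  neab : ∀ i, a i ≠ b i
  nebc : ∀ i, b i ≠ c i
  neac : ∀ i, a i ≠ c i
  cross : ∀ (i j : ZMod k) (x y : V), i ≠ j → (x = a i ∨ x = b i ∨ x = c i) →
    (y = a j ∨ y = b j ∨ y = c j) → x ≠ y
  adj : ∀ (i j : ZMod k) (x y : V), i ≠ j → (x = a i ∨ x = b i ∨ x = c i) →
    (y = a j ∨ y = b j ∨ y = c j) → A x y ∨ A y x
  adjac : ∀ i, A (a i) (c i) ∨ A (c i) (a i)
  nab : ∀ i, ¬ A (a i) (b i)
  nba : ∀ i, ¬ A (b i) (a i)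
  nbc : ∀ i, ¬ A (b i) (c i)
  ncb : ∀ i, ¬ A (c i) (b i)
  pat : ∀ i, PatI A a b c i ∨ PatII A a b c i

lemma Ctx.swap {A : V → V → Prop} {k : ℕ} {a b c : ZMod k → V} {K : Set V}
    (H : Ctx A k a b c K) : Ctx A k c b a K where
  hA := H.hA
  hk := H.hk
  memK := fun x => (H.memK x).trans ⟨fun ⟨i, h⟩ => ⟨i, by tauto⟩, fun ⟨i, h⟩ => ⟨i, by tauto⟩⟩
  neab := fun i => (H.nebc i).symm
  nebc := fun i => (H.neab i).symm
  neac := fun i => (H.neac i).symm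
  cross := fun i j x y hij hx hy => H.cross i j x y hij (by tauto) (by tauto)
  adj := fun i j x y hij hx hy => H.adj i j x y hij (by tauto) (by tauto)
  adjac := fun i => (H.adjac i).symm
  nab := H.ncb
  nba := H.nbc
  nbc := H.nba
  ncb := H.nab
  pat := fun i => (H.pat i).imp PatI.swap PatII.swap

lemma Ctx.ne_succ {A : V → V → Prop} {k : ℕ} {a b c : ZMod k → V} {K : Set V}
    (H : Ctx A k a b c K) (i : ZMod k) : i ≠ i + 1 := by
  haveI : Fact (1 < k) := ⟨H.hk⟩
  intro h
  have h0 : (0 : ZMod k) = 1 := by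
    have := congrArg (fun z => z - i) h
    simpa using this
  exact one_ne_zero h0.symm

/-- Key lemma: an in-neighbour of `v ∈ P t` lying on a path other than `P t`, `P (t+1)`
has a "witness" in `P (t+1)`, i.e. lies in the second out-neighbourhood of `v`. -/
lemma Ctx.star {A : V → V → Prop} {k : ℕ} {a b c : ZMod k → V} {K : Set V}
    (H : Ctx A k a b c K) (t j : ZMod k) (hjt : j ≠ t) (hjt1 : j ≠ t + 1)
    (v u : V) (hv : v = a t ∨ v = b t ∨ v = c t) (hu : u = a j ∨ u = b j ∨ u = c j)
    (huv : A u v) :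
    ∃ w, (w = a (t+1) ∨ w = b (t+1) ∨ w = c (t+1)) ∧ A v w ∧ A w u := by
  by_contra hcon
  push_neg at hcon
  haveI : NeZero k := ⟨by have := H.hk; omega⟩
  -- adjacency with u
  have adjU : ∀ (m : ZMod k), m ≠ j → ∀ x, (x = a m ∨ x = b m ∨ x = c m) → ¬ A x u → A u x := by
    intro m hm x hx hxu
    rcases H.adj j m u x (fun h => hm h.symm) hu hx with h | h
    · exact h
    · exact absurd h hxu
  -- u beats every out-neighbour of v on P (t+1)
  have hW : ∀ x, (x = a (t+1) ∨ x = b (t+1) ∨ x = c (t+1)) → A v x → A u x := by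
    intro x hx hvx
    exact adjU (t+1) (fun h => hjt1 h.symm) x hx (hcon x hx hvx)
  -- the descending step
  have step : ∀ (m : ZMod k), m ≠ j → A u (b (m+1)) →
      (A u (a (m+1)) ∨ A u (c (m+1))) → A u (a m) ∧ A u (b m) := by
    intro m hm hb hE
    rcases H.pat m with P | P
    · obtain ⟨p1,p2,p3,p4,p5,p6,p7,p8,p9,p10,p11,p12,p13⟩ := P
      refine ⟨adjU m hm _ (Or.inl rfl) (fun hau => p10 u ⟨hau, hb⟩), ?_⟩
      rcases hE with hE | hE
      · exact adjU m hm _ (Or.inr (Or.inl rfl)) (fun hbu => p12 u ⟨hbu, hE⟩)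
      · exact adjU m hm _ (Or.inr (Or.inl rfl)) (fun hbu => p13 u ⟨hbu, hE⟩)
    · obtain ⟨p1,p2,p3,p4,p5,p6,p7,p8,p9,p10,p11,p12,p13,p14⟩ := P
      refine ⟨?_, adjU m hm _ (Or.inr (Or.inl rfl)) (fun hbu => p14 u ⟨hbu, hb⟩)⟩
      rcases hE with hE | hE
      · exact adjU m hm _ (Or.inl rfl) (fun hau => p10 u ⟨hau, hE⟩)
      · exact adjU m hm _ (Or.inl rfl) (fun hau => p11 u ⟨hau, hE⟩)
  have htj : t ≠ j := fun h => hjt h.symm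
  -- base at level t
  have base : A u (b t) ∧ (A u (a t) ∨ A u (c t)) := by
    rcases H.pat t with P | P
    · obtain ⟨p1,p2,p3,p4,p5,p6,p7,p8,p9,p10,p11,p12,p13⟩ := P
      rcases hv with rfl | rfl | rfl
      · have h1 : A u (a (t+1)) := hW _ (Or.inl rfl) p2
        exact ⟨adjU t htj _ (Or.inr (Or.inl rfl)) (fun hbu => p12 u ⟨hbu, h1⟩),
          Or.inl huv⟩
      · have h1 : A u (b (t+1)) := hW _ (Or.inr (Or.inl rfl)) p1
        exact ⟨huv, Or.inl (adjU t htj _ (Or.inl rfl) (fun hau => p10 u ⟨hau, h1⟩))⟩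
      · have h1 : A u (a (t+1)) := hW _ (Or.inl rfl) p4
        exact ⟨adjU t htj _ (Or.inr (Or.inl rfl)) (fun hbu => p12 u ⟨hbu, h1⟩),
          Or.inr huv⟩
    · obtain ⟨p1,p2,p3,p4,p5,p6,p7,p8,p9,p10,p11,p12,p13,p14⟩ := P
      rcases hv with rfl | rfl | rfl
      · have h1 : A u (b (t+1)) := hW _ (Or.inr (Or.inl rfl)) p2
        exact ⟨adjU t htj _ (Or.inr (Or.inl rfl)) (fun hbu => p14 u ⟨hbu, h1⟩),
          Or.inl huv⟩
      · have h1 : A u (a (t+1)) := hW _ (Or.inl rfl) p4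
        exact ⟨huv, Or.inl (adjU t htj _ (Or.inl rfl) (fun hau => p10 u ⟨hau, h1⟩))⟩
      · have h1 : A u (b (t+1)) := hW _ (Or.inr (Or.inl rfl)) p3
        exact ⟨adjU t htj _ (Or.inr (Or.inl rfl)) (fun hbu => p14 u ⟨hbu, h1⟩),
          Or.inr huv⟩
  -- descend from level t to level j + 1
  set n0 : ℕ := (t - j - 1 : ZMod k).val with hn0
  have hvlt : n0 < k := ZMod.val_lt _
  have hcast : ((n0 : ℕ) : ZMod k) = t - j - 1 := ZMod.natCast_rightInverse _
  have desc : ∀ n : ℕ, n ≤ n0 → A u (b (t - n)) ∧ (A u (a (t - n)) ∨ A u (c (t - n))) := by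
    intro n
    induction n with
    | zero => intro _; simpa using base
    | succ m ih =>
      intro hm
      have ihm := ih (Nat.le_of_succ_le hm)
      have hne : (t - (m+1 : ℕ) : ZMod k) ≠ j := by
        intro h
        have h2 : (t - j - 1 : ZMod k) = (m : ℕ) := by
          rw [← h]; push_cast; ring
        have h3 : n0 = m := by
          rw [hn0, h2, ZMod.val_cast_of_lt (by omega : m < k)]
        omega
      have harith : (t - (m+1 : ℕ) : ZMod k) + 1 = t - (m : ℕ) := by push_cast; ring
      obtain ⟨ha', hb'⟩ := step _ hne (harith.symm ▸ ihm.1) (harith.symm ▸ ihm.2)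
      exact ⟨hb', Or.inl ha'⟩
  have hfinal := desc n0 le_rfl
  have hjj : (t - (n0 : ℕ) : ZMod k) = j + 1 := by rw [hcast]; ring
  rw [hjj] at hfinal
  obtain ⟨hbj, hEj⟩ := hfinal
  -- final contradiction : a digon with u
  rcases H.pat j with P | P
  · obtain ⟨p1,p2,p3,p4,p5,p6,p7,p8,p9,p10,p11,p12,p13⟩ := P
    rcases hu with rfl | rfl | rfl
    · exact H.hA _ _ hbj p6
    · rcases hEj with h | h
      · exact H.hA _ _ h p8
      · exact H.hA _ _ h p9
    · exact H.hA _ _ hbj p7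
  · obtain ⟨p1,p2,p3,p4,p5,p6,p7,p8,p9,p10,p11,p12,p13,p14⟩ := P
    rcases hu with rfl | rfl | rfl
    · rcases hEj with h | h
      · exact H.hA _ _ h p6
      · exact H.hA _ _ h p8
    · exact H.hA _ _ hbj p1
    · rcases hEj with h | h
      · exact H.hA _ _ h p7
      · exact H.hA _ _ h p9

lemma ncard_formula [Fintype V] {I S T N : Set V} (hN : N = (I \ S) ∪ T) (hS : S ⊆ I)
    (hT : Disjoint T (I \ S)) : N.ncard = I.ncard - S.ncard + T.ncard := by
  subst hN
  rw [Set.ncard_union_eq hT.symm (Set.toFinite _) (Set.toFinite _),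
      Set.ncard_diff hS (Set.toFinite _)]

section Parts

variable {A : V → V → Prop} {k : ℕ} {a b c : ZMod k → V} {K : Set V}

/-- Part (3) of Lemma 4.12 : the middle vertex. -/
lemma Ctx.partB [Fintype V] (H : Ctx A k a b c K) (t : ZMod k) :
    (b (t + 1) ∈ inIn A K (b t) →
        (secondOutIn A K (b t)).ncard = (inIn A K (b t)).ncard + 1) ∧
    (b (t + 1) ∉ inIn A K (b t) →
        (secondOutIn A K (b t)).ncard = (inIn A K (b t)).ncard) := by
  have hKa : ∀ i, a i ∈ K := fun i => (H.memK _).2 ⟨i, Or.inl rfl⟩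
  have hKb : ∀ i, b i ∈ K := fun i => (H.memK _).2 ⟨i, Or.inr (Or.inl rfl)⟩
  have hKc : ∀ i, c i ∈ K := fun i => (H.memK _).2 ⟨i, Or.inr (Or.inr rfl)⟩
  have hne1 : ∀ i : ZMod k, (i : ZMod k) ≠ i + 1 := H.ne_succ
  rcases H.pat t with P | P
  · obtain ⟨p1,p2,p3,p4,p5,p6,p7,p8,p9,p10,p11,p12,p13⟩ := P
    have hset : secondOutIn A K (b t) =
        (inIn A K (b t) \ {a (t+1), c (t+1)}) ∪ {a t, c t} := by
      ext x
      simp only [secondOutIn, inIn, Set.mem_union, Set.mem_diff, Set.mem_setOf_eq,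
        Set.mem_insert_iff, Set.mem_singleton_iff]
      constructor
      · rintro ⟨hxK, hxne, hnvx, w, hwK, hvw, hwx⟩
        obtain ⟨i, hi⟩ := (H.memK x).1 hxK
        by_cases hit : i = t
        · rw [hit] at hi
          rcases hi with rfl | rfl | rfl
          · exact Or.inr (Or.inl rfl)
          · exact absurd rfl hxne
          · exact Or.inr (Or.inr rfl)
        · by_cases hit1 : i = t + 1
          · subst hit1
            rcases hi with rfl | rfl | rfl
            · exact absurd ⟨hvw, hwx⟩ (p12 w)
            · exact absurd p1 hnvx
            · exact absurd ⟨hvw, hwx⟩ (p13 w)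
          · have hxb : A x (b t) := by
              rcases H.adj i t x (b t) hit hi (Or.inr (Or.inl rfl)) with h | h
              · exact h
              · exact absurd h hnvx
            exact Or.inl ⟨⟨hxK, hxb⟩, by
              push_neg
              exact ⟨H.cross i (t+1) x _ hit1 hi (Or.inl rfl),
                H.cross i (t+1) x _ hit1 hi (Or.inr (Or.inr rfl))⟩⟩
      · rintro (⟨⟨hxK, hxb⟩, hxS⟩ | hT)
        · push_neg at hxS
          obtain ⟨i, hi⟩ := (H.memK x).1 hxK
          have hnvx : ¬ A (b t) x := fun h => H.hA _ _ h hxb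
          by_cases hit : i = t
          · rw [hit] at hi
            rcases hi with rfl | rfl | rfl
            · exact absurd hxb (H.nab t)
            · exact absurd hxb (fun h => H.hA _ _ h h)
            · exact absurd hxb (H.ncb t)
          · by_cases hit1 : i = t + 1
            · subst hit1
              rcases hi with rfl | rfl | rfl
              · exact absurd rfl hxS.1
              · exact absurd hxb (H.hA _ _ p1)
              · exact absurd rfl hxS.2
            · obtain ⟨w, hw, hvw, hwx⟩ :=
                H.star t i hit hit1 (b t) x (Or.inr (Or.inl rfl)) hi hxb
              exact ⟨hxK, H.cross i t x _ hit hi (Or.inr (Or.inl rfl)), hnvx,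
                w, (H.memK w).2 ⟨t+1, hw⟩, hvw, hwx⟩
        · rcases hT with rfl | rfl
          · exact ⟨hKa t, H.neab t, H.nba t, b (t+1), hKb (t+1), p1, p6⟩
          · exact ⟨hKc t, fun h => H.nebc t h.symm, H.nbc t, b (t+1), hKb (t+1), p1, p7⟩
    have hSsub : ({a (t+1), c (t+1)} : Set V) ⊆ inIn A K (b t) := by
      intro x hx
      rcases hx with rfl | hx
      · exact ⟨hKa _, p8⟩
      · rw [Set.mem_singleton_iff] at hx; subst hx; exact ⟨hKc _, p9⟩
    have hTd : Disjoint ({a t, c t} : Set V) (inIn A K (b t) \ {a (t+1), c (t+1)}) := by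
      rw [Set.disjoint_left]
      rintro x (rfl | hx) hmem
      · exact H.nab t hmem.1.2
      · rw [Set.mem_singleton_iff] at hx; subst hx; exact H.ncb t hmem.1.2
    have hcount := ncard_formula hset hSsub hTd
    rw [Set.ncard_pair (H.neac (t+1)), Set.ncard_pair (H.neac t)] at hcount
    have hge : 2 ≤ (inIn A K (b t)).ncard := by
      have := Set.ncard_le_ncard hSsub (Set.toFinite _)
      rwa [Set.ncard_pair (H.neac (t+1))] at this
    have hbmem : b (t + 1) ∉ inIn A K (b t) := fun h => H.hA _ _ p1 h.2
    exact ⟨fun h => absurd h hbmem, fun _ => by omega⟩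
  · obtain ⟨p1,p2,p3,p4,p5,p6,p7,p8,p9,p10,p11,p12,p13,p14⟩ := P
    have hset : secondOutIn A K (b t) =
        (inIn A K (b t) \ {b (t+1)}) ∪ {a t, c t} := by
      ext x
      simp only [secondOutIn, inIn, Set.mem_union, Set.mem_diff, Set.mem_setOf_eq,
        Set.mem_insert_iff, Set.mem_singleton_iff]
      constructor
      · rintro ⟨hxK, hxne, hnvx, w, hwK, hvw, hwx⟩
        obtain ⟨i, hi⟩ := (H.memK x).1 hxK
        by_cases hit : i = t
        · rw [hit] at hi
          rcases hi with rfl | rfl | rfl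
          · exact Or.inr (Or.inl rfl)
          · exact absurd rfl hxne
          · exact Or.inr (Or.inr rfl)
        · by_cases hit1 : i = t + 1
          · subst hit1
            rcases hi with rfl | rfl | rfl
            · exact absurd p4 hnvx
            · exact absurd ⟨hvw, hwx⟩ (p14 w)
            · exact absurd p5 hnvx
          · have hxb : A x (b t) := by
              rcases H.adj i t x (b t) hit hi (Or.inr (Or.inl rfl)) with h | h
              · exact h
              · exact absurd h hnvx
            exact Or.inl ⟨⟨hxK, hxb⟩,
              H.cross i (t+1) x _ hit1 hi (Or.inr (Or.inl rfl))⟩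
      · rintro (⟨⟨hxK, hxb⟩, hxS⟩ | hT)
        · obtain ⟨i, hi⟩ := (H.memK x).1 hxK
          have hnvx : ¬ A (b t) x := fun h => H.hA _ _ h hxb
          by_cases hit : i = t
          · rw [hit] at hi
            rcases hi with rfl | rfl | rfl
            · exact absurd hxb (H.nab t)
            · exact absurd hxb (fun h => H.hA _ _ h h)
            · exact absurd hxb (H.ncb t)
          · by_cases hit1 : i = t + 1
            · subst hit1
              rcases hi with rfl | rfl | rfl
              · exact absurd hxb (H.hA _ _ p4)
              · exact absurd rfl hxS
              · exact absurd hxb (H.hA _ _ p5)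
            · obtain ⟨w, hw, hvw, hwx⟩ :=
                H.star t i hit hit1 (b t) x (Or.inr (Or.inl rfl)) hi hxb
              exact ⟨hxK, H.cross i t x _ hit hi (Or.inr (Or.inl rfl)), hnvx,
                w, (H.memK w).2 ⟨t+1, hw⟩, hvw, hwx⟩
        · rcases hT with rfl | rfl
          · exact ⟨hKa t, H.neab t, H.nba t, a (t+1), hKa (t+1), p4, p6⟩
          · exact ⟨hKc t, fun h => H.nebc t h.symm, H.nbc t, a (t+1), hKa (t+1), p4, p7⟩
    have hSsub : ({b (t+1)} : Set V) ⊆ inIn A K (b t) := by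
      intro x hx
      rw [Set.mem_singleton_iff] at hx; subst hx; exact ⟨hKb _, p1⟩
    have hTd : Disjoint ({a t, c t} : Set V) (inIn A K (b t) \ {b (t+1)}) := by
      rw [Set.disjoint_left]
      rintro x (rfl | hx) hmem
      · exact H.nab t hmem.1.2
      · rw [Set.mem_singleton_iff] at hx; subst hx; exact H.ncb t hmem.1.2
    have hcount := ncard_formula hset hSsub hTd
    rw [Set.ncard_singleton, Set.ncard_pair (H.neac t)] at hcount
    have hge : 1 ≤ (inIn A K (b t)).ncard := by
      have := Set.ncard_le_ncard hSsub (Set.toFinite _)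
      rwa [Set.ncard_singleton] at this
    have hbmem : b (t + 1) ∈ inIn A K (b t) := ⟨hKb _, p1⟩
    exact ⟨fun _ => by omega, fun h => absurd hbmem h⟩

/-- Part (1) of Lemma 4.12 : an end vertex. -/
lemma Ctx.partA [Fintype V] (H : Ctx A k a b c K) (t : ZMod k) (hca : ¬ A (c t) (a t)) :
    (b (t + 1) ∈ inIn A K (a t) →
        (secondOutIn A K (a t)).ncard = (inIn A K (a t)).ncard) ∧
    (b (t + 1) ∉ inIn A K (a t) →
        (secondOutIn A K (a t)).ncard = (inIn A K (a t)).ncard - 1) := by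
  have hKa : ∀ i, a i ∈ K := fun i => (H.memK _).2 ⟨i, Or.inl rfl⟩
  have hKb : ∀ i, b i ∈ K := fun i => (H.memK _).2 ⟨i, Or.inr (Or.inl rfl)⟩
  have hKc : ∀ i, c i ∈ K := fun i => (H.memK _).2 ⟨i, Or.inr (Or.inr rfl)⟩
  have hac : A (a t) (c t) := (H.adjac t).resolve_right hca
  rcases H.pat t with P | P
  · obtain ⟨p1,p2,p3,p4,p5,p6,p7,p8,p9,p10,p11,p12,p13⟩ := P
    have hset : secondOutIn A K (a t) =
        (inIn A K (a t) \ {b (t+1)}) ∪ {b t} := by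
      ext x
      simp only [secondOutIn, inIn, Set.mem_union, Set.mem_diff, Set.mem_setOf_eq,
        Set.mem_singleton_iff]
      constructor
      · rintro ⟨hxK, hxne, hnvx, w, hwK, hvw, hwx⟩
        obtain ⟨i, hi⟩ := (H.memK x).1 hxK
        by_cases hit : i = t
        · rw [hit] at hi
          rcases hi with rfl | rfl | rfl
          · exact absurd rfl hxne
          · exact Or.inr rfl
          · exact absurd hac hnvx
        · by_cases hit1 : i = t + 1
          · subst hit1
            rcases hi with rfl | rfl | rfl
            · exact absurd p2 hnvx
            · exact absurd ⟨hvw, hwx⟩ (p10 w)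
            · exact absurd p3 hnvx
          · have hxb : A x (a t) := by
              rcases H.adj i t x (a t) hit hi (Or.inl rfl) with h | h
              · exact h
              · exact absurd h hnvx
            exact Or.inl ⟨⟨hxK, hxb⟩,
              H.cross i (t+1) x _ hit1 hi (Or.inr (Or.inl rfl))⟩
      · rintro (⟨⟨hxK, hxb⟩, hxS⟩ | rfl)
        · obtain ⟨i, hi⟩ := (H.memK x).1 hxK
          have hnvx : ¬ A (a t) x := fun h => H.hA _ _ h hxb
          by_cases hit : i = t
          · rw [hit] at hi
            rcases hi with rfl | rfl | rfl
            · exact absurd hxb (fun h => H.hA _ _ h h)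
            · exact absurd hxb (H.nba t)
            · exact absurd hxb hca
          · by_cases hit1 : i = t + 1
            · subst hit1
              rcases hi with rfl | rfl | rfl
              · exact absurd hxb (H.hA _ _ p2)
              · exact absurd rfl hxS
              · exact absurd hxb (H.hA _ _ p3)
            · obtain ⟨w, hw, hvw, hwx⟩ :=
                H.star t i hit hit1 (a t) x (Or.inl rfl) hi hxb
              exact ⟨hxK, H.cross i t x _ hit hi (Or.inl rfl), hnvx,
                w, (H.memK w).2 ⟨t+1, hw⟩, hvw, hwx⟩
        · exact ⟨hKb t, fun h => H.neab t h.symm, H.nab t, a (t+1), hKa (t+1), p2, p8⟩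
    have hSsub : ({b (t+1)} : Set V) ⊆ inIn A K (a t) := by
      intro x hx
      rw [Set.mem_singleton_iff] at hx; subst hx; exact ⟨hKb _, p6⟩
    have hTd : Disjoint ({b t} : Set V) (inIn A K (a t) \ {b (t+1)}) := by
      rw [Set.disjoint_left]
      rintro x rfl hmem
      exact H.nba t hmem.1.2
    have hcount := ncard_formula hset hSsub hTd
    rw [Set.ncard_singleton, Set.ncard_singleton] at hcount
    have hge : 1 ≤ (inIn A K (a t)).ncard := by
      have := Set.ncard_le_ncard hSsub (Set.toFinite _)
      rwa [Set.ncard_singleton] at this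
    have hbmem : b (t + 1) ∈ inIn A K (a t) := ⟨hKb _, p6⟩
    exact ⟨fun _ => by omega, fun h => absurd hbmem h⟩
  · obtain ⟨p1,p2,p3,p4,p5,p6,p7,p8,p9,p10,p11,p12,p13,p14⟩ := P
    have hset : secondOutIn A K (a t) =
        (inIn A K (a t) \ {a (t+1), c (t+1)}) ∪ {b t} := by
      ext x
      simp only [secondOutIn, inIn, Set.mem_union, Set.mem_diff, Set.mem_setOf_eq,
        Set.mem_insert_iff, Set.mem_singleton_iff]
      constructor
      · rintro ⟨hxK, hxne, hnvx, w, hwK, hvw, hwx⟩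
        obtain ⟨i, hi⟩ := (H.memK x).1 hxK
        by_cases hit : i = t
        · rw [hit] at hi
          rcases hi with rfl | rfl | rfl
          · exact absurd rfl hxne
          · exact Or.inr rfl
          · exact absurd hac hnvx
        · by_cases hit1 : i = t + 1
          · subst hit1
            rcases hi with rfl | rfl | rfl
            · exact absurd ⟨hvw, hwx⟩ (p10 w)
            · exact absurd p2 hnvx
            · exact absurd ⟨hvw, hwx⟩ (p11 w)
          · have hxb : A x (a t) := by
              rcases H.adj i t x (a t) hit hi (Or.inl rfl) with h | h
              · exact h
              · exact absurd h hnvx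
            exact Or.inl ⟨⟨hxK, hxb⟩, by
              push_neg
              exact ⟨H.cross i (t+1) x _ hit1 hi (Or.inl rfl),
                H.cross i (t+1) x _ hit1 hi (Or.inr (Or.inr rfl))⟩⟩
      · rintro (⟨⟨hxK, hxb⟩, hxS⟩ | rfl)
        · push_neg at hxS
          obtain ⟨i, hi⟩ := (H.memK x).1 hxK
          have hnvx : ¬ A (a t) x := fun h => H.hA _ _ h hxb
          by_cases hit : i = t
          · rw [hit] at hi
            rcases hi with rfl | rfl | rfl
            · exact absurd hxb (fun h => H.hA _ _ h h)
            · exact absurd hxb (H.nba t)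
            · exact absurd hxb hca
          · by_cases hit1 : i = t + 1
            · subst hit1
              rcases hi with rfl | rfl | rfl
              · exact absurd rfl hxS.1
              · exact absurd hxb (H.hA _ _ p2)
              · exact absurd rfl hxS.2
            · obtain ⟨w, hw, hvw, hwx⟩ :=
                H.star t i hit hit1 (a t) x (Or.inl rfl) hi hxb
              exact ⟨hxK, H.cross i t x _ hit hi (Or.inl rfl), hnvx,
                w, (H.memK w).2 ⟨t+1, hw⟩, hvw, hwx⟩
        · exact ⟨hKb t, fun h => H.neab t h.symm, H.nab t, b (t+1), hKb (t+1), p2, p1⟩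
    have hSsub : ({a (t+1), c (t+1)} : Set V) ⊆ inIn A K (a t) := by
      intro x hx
      rcases hx with rfl | hx
      · exact ⟨hKa _, p6⟩
      · rw [Set.mem_singleton_iff] at hx; subst hx; exact ⟨hKc _, p8⟩
    have hTd : Disjoint ({b t} : Set V) (inIn A K (a t) \ {a (t+1), c (t+1)}) := by
      rw [Set.disjoint_left]
      rintro x rfl hmem
      exact H.nba t hmem.1.2
    have hcount := ncard_formula hset hSsub hTd
    rw [Set.ncard_pair (H.neac (t+1)), Set.ncard_singleton] at hcount
    have hge : 2 ≤ (inIn A K (a t)).ncard := by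
      have := Set.ncard_le_ncard hSsub (Set.toFinite _)
      rwa [Set.ncard_pair (H.neac (t+1))] at this
    have hbmem : b (t + 1) ∉ inIn A K (a t) := fun h => H.hA _ _ p2 h.2
    exact ⟨fun h => absurd h hbmem, fun _ => by omega⟩

end Parts

/-- Lemma 4.12: sizes of the second out-neighborhoods in `D[K(C)]`. -/
theorem stmt11 {V : Type*} [Fintype V] (A : V → V → Prop) (hA : Oriented A)
    (hP : MissingPaths2 A) (k : ℕ) (a b c : ZMod k → V)
    (hC : IsDoubleCycle A k a b c) (K : Set V) (hK : K = Kset a b c) :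
    ∀ t,
      (c t ∉ inIn A K (a t) →
        ((b (t + 1) ∈ inIn A K (a t) →
            (secondOutIn A K (a t)).ncard = (inIn A K (a t)).ncard) ∧
         (b (t + 1) ∉ inIn A K (a t) →
            (secondOutIn A K (a t)).ncard = (inIn A K (a t)).ncard - 1))) ∧
      (a t ∉ inIn A K (c t) →
        ((b (t + 1) ∈ inIn A K (c t) →
            (secondOutIn A K (c t)).ncard = (inIn A K (c t)).ncard) ∧
         (b (t + 1) ∉ inIn A K (c t) →
            (secondOutIn A K (c t)).ncard = (inIn A K (c t)).ncard - 1))) ∧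
      ((b (t + 1) ∈ inIn A K (b t) →
          (secondOutIn A K (b t)).ncard = (inIn A K (b t)).ncard + 1) ∧
       (b (t + 1) ∉ inIn A K (b t) →
          (secondOutIn A K (b t)).ncard = (inIn A K (b t)).ncard)) := by
  obtain ⟨hk, hmiss, hdisj, hloses⟩ := hC
  subst hK
  -- classification of missing edges
  have hsymm : ∀ {u v : V}, IsMissing A u v → IsMissing A v u :=
    fun h => ⟨h.1.symm, h.2.2, h.2.1⟩
  have hsubB : ∀ i, ({a i, c i} : Set V) ⊆ {w | IsMissing A (b i) w} := by
    intro i x hx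
    simp only [Set.mem_insert_iff, Set.mem_singleton_iff] at hx
    rcases hx with rfl | rfl
    · exact hsymm (hmiss i).1
    · exact (hmiss i).2.1
  have mdegb2 : ∀ i, 2 ≤ mdeg A (b i) := by
    intro i
    have h := Set.ncard_le_ncard (hsubB i) (Set.toFinite _)
    rwa [Set.ncard_pair (hmiss i).2.2] at h
  have hPb : ∀ i x, IsMissing A (b i) x → mdeg A (b i) = 2 ∧ mdeg A x = 1 := by
    intro i x h
    rcases hP _ _ h with ⟨h1, _⟩ | h2
    · exact absurd h1 (by have := mdegb2 i; omega)
    · exact h2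
  have missB : ∀ i x, IsMissing A (b i) x → x = a i ∨ x = c i := by
    intro i x h
    have h2 := (hPb i x h).1
    have heq : ({a i, c i} : Set V) = {w | IsMissing A (b i) w} :=
      Set.eq_of_subset_of_ncard_le (hsubB i)
        (by rw [Set.ncard_pair (hmiss i).2.2]; unfold mdeg at h2; omega) (Set.toFinite _)
    have hx : x ∈ ({a i, c i} : Set V) := by rw [heq]; exact h
    simpa using hx
  have missA : ∀ i x, IsMissing A (a i) x → x = b i := by
    intro i x h
    have h1 : mdeg A (a i) = 1 := (hPb i (a i) (hsymm (hmiss i).1)).2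
    have hsub : ({b i} : Set V) ⊆ {w | IsMissing A (a i) w} := by
      intro y hy
      rw [Set.mem_singleton_iff] at hy; subst hy; exact (hmiss i).1
    have heq : ({b i} : Set V) = {w | IsMissing A (a i) w} :=
      Set.eq_of_subset_of_ncard_le hsub
        (by rw [Set.ncard_singleton]; unfold mdeg at h1; omega) (Set.toFinite _)
    have hx : x ∈ ({b i} : Set V) := by rw [heq]; exact h
    simpa using hx
  have missC : ∀ i x, IsMissing A (c i) x → x = b i := by
    intro i x h
    have h1 : mdeg A (c i) = 1 := (hPb i (c i) (hmiss i).2.1).2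
    have hsub : ({b i} : Set V) ⊆ {w | IsMissing A (c i) w} := by
      intro y hy
      rw [Set.mem_singleton_iff] at hy; subst hy; exact hsymm (hmiss i).2.1
    have heq : ({b i} : Set V) = {w | IsMissing A (c i) w} :=
      Set.eq_of_subset_of_ncard_le hsub
        (by rw [Set.ncard_singleton]; unfold mdeg at h1; omega) (Set.toFinite _)
    have hx : x ∈ ({b i} : Set V) := by rw [heq]; exact h
    simpa using hx
  -- distinctness across paths
  have cross : ∀ (i j : ZMod k) (x y : V), i ≠ j → (x = a i ∨ x = b i ∨ x = c i) →
      (y = a j ∨ y = b j ∨ y = c j) → x ≠ y := by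
    intro i j x y hij hx hy heq
    have hxi : x ∈ ({a i, b i, c i} : Set V) := by
      rcases hx with rfl | rfl | rfl <;> simp
    have hyj : x ∈ ({a j, b j, c j} : Set V) := by
      rcases hy with rfl | rfl | rfl
      · rw [heq]; simp
      · rw [heq]; simp
      · rw [heq]; simp
    exact Set.disjoint_left.mp (hdisj i j hij) hxi hyj
  -- adjacency
  have nomiss : ∀ (i j : ZMod k) (x y : V), i ≠ j → (x = a i ∨ x = b i ∨ x = c i) →
      (y = a j ∨ y = b j ∨ y = c j) → ¬ IsMissing A x y := by
    intro i j x y hij hx hy h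
    rcases hx with rfl | rfl | rfl
    · exact cross j i y (b i) (fun hh => hij hh.symm) hy (Or.inr (Or.inl rfl)) (missA i y h)
    · rcases missB i y h with h' | h'
      · exact cross j i y (a i) (fun hh => hij hh.symm) hy (Or.inl rfl) h'
      · exact cross j i y (c i) (fun hh => hij hh.symm) hy (Or.inr (Or.inr rfl)) h'
    · exact cross j i y (b i) (fun hh => hij hh.symm) hy (Or.inr (Or.inl rfl)) (missC i y h)
  have adj : ∀ (i j : ZMod k) (x y : V), i ≠ j → (x = a i ∨ x = b i ∨ x = c i) →
      (y = a j ∨ y = b j ∨ y = c j) → A x y ∨ A y x := by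
    intro i j x y hij hx hy
    by_contra hcon
    push_neg at hcon
    exact nomiss i j x y hij hx hy ⟨cross i j x y hij hx hy, hcon.1, hcon.2⟩
  have adjac : ∀ i, A (a i) (c i) ∨ A (c i) (a i) := by
    intro i
    by_contra hcon
    push_neg at hcon
    exact (hmiss i).2.1.1
      (missA i (c i) ⟨(hmiss i).2.2, hcon.1, hcon.2⟩).symm
  -- the pattern dichotomy
  have hone : ∀ i : ZMod k, i ≠ i + 1 := by
    haveI : Fact (1 < k) := ⟨hk⟩
    intro i h
    have h0 : (0 : ZMod k) = 1 := by
      have := congrArg (fun z => z - i) h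
      simpa using this
    exact one_ne_zero h0.symm
  have pat : ∀ i, PatI A a b c i ∨ PatII A a b c i := by
    intro i
    obtain ⟨L1, L2, L3, L4⟩ := hloses i
    have hadj_bb := adj i (i+1) (b i) (b (i+1)) (hone i)
      (Or.inr (Or.inl rfl)) (Or.inr (Or.inl rfl))
    have hcr : ∀ x y : V, (x = a i ∨ x = b i ∨ x = c i) →
        (y = a (i+1) ∨ y = b (i+1) ∨ y = c (i+1)) → y ≠ x :=
      fun x y hx hy => cross (i+1) i y x (fun h => hone i h.symm) hy hx
    rcases hadj_bb with hbb | hbb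
    · left
      have d1 : LosesOrd A (a i) (b i) (a (i+1)) (b (i+1)) :=
        L1.resolve_right (fun h => h.2.2.2.2.1 hbb)
      have d2 : LosesOrd A (a i) (b i) (c (i+1)) (b (i+1)) :=
        L2.resolve_left (fun h => h.2.2.2.2.1 hbb)
      have d3 : LosesOrd A (b i) (c i) (b (i+1)) (a (i+1)) :=
        L3.resolve_left (fun h => h.2.2.1 hbb)
      have d4 : LosesOrd A (b i) (c i) (b (i+1)) (c (i+1)) :=
        L4.resolve_right (fun h => h.2.2.1 hbb)
      obtain ⟨e1, e2, e3, e4, e5, e6⟩ := d1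
      obtain ⟨f1, f2, f3, f4, f5, f6⟩ := d2
      obtain ⟨g1, g2, g3, g4, g5, g6⟩ := d3
      obtain ⟨m1, m2, m3, m4, m5, m6⟩ := d4
      exact ⟨hbb, e1, f1, g2, m2,
        (adj i (i+1) (a i) (b (i+1)) (hone i) (Or.inl rfl)
          (Or.inr (Or.inl rfl))).resolve_left e3,
        (adj i (i+1) (c i) (b (i+1)) (hone i) (Or.inr (Or.inr rfl))
          (Or.inr (Or.inl rfl))).resolve_left g5,
        (adj i (i+1) (b i) (a (i+1)) (hone i) (Or.inr (Or.inl rfl))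
          (Or.inl rfl)).resolve_left e5,
        (adj i (i+1) (b i) (c (i+1)) (hone i) (Or.inr (Or.inl rfl))
          (Or.inr (Or.inr rfl))).resolve_left f5,
        noW_of_not_so e4 (hcr _ _ (Or.inl rfl) (Or.inr (Or.inl rfl))) e3,
        noW_of_not_so g6 (hcr _ _ (Or.inr (Or.inr rfl)) (Or.inr (Or.inl rfl))) g5,
        noW_of_not_so e6 (hcr _ _ (Or.inr (Or.inl rfl)) (Or.inl rfl)) e5,
        noW_of_not_so f6 (hcr _ _ (Or.inr (Or.inl rfl)) (Or.inr (Or.inr rfl))) f5⟩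
    · right
      have hnbb : ¬ A (b i) (b (i+1)) := fun h => hA _ _ h hbb
      have d1 : LosesOrd A (a i) (b i) (b (i+1)) (a (i+1)) :=
        L1.resolve_left (fun h => hnbb h.2.1)
      have d2 : LosesOrd A (a i) (b i) (b (i+1)) (c (i+1)) :=
        L2.resolve_right (fun h => hnbb h.2.1)
      have d3 : LosesOrd A (b i) (c i) (a (i+1)) (b (i+1)) :=
        L3.resolve_right (fun h => hnbb h.1)
      have d4 : LosesOrd A (b i) (c i) (c (i+1)) (b (i+1)) :=
        L4.resolve_left (fun h => hnbb h.1)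
      obtain ⟨e1, e2, e3, e4, e5, e6⟩ := d1
      obtain ⟨f1, f2, f3, f4, f5, f6⟩ := d2
      obtain ⟨g1, g2, g3, g4, g5, g6⟩ := d3
      obtain ⟨m1, m2, m3, m4, m5, m6⟩ := d4
      exact ⟨hbb, e1, g2, e2, f2,
        (adj i (i+1) (a i) (a (i+1)) (hone i) (Or.inl rfl)
          (Or.inl rfl)).resolve_left e3,
        (adj i (i+1) (c i) (a (i+1)) (hone i) (Or.inr (Or.inr rfl))
          (Or.inl rfl)).resolve_left g5,
        (adj i (i+1) (a i) (c (i+1)) (hone i) (Or.inl rfl)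
          (Or.inr (Or.inr rfl))).resolve_left f3,
        (adj i (i+1) (c i) (c (i+1)) (hone i) (Or.inr (Or.inr rfl))
          (Or.inr (Or.inr rfl))).resolve_left m5,
        noW_of_not_so e4 (hcr _ _ (Or.inl rfl) (Or.inl rfl)) e3,
        noW_of_not_so f4 (hcr _ _ (Or.inl rfl) (Or.inr (Or.inr rfl))) f3,
        noW_of_not_so g6 (hcr _ _ (Or.inr (Or.inr rfl)) (Or.inl rfl)) g5,
        noW_of_not_so m6 (hcr _ _ (Or.inr (Or.inr rfl)) (Or.inr (Or.inr rfl))) m5,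
        noW_of_not_so e6 (hcr _ _ (Or.inr (Or.inl rfl)) (Or.inr (Or.inl rfl))) e5⟩
  -- assemble the context and conclude
  have HH : Ctx A k a b c (Kset a b c) :=
    { hA := hA, hk := hk, memK := fun x => Iff.rfl,
      neab := fun i => (hmiss i).1.1, nebc := fun i => (hmiss i).2.1.1,
      neac := fun i => (hmiss i).2.2, cross := cross, adj := adj, adjac := adjac,
      nab := fun i => (hmiss i).1.2.1, nba := fun i => (hmiss i).1.2.2,
      nbc := fun i => (hmiss i).2.1.2.1, ncb := fun i => (hmiss i).2.1.2.2, pat := pat }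
  intro t
  refine ⟨fun h1 => ?_, fun h2 => ?_, HH.partB t⟩
  · exact HH.partA t (fun h => h1 ⟨(HH.memK _).2 ⟨t, Or.inr (Or.inr rfl)⟩, h⟩)
  · exact HH.swap.partA t (fun h => h2 ⟨(HH.memK _).2 ⟨t, Or.inl rfl⟩, h⟩)

end SSNC
end

section
/- Let D be a tournament missing disjoint paths of length 2 and let C = a_1b_1c_1, …, a_kb_kc_k be a double cycle in Δ(D). Then there exists s ∈ {1,…,k} such that, in the induced subdigraph D[K(C)], |N⁺(a_s)| ≤ |N⁺⁺(a_s)| or |N⁺(c_s)| ≤ |N⁺⁺(c_s)|. -/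
namespace SSNC

variable {V : Type*}

section Aux
set_option linter.unusedSectionVars false

variable {V : Type*} [Fintype V]

/-- Bundle of all hypotheses we use. -/
structure DC (A : V → V → Prop) (k : ℕ) (a b c : ZMod k → V) : Prop where
  hA : Oriented A
  hP : MissingPaths2 A
  hk : 2 ≤ k
  hab : ∀ i, IsMissing A (a i) (b i)
  hbc : ∀ i, IsMissing A (b i) (c i)
  hac : ∀ i, a i ≠ c i
  hdisj : ∀ i j, i ≠ j → Disjoint ({a i, b i, c i} : Set V) {a j, b j, c j}
  hL1 : ∀ i, Loses A (a i) (b i) (a (i+1)) (b (i+1))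
  hL2 : ∀ i, Loses A (a i) (b i) (b (i+1)) (c (i+1))
  hL3 : ∀ i, Loses A (b i) (c i) (a (i+1)) (b (i+1))
  hL4 : ∀ i, Loses A (b i) (c i) (b (i+1)) (c (i+1))

/-- Path `i` "dominates" path `j`. -/
def Dom (A : V → V → Prop) {k : ℕ} (a b c : ZMod k → V) (i j : ZMod k) : Prop :=
  A (a i) (a j) ∧ A (a i) (c j) ∧ A (c i) (a j) ∧ A (c i) (c j) ∧ A (b i) (b j) ∧
  A (a j) (b i) ∧ A (c j) (b i) ∧ A (b j) (a i) ∧ A (b j) (c i)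

/-- Facts accompanying a forward (type II) pattern between consecutive paths. -/
def F2 (A : V → V → Prop) {k : ℕ} (a b c : ZMod k → V) (i : ZMod k) : Prop :=
  ¬ SecondOut A (a i) (b (i+1)) ∧ ¬ SecondOut A (b i) (a (i+1)) ∧
  ¬ SecondOut A (b i) (c (i+1)) ∧ ¬ SecondOut A (c i) (b (i+1))

/-- Facts accompanying a backward (type I) pattern between consecutive paths. -/
def F1 (A : V → V → Prop) {k : ℕ} (a b c : ZMod k → V) (i : ZMod k) : Prop :=
  ¬ SecondOut A (a i) (a (i+1)) ∧ ¬ SecondOut A (a i) (c (i+1)) ∧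
  ¬ SecondOut A (c i) (a (i+1)) ∧ ¬ SecondOut A (c i) (c (i+1)) ∧
  ¬ SecondOut A (b i) (b (i+1))

variable {A : V → V → Prop} {k : ℕ} {a b c : ZMod k → V}

namespace DC

lemma vert_ne (S : DC A k a b c) {i j : ZMod k} (hij : i ≠ j) {u v : V}
    (hu : u = a i ∨ u = b i ∨ u = c i) (hv : v = a j ∨ v = b j ∨ v = c j) : u ≠ v := by
  intro h
  subst h
  have hu' : u ∈ ({a i, b i, c i} : Set V) := by rcases hu with h|h|h <;> simp [h]
  have hv' : u ∈ ({a j, b j, c j} : Set V) := by rcases hv with h|h|h <;> simp [h]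
  exact Set.disjoint_left.mp (S.hdisj i j hij) hu' hv'

lemma missing_symm {u v : V} (h : IsMissing A u v) : IsMissing A v u :=
  ⟨h.1.symm, h.2.2, h.2.1⟩

lemma mdeg_ge_two {u v w : V} (h1 : IsMissing A u v) (h2 : IsMissing A u w)
    (hvw : v ≠ w) : 2 ≤ mdeg A u := by
  have hsub : ({v, w} : Set V) ⊆ {x | IsMissing A u x} := by
    rintro x hx
    rcases hx with h|h
    · subst h; exact h1
    · rcases h with rfl; exact h2
  calc 2 = ({v, w} : Set V).ncard := (Set.ncard_pair hvw).symm
    _ ≤ _ := Set.ncard_le_ncard hsub (Set.toFinite _)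

lemma mdeg_ge_three {u v w x : V} (h1 : IsMissing A u v) (h2 : IsMissing A u w)
    (h3 : IsMissing A u x) (hvw : v ≠ w) (hvx : v ≠ x) (hwx : w ≠ x) : 3 ≤ mdeg A u := by
  have hsub : ({v, w, x} : Set V) ⊆ {y | IsMissing A u y} := by
    rintro y hy
    rcases hy with h|h|h
    · subst h; exact h1
    · rcases h with rfl; exact h2
    · rcases h with rfl; exact h3
  have hcard : ({v, w, x} : Set V).ncard = 3 := by
    rw [Set.ncard_insert_of_notMem (by simp [hvw, hvx]) (Set.toFinite _),
      Set.ncard_pair hwx]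
  calc 3 = ({v, w, x} : Set V).ncard := hcard.symm
    _ ≤ _ := Set.ncard_le_ncard hsub (Set.toFinite _)

lemma not_missing_cross (S : DC A k a b c) {i j : ZMod k} (hij : i ≠ j) {u v : V}
    (hu : u = a i ∨ u = b i ∨ u = c i) (hv : v = a j ∨ v = b j ∨ v = c j) :
    ¬ IsMissing A u v := by
  intro hm
  have hb2 : 2 ≤ mdeg A (b i) :=
    mdeg_ge_two (missing_symm (S.hab i)) (S.hbc i) (S.hac i)
  rcases hu with rfl|rfl|rfl
  · have h2 : 2 ≤ mdeg A (a i) :=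
      mdeg_ge_two (S.hab i) hm (S.vert_ne hij (Or.inr (Or.inl rfl)) hv)
    rcases S.hP _ _ (S.hab i) with ⟨h, _⟩ | ⟨_, h⟩ <;> omega
  · have h3 : 3 ≤ mdeg A (b i) :=
      mdeg_ge_three (missing_symm (S.hab i)) (S.hbc i) hm (S.hac i)
        (S.vert_ne hij (Or.inl rfl) hv) (S.vert_ne hij (Or.inr (Or.inr rfl)) hv)
    rcases S.hP _ _ hm with ⟨h, _⟩ | ⟨h, _⟩ <;> omega
  · have h2 : 2 ≤ mdeg A (c i) :=
      mdeg_ge_two (missing_symm (S.hbc i)) hm (S.vert_ne hij (Or.inr (Or.inl rfl)) hv)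
    rcases S.hP _ _ (S.hbc i) with ⟨h, h'⟩ | ⟨h, h'⟩ <;> omega

lemma not_missing_ac (S : DC A k a b c) (i : ZMod k) : ¬ IsMissing A (a i) (c i) := by
  intro hm
  have hb2 : 2 ≤ mdeg A (b i) :=
    mdeg_ge_two (missing_symm (S.hab i)) (S.hbc i) (S.hac i)
  have h2 : 2 ≤ mdeg A (a i) := mdeg_ge_two (S.hab i) hm (S.hbc i).1
  rcases S.hP _ _ (S.hab i) with ⟨h, _⟩ | ⟨_, h⟩ <;> omega

lemma adj_cross (S : DC A k a b c) {i j : ZMod k} (hij : i ≠ j) {u v : V}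
    (hu : u = a i ∨ u = b i ∨ u = c i) (hv : v = a j ∨ v = b j ∨ v = c j) :
    A u v ∨ A v u := by
  by_contra h
  push_neg at h
  exact S.not_missing_cross hij hu hv ⟨S.vert_ne hij hu hv, h.1, h.2⟩

/-- resolve an adjacency: from `¬ A v u` conclude `A u v` (different paths). -/
lemma arc_of_not (S : DC A k a b c) {i j : ZMod k} (hij : i ≠ j) {u v : V}
    (hu : u = a i ∨ u = b i ∨ u = c i) (hv : v = a j ∨ v = b j ∨ v = c j)
    (h : ¬ A v u) : A u v :=
  (S.adj_cross hij hu hv).resolve_right h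

lemma adj_ac (S : DC A k a b c) (i : ZMod k) : A (a i) (c i) ∨ A (c i) (a i) := by
  by_contra h
  push_neg at h
  exact S.not_missing_ac i ⟨S.hac i, h.1, h.2⟩

lemma one_ne_zero' (S : DC A k a b c) : (1 : ZMod k) ≠ 0 := by
  have : Fact (1 < k) := ⟨S.hk⟩
  exact one_ne_zero

lemma succ_ne (S : DC A k a b c) (i : ZMod k) : i + 1 ≠ i := by
  intro h
  apply S.one_ne_zero'
  calc (1 : ZMod k) = (i + 1) - i := by ring
    _ = i - i := by rw [h]
    _ = 0 := by ring

lemma pat (S : DC A k a b c) (i : ZMod k) :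
    (Dom A a b c i (i+1) ∧ F2 A a b c i) ∨ (Dom A a b c (i+1) i ∧ F1 A a b c i) := by
  have hii : (i+1 : ZMod k) ≠ i := S.succ_ne i
  obtain O|O := S.hL1 i
  · obtain ⟨haa, hbb, hnab, hnSab, hnba, hnSba⟩ := O
    obtain P|P := S.hL2 i
    · exact absurd P.1 hnab
    obtain ⟨hac', _, _, hnSab2, hnbc, hnSbc⟩ := P
    obtain Q|Q := S.hL3 i
    · exact absurd Q.1 hnba
    obtain ⟨_, hca, _, hnSba3, hncb, hnScb⟩ := Q
    obtain T|T := S.hL4 i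
    swap
    · exact absurd T.1 hnbc
    obtain ⟨_, hcc, _, _, _, _⟩ := T
    left
    refine ⟨⟨haa, hac', hca, hcc, hbb, ?_, ?_, ?_, ?_⟩, hnSab, hnSba, hnSbc, hnScb⟩
    · exact S.arc_of_not hii (Or.inl rfl) (Or.inr (Or.inl rfl)) hnba
    · exact S.arc_of_not hii (Or.inr (Or.inr rfl)) (Or.inr (Or.inl rfl)) hnbc
    · exact S.arc_of_not hii (Or.inr (Or.inl rfl)) (Or.inl rfl) hnab
    · exact S.arc_of_not hii (Or.inr (Or.inl rfl)) (Or.inr (Or.inr rfl)) hncb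
  · obtain ⟨hab', hba, hnaa, hnSaa, hnbb, hnSbb⟩ := O
    obtain P|P := S.hL2 i
    swap
    · exact absurd P.2.1 hnbb
    obtain ⟨_, hbc, hnac, hnSac, _, _⟩ := P
    obtain Q|Q := S.hL3 i
    swap
    · exact absurd Q.1 hnbb
    obtain ⟨_, hcb, _, _, hnca, hnSca⟩ := Q
    obtain T|T := S.hL4 i
    · exact absurd T.1 hnbb
    obtain ⟨_, _, _, _, hncc, hnScc⟩ := T
    right
    refine ⟨⟨?_, ?_, ?_, ?_, ?_, hab', hcb, hba, hbc⟩, hnSaa, hnSac, hnSca, hnScc, hnSbb⟩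
    · exact S.arc_of_not hii (Or.inl rfl) (Or.inl rfl) hnaa
    · exact S.arc_of_not hii (Or.inl rfl) (Or.inr (Or.inr rfl)) hnca
    · exact S.arc_of_not hii (Or.inr (Or.inr rfl)) (Or.inl rfl) hnac
    · exact S.arc_of_not hii (Or.inr (Or.inr rfl)) (Or.inr (Or.inr rfl)) hncc
    · exact S.arc_of_not hii (Or.inr (Or.inl rfl)) (Or.inr (Or.inl rfl)) hnbb


/-- From `¬ SecondOut v z`: no out-neighbour of `v` can beat `z`. -/
lemma no_hit (hso : ¬ SecondOut A v z) (hne : z ≠ v) (hnA : ¬ A v z)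
    {w : V} (hw : A v w) : ¬ A w z :=
  fun h => hso ⟨hne, hnA, w, hw, h⟩

/-- From `¬ SecondOut v z`: `v` cannot beat any in-neighbour of `z`. -/
lemma not_arc_to (hso : ¬ SecondOut A v z) (hne : z ≠ v) (hnA : ¬ A v z)
    {u : V} (hu : A u z) : ¬ A v u :=
  fun h => hso ⟨hne, hnA, u, h, hu⟩

/-- Key lemma: no vertex of `K` beats `b j` together with one of `a j`, `c j`. -/
lemma lemD (S : DC A k a b c) (u : V) (hu : ∃ p, u = a p ∨ u = b p ∨ u = c p)
    (j : ZMod k) (h1 : A u (b j)) (h2 : A u (a j) ∨ A u (c j)) : False := by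
  haveI : NeZero k := ⟨by have := S.hk; omega⟩
  obtain ⟨p, hp⟩ := hu
  have key : ∀ m : ℕ, A u (b (j - m)) ∧ (A u (a (j - m)) ∨ A u (c (j - m))) := by
    intro m
    induction m with
    | zero => simpa using ⟨h1, h2⟩
    | succ m ih =>
      obtain ⟨hub, huac⟩ := ih
      have hstep : (j - (m : ℕ) : ZMod k) = (j - ((m + 1 : ℕ) : ZMod k)) + 1 := by
        push_cast; ring
      set t' : ZMod k := j - ((m + 1 : ℕ) : ZMod k) with ht'
      rw [hstep] at hub huac
      have hne : (t' + 1 : ZMod k) ≠ t' := S.succ_ne t'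
      rcases S.pat t' with ⟨⟨d1, d2, d3, d4, d5, d6, d7, d8, d9⟩, f1, f2, f3, f4⟩ |
        ⟨⟨e1, e2, e3, e4, e5, e6, e7, e8, e9⟩, g1, g2, g3, g4, g5⟩
      · by_cases hpt : p = t'
        · subst hpt
          rcases hp with rfl | rfl | rfl
          · exact absurd hub (S.hA _ _ d8)
          · rcases huac with h | h
            · exact absurd h (S.hA _ _ d6)
            · exact absurd h (S.hA _ _ d7)
          · exact absurd hub (S.hA _ _ d9)
        · have nea : (b (t' + 1)) ≠ (a t') :=
            S.vert_ne hne (Or.inr (Or.inl rfl)) (Or.inl rfl)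
          have nec : (b (t' + 1)) ≠ (c t') :=
            S.vert_ne hne (Or.inr (Or.inl rfl)) (Or.inr (Or.inr rfl))
          have arc1 : A u (a t') :=
            S.arc_of_not hpt hp (Or.inl rfl) (not_arc_to f1 nea (S.hA _ _ d8) hub)
          have arc3 : A u (c t') :=
            S.arc_of_not hpt hp (Or.inr (Or.inr rfl)) (not_arc_to f4 nec (S.hA _ _ d9) hub)
          have arc2 : A u (b t') := by
            refine S.arc_of_not hpt hp (Or.inr (Or.inl rfl)) ?_
            rcases huac with h | h
            · exact not_arc_to f2 (S.vert_ne hne (Or.inl rfl) (Or.inr (Or.inl rfl)))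
                (S.hA _ _ d6) h
            · exact not_arc_to f3 (S.vert_ne hne (Or.inr (Or.inr rfl)) (Or.inr (Or.inl rfl)))
                (S.hA _ _ d7) h
          exact ⟨arc2, Or.inl arc1⟩
      · by_cases hpt : p = t'
        · subst hpt
          rcases hp with rfl | rfl | rfl
          · rcases huac with h | h
            · exact absurd h (S.hA _ _ e1)
            · exact absurd h (S.hA _ _ e3)
          · exact absurd hub (S.hA _ _ e5)
          · rcases huac with h | h
            · exact absurd h (S.hA _ _ e2)
            · exact absurd h (S.hA _ _ e4)
        · have arc1 : A u (a t') := by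
            refine S.arc_of_not hpt hp (Or.inl rfl) ?_
            rcases huac with h | h
            · exact not_arc_to g1 (S.vert_ne hne (Or.inl rfl) (Or.inl rfl))
                (S.hA _ _ e1) h
            · exact not_arc_to g2 (S.vert_ne hne (Or.inr (Or.inr rfl)) (Or.inl rfl))
                (S.hA _ _ e3) h
          have arc3 : A u (c t') := by
            refine S.arc_of_not hpt hp (Or.inr (Or.inr rfl)) ?_
            rcases huac with h | h
            · exact not_arc_to g3 (S.vert_ne hne (Or.inl rfl) (Or.inr (Or.inr rfl)))
                (S.hA _ _ e2) h
            · exact not_arc_to g4 (S.vert_ne hne (Or.inr (Or.inr rfl)) (Or.inr (Or.inr rfl)))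
                (S.hA _ _ e4) h
          have arc2 : A u (b t') :=
            S.arc_of_not hpt hp (Or.inr (Or.inl rfl))
              (not_arc_to g5 (S.vert_ne hne (Or.inr (Or.inl rfl)) (Or.inr (Or.inl rfl)))
                (S.hA _ _ e5) hub)
          exact ⟨arc2, Or.inl arc1⟩
  have hvc : (((j - p).val : ℕ) : ZMod k) = j - p := ZMod.natCast_rightInverse (j - p)
  have hkey := key (j - p).val
  have hidx : j - (((j - p).val : ℕ) : ZMod k) = p := by rw [hvc]; ring
  rw [hidx] at hkey
  rcases hp with rfl | rfl | rfl
  · exact (S.hab p).2.1 hkey.1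
  · exact S.hA _ _ hkey.1 hkey.1
  · exact (S.hbc p).2.2 hkey.1


/-- Between any two distinct paths, one dominates the other. -/
lemma domTotal (S : DC A k a b c) :
    ∀ i j : ZMod k, i ≠ j → Dom A a b c i j ∨ Dom A a b c j i := by
  haveI : NeZero k := ⟨by have := S.hk; omega⟩
  have aux : ∀ m : ℕ, ∀ i j : ZMod k, j = i + ((m + 1 : ℕ) : ZMod k) → i ≠ j →
      Dom A a b c i j ∨ Dom A a b c j i := by
    intro m
    induction m with
    | zero =>
      intro i j hj hij
      have hj1 : j = i + 1 := by rw [hj]; norm_num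
      subst hj1
      rcases S.pat i with ⟨h, -⟩ | ⟨h, -⟩
      · exact Or.inl h
      · exact Or.inr h
    | succ m ih =>
      intro i j hj hij
      obtain ⟨j', hj'def⟩ : ∃ j' : ZMod k, j' = i + ((m + 1 : ℕ) : ZMod k) := ⟨_, rfl⟩
      have hjj' : j = j' + 1 := by rw [hj, hj'def]; push_cast; ring
      by_cases hij' : i = j'
      · have hj1 : j = i + 1 := by rw [hjj', ← hij']
        subst hj1
        rcases S.pat i with ⟨h, -⟩ | ⟨h, -⟩
        · exact Or.inl h
        · exact Or.inr h
      · subst hjj'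
        have hIH := ih i j' hj'def hij'
        have hne1 : (j' + 1 : ZMod k) ≠ j' := S.succ_ne j'
        have hji2 : (j' + 1 : ZMod k) ≠ i := Ne.symm hij
        rcases S.pat j' with ⟨⟨q1, q2, q3, q4, q5, q6, q7, q8, q9⟩, f1, f2, f3, f4⟩ |
          ⟨⟨t1, t2, t3, t4, t5, t6, t7, t8, t9⟩, g1, g2, g3, g4, g5⟩
        · rcases hIH with ⟨p1, p2, p3, p4, p5, p6, p7, p8, p9⟩ |
            ⟨s1, s2, s3, s4, s5, s6, s7, s8, s9⟩
          · -- Dom i j', Dom j' (j'+1) : conclude Dom (j'+1) i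
            right
            have r5 : A (b (j' + 1)) (b i) :=
              S.arc_of_not hji2 (Or.inr (Or.inl rfl)) (Or.inr (Or.inl rfl))
                (no_hit f1 (S.vert_ne hne1 (Or.inr (Or.inl rfl)) (Or.inl rfl))
                  (S.hA _ _ q8) p6)
            have r1 : A (a (j' + 1)) (a i) :=
              S.arc_of_not hji2 (Or.inl rfl) (Or.inl rfl)
                (no_hit f2 (S.vert_ne hne1 (Or.inl rfl) (Or.inr (Or.inl rfl)))
                  (S.hA _ _ q6) p8)
            have r2 : A (a (j' + 1)) (c i) :=
              S.arc_of_not hji2 (Or.inl rfl) (Or.inr (Or.inr rfl))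
                (no_hit f2 (S.vert_ne hne1 (Or.inl rfl) (Or.inr (Or.inl rfl)))
                  (S.hA _ _ q6) p9)
            have r3 : A (c (j' + 1)) (a i) :=
              S.arc_of_not hji2 (Or.inr (Or.inr rfl)) (Or.inl rfl)
                (no_hit f3 (S.vert_ne hne1 (Or.inr (Or.inr rfl)) (Or.inr (Or.inl rfl)))
                  (S.hA _ _ q7) p8)
            have r4 : A (c (j' + 1)) (c i) :=
              S.arc_of_not hji2 (Or.inr (Or.inr rfl)) (Or.inr (Or.inr rfl))
                (no_hit f3 (S.vert_ne hne1 (Or.inr (Or.inr rfl)) (Or.inr (Or.inl rfl)))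
                  (S.hA _ _ q7) p9)
            have r6 : A (a i) (b (j' + 1)) :=
              S.arc_of_not hij (Or.inl rfl) (Or.inr (Or.inl rfl))
                (fun h => S.lemD _ ⟨j' + 1, Or.inr (Or.inl rfl)⟩ i r5 (Or.inl h))
            have r7 : A (c i) (b (j' + 1)) :=
              S.arc_of_not hij (Or.inr (Or.inr rfl)) (Or.inr (Or.inl rfl))
                (fun h => S.lemD _ ⟨j' + 1, Or.inr (Or.inl rfl)⟩ i r5 (Or.inr h))
            have r8 : A (b i) (a (j' + 1)) :=
              S.arc_of_not hij (Or.inr (Or.inl rfl)) (Or.inl rfl)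
                (fun h => S.lemD _ ⟨j' + 1, Or.inl rfl⟩ i h (Or.inl r1))
            have r9 : A (b i) (c (j' + 1)) :=
              S.arc_of_not hij (Or.inr (Or.inl rfl)) (Or.inr (Or.inr rfl))
                (fun h => S.lemD _ ⟨j' + 1, Or.inr (Or.inr rfl)⟩ i h (Or.inl r3))
            exact ⟨r1, r2, r3, r4, r5, r6, r7, r8, r9⟩
          · -- Dom j' i, Dom j' (j'+1) : conclude Dom i (j'+1)
            left
            have r8 : A (b (j' + 1)) (a i) :=
              S.arc_of_not hji2 (Or.inr (Or.inl rfl)) (Or.inl rfl)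
                (no_hit f1 (S.vert_ne hne1 (Or.inr (Or.inl rfl)) (Or.inl rfl))
                  (S.hA _ _ q8) s1)
            have r9 : A (b (j' + 1)) (c i) :=
              S.arc_of_not hji2 (Or.inr (Or.inl rfl)) (Or.inr (Or.inr rfl))
                (no_hit f1 (S.vert_ne hne1 (Or.inr (Or.inl rfl)) (Or.inl rfl))
                  (S.hA _ _ q8) s2)
            have r6 : A (a (j' + 1)) (b i) :=
              S.arc_of_not hji2 (Or.inl rfl) (Or.inr (Or.inl rfl))
                (no_hit f2 (S.vert_ne hne1 (Or.inl rfl) (Or.inr (Or.inl rfl)))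
                  (S.hA _ _ q6) s5)
            have r7 : A (c (j' + 1)) (b i) :=
              S.arc_of_not hji2 (Or.inr (Or.inr rfl)) (Or.inr (Or.inl rfl))
                (no_hit f3 (S.vert_ne hne1 (Or.inr (Or.inr rfl)) (Or.inr (Or.inl rfl)))
                  (S.hA _ _ q7) s5)
            have r1 : A (a i) (a (j' + 1)) :=
              S.arc_of_not hij (Or.inl rfl) (Or.inl rfl)
                (fun h => S.lemD _ ⟨j' + 1, Or.inl rfl⟩ i r6 (Or.inl h))
            have r2 : A (a i) (c (j' + 1)) :=
              S.arc_of_not hij (Or.inl rfl) (Or.inr (Or.inr rfl))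
                (fun h => S.lemD _ ⟨j' + 1, Or.inr (Or.inr rfl)⟩ i r7 (Or.inl h))
            have r3 : A (c i) (a (j' + 1)) :=
              S.arc_of_not hij (Or.inr (Or.inr rfl)) (Or.inl rfl)
                (fun h => S.lemD _ ⟨j' + 1, Or.inl rfl⟩ i r6 (Or.inr h))
            have r4 : A (c i) (c (j' + 1)) :=
              S.arc_of_not hij (Or.inr (Or.inr rfl)) (Or.inr (Or.inr rfl))
                (fun h => S.lemD _ ⟨j' + 1, Or.inr (Or.inr rfl)⟩ i r7 (Or.inr h))
            have r5 : A (b i) (b (j' + 1)) :=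
              S.arc_of_not hij (Or.inr (Or.inl rfl)) (Or.inr (Or.inl rfl))
                (fun h => S.lemD _ ⟨j' + 1, Or.inr (Or.inl rfl)⟩ i h (Or.inl r8))
            exact ⟨r1, r2, r3, r4, r5, r6, r7, r8, r9⟩
        · rcases hIH with ⟨p1, p2, p3, p4, p5, p6, p7, p8, p9⟩ |
            ⟨s1, s2, s3, s4, s5, s6, s7, s8, s9⟩
          · -- Dom i j', Dom (j'+1) j' : conclude Dom i (j'+1)
            left
            have r6 : A (a (j' + 1)) (b i) :=
              S.arc_of_not hji2 (Or.inl rfl) (Or.inr (Or.inl rfl))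
                (no_hit g1 (S.vert_ne hne1 (Or.inl rfl) (Or.inl rfl))
                  (S.hA _ _ t1) p6)
            have r7 : A (c (j' + 1)) (b i) :=
              S.arc_of_not hji2 (Or.inr (Or.inr rfl)) (Or.inr (Or.inl rfl))
                (no_hit g2 (S.vert_ne hne1 (Or.inr (Or.inr rfl)) (Or.inl rfl))
                  (S.hA _ _ t3) p6)
            have r8 : A (b (j' + 1)) (a i) :=
              S.arc_of_not hji2 (Or.inr (Or.inl rfl)) (Or.inl rfl)
                (no_hit g5 (S.vert_ne hne1 (Or.inr (Or.inl rfl)) (Or.inr (Or.inl rfl)))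
                  (S.hA _ _ t5) p8)
            have r9 : A (b (j' + 1)) (c i) :=
              S.arc_of_not hji2 (Or.inr (Or.inl rfl)) (Or.inr (Or.inr rfl))
                (no_hit g5 (S.vert_ne hne1 (Or.inr (Or.inl rfl)) (Or.inr (Or.inl rfl)))
                  (S.hA _ _ t5) p9)
            have r1 : A (a i) (a (j' + 1)) :=
              S.arc_of_not hij (Or.inl rfl) (Or.inl rfl)
                (fun h => S.lemD _ ⟨j' + 1, Or.inl rfl⟩ i r6 (Or.inl h))
            have r2 : A (a i) (c (j' + 1)) :=
              S.arc_of_not hij (Or.inl rfl) (Or.inr (Or.inr rfl))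
                (fun h => S.lemD _ ⟨j' + 1, Or.inr (Or.inr rfl)⟩ i r7 (Or.inl h))
            have r3 : A (c i) (a (j' + 1)) :=
              S.arc_of_not hij (Or.inr (Or.inr rfl)) (Or.inl rfl)
                (fun h => S.lemD _ ⟨j' + 1, Or.inl rfl⟩ i r6 (Or.inr h))
            have r4 : A (c i) (c (j' + 1)) :=
              S.arc_of_not hij (Or.inr (Or.inr rfl)) (Or.inr (Or.inr rfl))
                (fun h => S.lemD _ ⟨j' + 1, Or.inr (Or.inr rfl)⟩ i r7 (Or.inr h))
            have r5 : A (b i) (b (j' + 1)) :=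
              S.arc_of_not hij (Or.inr (Or.inl rfl)) (Or.inr (Or.inl rfl))
                (fun h => S.lemD _ ⟨j' + 1, Or.inr (Or.inl rfl)⟩ i h (Or.inl r8))
            exact ⟨r1, r2, r3, r4, r5, r6, r7, r8, r9⟩
          · -- Dom j' i, Dom (j'+1) j' : conclude Dom (j'+1) i
            right
            have r1 : A (a (j' + 1)) (a i) :=
              S.arc_of_not hji2 (Or.inl rfl) (Or.inl rfl)
                (no_hit g1 (S.vert_ne hne1 (Or.inl rfl) (Or.inl rfl))
                  (S.hA _ _ t1) s1)
            have r3 : A (c (j' + 1)) (a i) :=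
              S.arc_of_not hji2 (Or.inr (Or.inr rfl)) (Or.inl rfl)
                (no_hit g2 (S.vert_ne hne1 (Or.inr (Or.inr rfl)) (Or.inl rfl))
                  (S.hA _ _ t3) s1)
            have r2 : A (a (j' + 1)) (c i) :=
              S.arc_of_not hji2 (Or.inl rfl) (Or.inr (Or.inr rfl))
                (no_hit g3 (S.vert_ne hne1 (Or.inl rfl) (Or.inr (Or.inr rfl)))
                  (S.hA _ _ t2) s4)
            have r4 : A (c (j' + 1)) (c i) :=
              S.arc_of_not hji2 (Or.inr (Or.inr rfl)) (Or.inr (Or.inr rfl))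
                (no_hit g4 (S.vert_ne hne1 (Or.inr (Or.inr rfl)) (Or.inr (Or.inr rfl)))
                  (S.hA _ _ t4) s4)
            have r5 : A (b (j' + 1)) (b i) :=
              S.arc_of_not hji2 (Or.inr (Or.inl rfl)) (Or.inr (Or.inl rfl))
                (no_hit g5 (S.vert_ne hne1 (Or.inr (Or.inl rfl)) (Or.inr (Or.inl rfl)))
                  (S.hA _ _ t5) s5)
            have r6 : A (a i) (b (j' + 1)) :=
              S.arc_of_not hij (Or.inl rfl) (Or.inr (Or.inl rfl))
                (fun h => S.lemD _ ⟨j' + 1, Or.inr (Or.inl rfl)⟩ i r5 (Or.inl h))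
            have r7 : A (c i) (b (j' + 1)) :=
              S.arc_of_not hij (Or.inr (Or.inr rfl)) (Or.inr (Or.inl rfl))
                (fun h => S.lemD _ ⟨j' + 1, Or.inr (Or.inl rfl)⟩ i r5 (Or.inr h))
            have r8 : A (b i) (a (j' + 1)) :=
              S.arc_of_not hij (Or.inr (Or.inl rfl)) (Or.inl rfl)
                (fun h => S.lemD _ ⟨j' + 1, Or.inl rfl⟩ i h (Or.inl r1))
            have r9 : A (b i) (c (j' + 1)) :=
              S.arc_of_not hij (Or.inr (Or.inl rfl)) (Or.inr (Or.inr rfl))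
                (fun h => S.lemD _ ⟨j' + 1, Or.inr (Or.inr rfl)⟩ i h (Or.inl r3))
            exact ⟨r1, r2, r3, r4, r5, r6, r7, r8, r9⟩
  intro i j hij
  have hvne : (j - i : ZMod k) ≠ 0 := sub_ne_zero.mpr (Ne.symm hij)
  have hval : (j - i).val ≠ 0 := fun h => hvne (by
    have := ZMod.natCast_rightInverse (j - i)
    rw [h] at this
    simpa using this.symm)
  have hm : ((j - i).val - 1) + 1 = (j - i).val := Nat.succ_pred_eq_of_pos (Nat.pos_of_ne_zero hval)
  refine aux ((j - i).val - 1) i j ?_ hij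
  rw [hm, ZMod.natCast_rightInverse (j - i)]
  ring


lemma dom_aa {i j : ZMod k} (h : Dom A a b c i j) : A (a i) (a j) := h.1
lemma dom_acj {i j : ZMod k} (h : Dom A a b c i j) : A (a i) (c j) := h.2.1
lemma dom_ca {i j : ZMod k} (h : Dom A a b c i j) : A (c i) (a j) := h.2.2.1
lemma dom_cc {i j : ZMod k} (h : Dom A a b c i j) : A (c i) (c j) := h.2.2.2.1
lemma dom_bb {i j : ZMod k} (h : Dom A a b c i j) : A (b i) (b j) := h.2.2.2.2.1
lemma dom_ab {i j : ZMod k} (h : Dom A a b c i j) : A (a j) (b i) := h.2.2.2.2.2.1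
lemma dom_cb {i j : ZMod k} (h : Dom A a b c i j) : A (c j) (b i) := h.2.2.2.2.2.2.1
lemma dom_ba {i j : ZMod k} (h : Dom A a b c i j) : A (b j) (a i) := h.2.2.2.2.2.2.2.1
lemma dom_bc {i j : ZMod k} (h : Dom A a b c i j) : A (b j) (c i) := h.2.2.2.2.2.2.2.2

end DC

open Classical in
/-- Out-degree of a path in the path-domination tournament. -/
noncomputable def dR (A : V → V → Prop) {k : ℕ} [NeZero k] (a b c : ZMod k → V)
    (i : ZMod k) : ℕ :=
  (Finset.univ.filter (fun j => j ≠ i ∧ Dom A a b c i j)).card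

namespace DC

lemma dom_irrefl (S : DC A k a b c) (i : ZMod k) : ¬ Dom A a b c i i :=
  fun h => S.hA _ _ h.1 h.1

lemma dom_asymm (S : DC A k a b c) {i j : ZMod k} (h : Dom A a b c i j) :
    ¬ Dom A a b c j i := fun h' => S.hA _ _ h.1 h'.1

lemma sum_dR (S : DC A k a b c) [NeZero k] :
    2 * ∑ i : ZMod k, dR A a b c (i : ZMod k) + k = k * k := by
  classical
  set R := fun i j => Dom A a b c i j with hR
  set T : Finset (ZMod k × ZMod k) :=
    Finset.univ.filter (fun p => p.1 ≠ p.2 ∧ R p.1 p.2) with hT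
  set T' : Finset (ZMod k × ZMod k) :=
    Finset.univ.filter (fun p => p.1 ≠ p.2 ∧ R p.2 p.1) with hT'
  have hTcard : T.card = ∑ i : ZMod k, dR A a b c i := by
    rw [Finset.card_eq_sum_card_fiberwise
      (f := Prod.fst) (t := Finset.univ) (fun x _ => Finset.mem_univ _)]
    refine Finset.sum_congr rfl (fun i _ => ?_)
    unfold dR
    refine Finset.card_bij (fun p _ => p.2) ?_ ?_ ?_
    · intro p hp
      simp only [hT, Finset.mem_filter, Finset.mem_univ, true_and] at hp
      obtain ⟨⟨hne, hr⟩, h1⟩ := hp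
      subst h1
      simp only [Finset.mem_filter, Finset.mem_univ, true_and]
      exact ⟨hne.symm, hr⟩
    · intro p hp q hq h
      simp only [hT, Finset.mem_filter, Finset.mem_univ, true_and] at hp hq
      exact Prod.ext (hp.2.trans hq.2.symm) h
    · intro j hj
      simp only [Finset.mem_filter, Finset.mem_univ, true_and] at hj
      refine ⟨(i, j), Finset.mem_filter.mpr ⟨?_, rfl⟩, rfl⟩
      simp only [hT, Finset.mem_filter, Finset.mem_univ, true_and]
      exact ⟨Ne.symm hj.1, hj.2⟩
  have hswap : T'.card = T.card := by
    refine Finset.card_bij (fun p _ => p.swap) ?_ ?_ ?_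
    · intro p hp
      simp only [hT, hT', Finset.mem_filter, Finset.mem_univ, true_and] at hp ⊢
      exact ⟨hp.1.symm, hp.2⟩
    · intro p hp q hq h
      exact Prod.swap_injective h
    · intro q hq
      simp only [hT, hT', Finset.mem_filter, Finset.mem_univ, true_and] at hq
      refine ⟨q.swap, ?_, (Prod.swap_swap q).symm⟩
      simp only [hT', Finset.mem_filter, Finset.mem_univ, true_and]
      exact ⟨hq.1.symm, hq.2⟩
  have hdisj : Disjoint T T' := by
    rw [Finset.disjoint_left]
    intro p hp hp'
    simp only [hT, hT', Finset.mem_filter, Finset.mem_univ, true_and] at hp hp'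
    exact S.dom_asymm hp.2 hp'.2
  have hunion : T ∪ T' = Finset.univ.offDiag := by
    ext p
    simp only [hT, hT', Finset.mem_union, Finset.mem_filter, Finset.mem_univ, true_and,
      Finset.mem_offDiag]
    constructor
    · rintro (⟨h, -⟩ | ⟨h, -⟩) <;> exact h
    · intro h
      rcases S.domTotal p.1 p.2 h with h' | h'
      · exact Or.inl ⟨h, h'⟩
      · exact Or.inr ⟨h, h'⟩
  have hcard : T.card + T'.card = k * k - k := by
    rw [← Finset.card_union_of_disjoint hdisj, hunion, Finset.offDiag_card,
      Finset.card_univ, ZMod.card]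
  rw [hswap, hTcard] at hcard
  have hle : k ≤ k * k := Nat.le_mul_of_pos_left k (by have := S.hk; omega)
  calc 2 * ∑ i : ZMod k, dR A a b c i + k
      = (∑ i : ZMod k, dR A a b c i + ∑ i : ZMod k, dR A a b c i) + k := by ring
    _ = (k * k - k) + k := by rw [hcard]
    _ = k * k := Nat.sub_add_cancel hle

lemma kd_le_sum (S : DC A k a b c) [NeZero k] (s : ZMod k)
    (hmin : ∀ j, dR A a b c s ≤ dR A a b c j) :
    k * dR A a b c s ≤ ∑ i : ZMod k, dR A a b c i := by
  have h := Finset.card_nsmul_le_sum Finset.univ (dR A a b c) (dR A a b c s)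
    (fun j _ => hmin j)
  rwa [Finset.card_univ, ZMod.card, smul_eq_mul] at h

lemma two_d_le (S : DC A k a b c) [NeZero k] (s : ZMod k)
    (hmin : ∀ j, dR A a b c s ≤ dR A a b c j) :
    2 * dR A a b c s + 1 ≤ k := by
  have hsum := S.sum_dR
  have h1 := S.kd_le_sum s hmin
  have h2 : k * (2 * dR A a b c s + 1) ≤ k * k := by
    calc k * (2 * dR A a b c s + 1) = 2 * (k * dR A a b c s) + k := by ring
      _ ≤ 2 * (∑ i : ZMod k, dR A a b c i) + k :=
          Nat.add_le_add_right (Nat.mul_le_mul_left 2 h1) k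
      _ = k * k := hsum
  exact Nat.le_of_mul_le_mul_left h2 (by have := S.hk; omega)

lemma two_d_le_strict (S : DC A k a b c) [NeZero k] (s j : ZMod k)
    (hmin : ∀ j, dR A a b c s ≤ dR A a b c j)
    (hj : dR A a b c s < dR A a b c j) :
    2 * dR A a b c s + 2 ≤ k := by
  have hsum := S.sum_dR
  have h1 : k * dR A a b c s + 1 ≤ ∑ i : ZMod k, dR A a b c i := by
    have h := Finset.sum_lt_sum (f := fun _ : ZMod k => dR A a b c s)
      (g := dR A a b c) (s := Finset.univ)
      (fun j _ => hmin j) ⟨j, Finset.mem_univ j, hj⟩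
    rw [Finset.sum_const, Finset.card_univ, ZMod.card, smul_eq_mul] at h
    omega
  have h5 : k * (2 * dR A a b c s + 1) + 2 ≤ k * k := by
    have h4 : 2 * (k * dR A a b c s) + 2 ≤ 2 * ∑ i : ZMod k, dR A a b c i := by
      calc 2 * (k * dR A a b c s) + 2 = 2 * (k * dR A a b c s + 1) := by ring
        _ ≤ _ := Nat.mul_le_mul_left 2 h1
    calc k * (2 * dR A a b c s + 1) + 2 = (2 * (k * dR A a b c s) + 2) + k := by ring
      _ ≤ 2 * (∑ i : ZMod k, dR A a b c i) + k := Nat.add_le_add_right h4 k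
      _ = k * k := hsum
  have h3 : k * (2 * dR A a b c s + 1) < k * k :=
    lt_of_lt_of_le (Nat.lt_add_of_pos_right (by norm_num)) h5
  have := Nat.lt_of_mul_lt_mul_left h3
  omega


set_option maxHeartbeats 1000000 in
lemma snp_min [NeZero k] (S : DC A k a b c) (s : ZMod k) (x y : V)
    (hx : (x = a s ∧ y = c s) ∨ (x = c s ∧ y = a s)) (hyx : A y x)
    (hmin : ∀ j, dR A a b c s ≤ dR A a b c j) :
    (outIn A (Kset a b c) x).ncard ≤ (secondOutIn A (Kset a b c) x).ncard := by
  classical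
  have hdt := S.domTotal
  -- interface facts about x
  have hxmem : x = a s ∨ x = b s ∨ x = c s := by
    rcases hx with ⟨rfl, -⟩ | ⟨rfl, -⟩
    · exact Or.inl rfl
    · exact Or.inr (Or.inr rfl)
  have hxa : ∀ j, Dom A a b c s j → A x (a j) := by
    rcases hx with ⟨rfl, -⟩ | ⟨rfl, -⟩
    · exact fun j h => dom_aa h
    · exact fun j h => dom_ca h
  have hxc : ∀ j, Dom A a b c s j → A x (c j) := by
    rcases hx with ⟨rfl, -⟩ | ⟨rfl, -⟩
    · exact fun j h => dom_acj h
    · exact fun j h => dom_cc h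
  have hax : ∀ j, Dom A a b c j s → A (a j) x := by
    rcases hx with ⟨rfl, -⟩ | ⟨rfl, -⟩
    · exact fun j h => dom_aa h
    · exact fun j h => dom_acj h
  have hcx : ∀ j, Dom A a b c j s → A (c j) x := by
    rcases hx with ⟨rfl, -⟩ | ⟨rfl, -⟩
    · exact fun j h => dom_ca h
    · exact fun j h => dom_cc h
  have hxb : ∀ j, Dom A a b c j s → A x (b j) := by
    rcases hx with ⟨rfl, -⟩ | ⟨rfl, -⟩
    · exact fun j h => dom_ab h
    · exact fun j h => dom_cb h
  have hbx : ∀ j, Dom A a b c s j → A (b j) x := by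
    rcases hx with ⟨rfl, -⟩ | ⟨rfl, -⟩
    · exact fun j h => dom_ba h
    · exact fun j h => dom_bc h
  have hnxbs : ¬ A x (b s) := by
    rcases hx with ⟨rfl, -⟩ | ⟨rfl, -⟩
    · exact (S.hab s).2.1
    · exact (S.hbc s).2.2
  have hnxas : ¬ A x (a s) := by
    rcases hx with ⟨rfl, -⟩ | ⟨rfl, hy⟩
    · exact fun h => S.hA _ _ h h
    · exact hy ▸ S.hA _ _ hyx
  have hnxcs : ¬ A x (c s) := by
    rcases hx with ⟨rfl, hy⟩ | ⟨rfl, -⟩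
    · exact hy ▸ S.hA _ _ hyx
    · exact fun h => S.hA _ _ h h
  have hbsx_ne : b s ≠ x := by
    rcases hx with ⟨rfl, -⟩ | ⟨rfl, -⟩
    · exact Ne.symm (S.hab s).1
    · exact (S.hbc s).1
  -- the two sides of the tournament at s
  obtain ⟨Dp, hDp⟩ : ∃ D : Finset (ZMod k), ∀ j, j ∈ D ↔ (j ≠ s ∧ Dom A a b c s j) :=
    ⟨Finset.univ.filter (fun j => j ≠ s ∧ Dom A a b c s j), fun j => by simp⟩
  obtain ⟨Dm, hDm⟩ : ∃ D : Finset (ZMod k), ∀ j, j ∈ D ↔ (j ≠ s ∧ Dom A a b c j s) :=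
    ⟨Finset.univ.filter (fun j => j ≠ s ∧ Dom A a b c j s), fun j => by simp⟩
  have hDpcard : Dp.card = dR A a b c s := by
    unfold dR
    congr 1
    ext j
    rw [hDp, Finset.mem_filter]
    simp
  have hdisjPM : Disjoint Dp Dm := Finset.disjoint_left.mpr
    (fun {j} hj hj' => S.dom_asymm ((hDp j).mp hj).2 ((hDm j).mp hj').2)
  have hPMcard : Dp.card + Dm.card + 1 = k := by
    have h1 : Dp ∪ Dm = Finset.univ.erase s := by
      ext j
      simp only [Finset.mem_union, Finset.mem_erase, Finset.mem_univ, and_true]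
      constructor
      · rintro (h | h)
        · exact ((hDp j).mp h).1
        · exact ((hDm j).mp h).1
      · intro hj
        rcases hdt s j (Ne.symm hj) with h | h
        · exact Or.inl ((hDp j).mpr ⟨hj, h⟩)
        · exact Or.inr ((hDm j).mpr ⟨hj, h⟩)
    have h2 := Finset.card_union_of_disjoint hdisjPM
    rw [h1, Finset.card_erase_of_mem (Finset.mem_univ s), Finset.card_univ, ZMod.card] at h2
    have hk2 := S.hk
    omega
  -- injectivity of packing and disjointness helpers
  have hinj_a : ∀ E : Finset (ZMod k), (E.image a).card = E.card := by
    intro E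
    refine Finset.card_image_of_injOn (fun i _ j _ hij => ?_)
    by_contra hne
    exact S.vert_ne hne (Or.inl rfl) (Or.inl rfl) hij
  have hinj_c : ∀ E : Finset (ZMod k), (E.image c).card = E.card := by
    intro E
    refine Finset.card_image_of_injOn (fun i _ j _ hij => ?_)
    by_contra hne
    exact S.vert_ne hne (Or.inr (Or.inr rfl)) (Or.inr (Or.inr rfl)) hij
  have hinj_b : ∀ E : Finset (ZMod k), (E.image b).card = E.card := by
    intro E
    refine Finset.card_image_of_injOn (fun i _ j _ hij => ?_)
    by_contra hne
    exact S.vert_ne hne (Or.inr (Or.inl rfl)) (Or.inr (Or.inl rfl)) hij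
  have hd_ac : ∀ E F : Finset (ZMod k), Disjoint (E.image a) (F.image c) := by
    intro E F
    rw [Finset.disjoint_left]
    rintro u hu hv
    obtain ⟨i, -, rfl⟩ := Finset.mem_image.mp hu
    obtain ⟨j, -, hji⟩ := Finset.mem_image.mp hv
    by_cases hij : j = i
    · subst hij; exact S.hac j hji.symm
    · exact S.vert_ne hij (Or.inr (Or.inr rfl)) (Or.inl rfl) hji
  have hd_ab : ∀ E F : Finset (ZMod k), Disjoint (E.image a) (F.image b) := by
    intro E F
    rw [Finset.disjoint_left]
    rintro u hu hv
    obtain ⟨i, -, rfl⟩ := Finset.mem_image.mp hu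
    obtain ⟨j, -, hji⟩ := Finset.mem_image.mp hv
    by_cases hij : j = i
    · subst hij; exact (S.hab j).1 hji.symm
    · exact S.vert_ne hij (Or.inr (Or.inl rfl)) (Or.inl rfl) hji
  have hd_cb : ∀ E F : Finset (ZMod k), Disjoint (E.image c) (F.image b) := by
    intro E F
    rw [Finset.disjoint_left]
    rintro u hu hv
    obtain ⟨i, -, rfl⟩ := Finset.mem_image.mp hu
    obtain ⟨j, -, hji⟩ := Finset.mem_image.mp hv
    by_cases hij : j = i
    · subst hij; exact (S.hbc j).1 hji
    · exact S.vert_ne hij (Or.inr (Or.inl rfl)) (Or.inr (Or.inr rfl)) hji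
  -- the out-neighbourhood of x in K
  have hOset : outIn A (Kset a b c) x = ↑(Dp.image a ∪ Dp.image c ∪ Dm.image b) := by
    ext u
    simp only [outIn, Kset, Set.mem_setOf_eq, Finset.coe_union, Set.mem_union,
      Finset.coe_image, Set.mem_image, Finset.mem_coe]
    constructor
    · rintro ⟨⟨i, hui⟩, hAxu⟩
      by_cases his : i = s
      · exfalso
        subst his
        rcases hui with rfl | rfl | rfl
        · exact hnxas hAxu
        · exact hnxbs hAxu
        · exact hnxcs hAxu
      · rcases hdt s i (Ne.symm his) with h | h
        · rcases hui with rfl | rfl | rfl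
          · exact Or.inl (Or.inl ⟨i, (hDp i).mpr ⟨his, h⟩, rfl⟩)
          · exact absurd hAxu (S.hA _ _ (hbx i h))
          · exact Or.inl (Or.inr ⟨i, (hDp i).mpr ⟨his, h⟩, rfl⟩)
        · rcases hui with rfl | rfl | rfl
          · exact absurd hAxu (S.hA _ _ (hax i h))
          · exact Or.inr ⟨i, (hDm i).mpr ⟨his, h⟩, rfl⟩
          · exact absurd hAxu (S.hA _ _ (hcx i h))
    · rintro ((⟨j, hj, rfl⟩ | ⟨j, hj, rfl⟩) | ⟨j, hj, rfl⟩)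
      · exact ⟨⟨j, Or.inl rfl⟩, hxa j ((hDp j).mp hj).2⟩
      · exact ⟨⟨j, Or.inr (Or.inr rfl)⟩, hxc j ((hDp j).mp hj).2⟩
      · exact ⟨⟨j, Or.inr (Or.inl rfl)⟩, hxb j ((hDm j).mp hj).2⟩
  have hOFcard : (Dp.image a ∪ Dp.image c ∪ Dm.image b).card = 2 * Dp.card + Dm.card := by
    rw [Finset.card_union_of_disjoint
        (Finset.disjoint_union_left.mpr ⟨hd_ab Dp Dm, hd_cb Dp Dm⟩),
      Finset.card_union_of_disjoint (hd_ac Dp Dp), hinj_a, hinj_c, hinj_b]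
    ring
  -- reachability conditions
  obtain ⟨Mac, hMac⟩ : ∃ F : Finset (ZMod k), ∀ j, j ∈ F ↔ (j ∈ Dm ∧
      ∃ m, (Dom A a b c s m ∧ Dom A a b c m j) ∨ (Dom A a b c m s ∧ Dom A a b c j m)) :=
    ⟨Dm.filter (fun j => ∃ m, (Dom A a b c s m ∧ Dom A a b c m j) ∨
      (Dom A a b c m s ∧ Dom A a b c j m)), fun j => by rw [Finset.mem_filter]⟩
  obtain ⟨Mb, hMb⟩ : ∃ F : Finset (ZMod k), ∀ j, j ∈ F ↔ (j ∈ Dp ∧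
      ∃ m, (Dom A a b c s m ∧ Dom A a b c j m) ∨ (Dom A a b c m s ∧ Dom A a b c m j)) :=
    ⟨Dp.filter (fun j => ∃ m, (Dom A a b c s m ∧ Dom A a b c j m) ∨
      (Dom A a b c m s ∧ Dom A a b c m j)), fun j => by rw [Finset.mem_filter]⟩
  -- lower bound for the second neighbourhood
  have hSsub : ↑(insert (b s) (Mac.image a ∪ Mac.image c ∪ Mb.image b)) ⊆
      secondOutIn A (Kset a b c) x := by
    intro u hu
    simp only [Finset.coe_insert, Set.mem_insert_iff, Finset.coe_union, Set.mem_union,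
      Finset.coe_image, Set.mem_image, Finset.mem_coe] at hu
    rcases hu with rfl | ((⟨j, hj, rfl⟩ | ⟨j, hj, rfl⟩) | ⟨j, hj, rfl⟩)
    · refine ⟨⟨s, Or.inr (Or.inl rfl)⟩, hbsx_ne, hnxbs, ?_⟩
      rcases hdt s (s+1) (Ne.symm (S.succ_ne s)) with h | h
      · exact ⟨a (s+1), ⟨s+1, Or.inl rfl⟩, hxa _ h, dom_ab h⟩
      · exact ⟨b (s+1), ⟨s+1, Or.inr (Or.inl rfl)⟩, hxb _ h, dom_bb h⟩
    · obtain ⟨hjDm, m, hm⟩ := (hMac j).mp hj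
      obtain ⟨hjs, hRjs⟩ := (hDm j).mp hjDm
      refine ⟨⟨j, Or.inl rfl⟩, S.vert_ne hjs (Or.inl rfl) hxmem,
        fun h => S.hA _ _ (hax j hRjs) h, ?_⟩
      rcases hm with ⟨h1, h2⟩ | ⟨h1, h2⟩
      · exact ⟨a m, ⟨m, Or.inl rfl⟩, hxa m h1, dom_aa h2⟩
      · exact ⟨b m, ⟨m, Or.inr (Or.inl rfl)⟩, hxb m h1, dom_ba h2⟩
    · obtain ⟨hjDm, m, hm⟩ := (hMac j).mp hj
      obtain ⟨hjs, hRjs⟩ := (hDm j).mp hjDm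
      refine ⟨⟨j, Or.inr (Or.inr rfl)⟩, S.vert_ne hjs (Or.inr (Or.inr rfl)) hxmem,
        fun h => S.hA _ _ (hcx j hRjs) h, ?_⟩
      rcases hm with ⟨h1, h2⟩ | ⟨h1, h2⟩
      · exact ⟨a m, ⟨m, Or.inl rfl⟩, hxa m h1, dom_acj h2⟩
      · exact ⟨b m, ⟨m, Or.inr (Or.inl rfl)⟩, hxb m h1, dom_bc h2⟩
    · obtain ⟨hjDp, m, hm⟩ := (hMb j).mp hj
      obtain ⟨hjs, hRsj⟩ := (hDp j).mp hjDp
      refine ⟨⟨j, Or.inr (Or.inl rfl)⟩, S.vert_ne hjs (Or.inr (Or.inl rfl)) hxmem,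
        fun h => S.hA _ _ (hbx j hRsj) h, ?_⟩
      rcases hm with ⟨h1, h2⟩ | ⟨h1, h2⟩
      · exact ⟨a m, ⟨m, Or.inl rfl⟩, hxa m h1, dom_ab h2⟩
      · exact ⟨b m, ⟨m, Or.inr (Or.inl rfl)⟩, hxb m h1, dom_bb h2⟩
  have hbs_not : b s ∉ Mac.image a ∪ Mac.image c ∪ Mb.image b := by
    intro hmem
    rcases Finset.mem_union.mp hmem with hmem | hmem
    · rcases Finset.mem_union.mp hmem with hmem | hmem
      · obtain ⟨j, hj, hji⟩ := Finset.mem_image.mp hmem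
        have hjs := ((hDm j).mp ((hMac j).mp hj).1).1
        exact S.vert_ne hjs (Or.inl rfl) (Or.inr (Or.inl rfl)) hji
      · obtain ⟨j, hj, hji⟩ := Finset.mem_image.mp hmem
        have hjs := ((hDm j).mp ((hMac j).mp hj).1).1
        exact S.vert_ne hjs (Or.inr (Or.inr rfl)) (Or.inr (Or.inl rfl)) hji
    · obtain ⟨j, hj, hji⟩ := Finset.mem_image.mp hmem
      have hjs := ((hDp j).mp ((hMb j).mp hj).1).1
      exact S.vert_ne hjs (Or.inr (Or.inl rfl)) (Or.inr (Or.inl rfl)) hji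
  have hSFcard : (insert (b s) (Mac.image a ∪ Mac.image c ∪ Mb.image b)).card
      = 1 + (2 * Mac.card + Mb.card) := by
    rw [Finset.card_insert_of_notMem hbs_not,
      Finset.card_union_of_disjoint
        (Finset.disjoint_union_left.mpr ⟨hd_ab Mac Mb, hd_cb Mac Mb⟩),
      Finset.card_union_of_disjoint (hd_ac Mac Mac), hinj_a, hinj_c, hinj_b]
    ring
  -- failure sets
  obtain ⟨Nac, hNac⟩ : ∃ F : Finset (ZMod k), ∀ j, j ∈ F ↔ (j ∈ Dm ∧
      ¬ ∃ m, (Dom A a b c s m ∧ Dom A a b c m j) ∨ (Dom A a b c m s ∧ Dom A a b c j m)) :=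
    ⟨Dm.filter (fun j => ¬ ∃ m, (Dom A a b c s m ∧ Dom A a b c m j) ∨
      (Dom A a b c m s ∧ Dom A a b c j m)), fun j => by rw [Finset.mem_filter]⟩
  obtain ⟨Nb, hNb⟩ : ∃ F : Finset (ZMod k), ∀ j, j ∈ F ↔ (j ∈ Dp ∧
      ¬ ∃ m, (Dom A a b c s m ∧ Dom A a b c j m) ∨ (Dom A a b c m s ∧ Dom A a b c m j)) :=
    ⟨Dp.filter (fun j => ¬ ∃ m, (Dom A a b c s m ∧ Dom A a b c j m) ∨
      (Dom A a b c m s ∧ Dom A a b c m j)), fun j => by rw [Finset.mem_filter]⟩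
  have hMNac : Mac.card + Nac.card = Dm.card := by
    have h1 : Disjoint Mac Nac := Finset.disjoint_left.mpr
      (fun {j} hj hj' => ((hNac j).mp hj').2 ((hMac j).mp hj).2)
    have h2 : Mac ∪ Nac = Dm := by
      ext j
      simp only [Finset.mem_union, hMac j, hNac j]
      constructor
      · rintro (⟨h, -⟩ | ⟨h, -⟩) <;> exact h
      · intro h
        by_cases hc : ∃ m, (Dom A a b c s m ∧ Dom A a b c m j) ∨
            (Dom A a b c m s ∧ Dom A a b c j m)
        · exact Or.inl ⟨h, hc⟩
        · exact Or.inr ⟨h, hc⟩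
    rw [← Finset.card_union_of_disjoint h1, h2]
  have hMNb : Mb.card + Nb.card = Dp.card := by
    have h1 : Disjoint Mb Nb := Finset.disjoint_left.mpr
      (fun {j} hj hj' => ((hNb j).mp hj').2 ((hMb j).mp hj).2)
    have h2 : Mb ∪ Nb = Dp := by
      ext j
      simp only [Finset.mem_union, hMb j, hNb j]
      constructor
      · rintro (⟨h, -⟩ | ⟨h, -⟩) <;> exact h
      · intro h
        by_cases hc : ∃ m, (Dom A a b c s m ∧ Dom A a b c j m) ∨
            (Dom A a b c m s ∧ Dom A a b c m j)
        · exact Or.inl ⟨h, hc⟩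
        · exact Or.inr ⟨h, hc⟩
    rw [← Finset.card_union_of_disjoint h1, h2]
  have hNac1 : Nac.card ≤ 1 := by
    refine Finset.card_le_one.mpr (fun j1 hj1 j2 hj2 => ?_)
    by_contra hne
    obtain ⟨hj1Dm, hnc1⟩ := (hNac j1).mp hj1
    obtain ⟨hj2Dm, hnc2⟩ := (hNac j2).mp hj2
    rcases hdt j1 j2 hne with h | h
    · exact hnc1 ⟨j2, Or.inr ⟨((hDm j2).mp hj2Dm).2, h⟩⟩
    · exact hnc2 ⟨j1, Or.inr ⟨((hDm j1).mp hj1Dm).2, h⟩⟩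
  have hNb1 : Nb.card ≤ 1 := by
    refine Finset.card_le_one.mpr (fun j1 hj1 j2 hj2 => ?_)
    by_contra hne
    obtain ⟨hj1Dp, hnc1⟩ := (hNb j1).mp hj1
    obtain ⟨hj2Dp, hnc2⟩ := (hNb j2).mp hj2
    rcases hdt j1 j2 hne with h | h
    · exact hnc1 ⟨j2, Or.inl ⟨((hDp j2).mp hj2Dp).2, h⟩⟩
    · exact hnc2 ⟨j1, Or.inl ⟨((hDp j1).mp hj1Dp).2, h⟩⟩
  have hMix : Nac.card = 0 ∨ Nb.card = 0 := by
    by_contra hcon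
    push_neg at hcon
    obtain ⟨j1, hj1⟩ := Finset.card_pos.mp (Nat.pos_of_ne_zero hcon.1)
    obtain ⟨j2, hj2⟩ := Finset.card_pos.mp (Nat.pos_of_ne_zero hcon.2)
    obtain ⟨hj1Dm, hnc1⟩ := (hNac j1).mp hj1
    obtain ⟨hj2Dp, hnc2⟩ := (hNb j2).mp hj2
    have hR1 := ((hDm j1).mp hj1Dm).2
    have hR2 := ((hDp j2).mp hj2Dp).2
    have hne : j1 ≠ j2 := by
      rintro rfl
      exact S.dom_asymm hR2 hR1
    rcases hdt j1 j2 hne with h | h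
    · exact hnc2 ⟨j1, Or.inr ⟨hR1, h⟩⟩
    · exact hnc1 ⟨j2, Or.inl ⟨hR2, h⟩⟩
  have hReg : 1 ≤ Nac.card → 2 * Dp.card + 2 ≤ k := by
    intro hpos
    obtain ⟨j, hj⟩ := Finset.card_pos.mp hpos
    obtain ⟨hjDm, hnc⟩ := (hNac j).mp hj
    obtain ⟨hjs, hRjs⟩ := (hDm j).mp hjDm
    have hsub : insert s Dp ⊆ Finset.univ.filter (fun m => m ≠ j ∧ Dom A a b c j m) := by
      intro m hm
      rcases Finset.mem_insert.mp hm with rfl | hm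
      · exact Finset.mem_filter.mpr ⟨Finset.mem_univ _, Ne.symm hjs, hRjs⟩
      · obtain ⟨hms, hRsm⟩ := (hDp m).mp hm
        have hmj : m ≠ j := by
          rintro rfl
          exact S.dom_asymm hRsm hRjs
        have hjm : Dom A a b c j m := by
          rcases hdt m j hmj with h | h
          · exact absurd ⟨m, Or.inl ⟨hRsm, h⟩⟩ hnc
          · exact h
        exact Finset.mem_filter.mpr ⟨Finset.mem_univ _, hmj, hjm⟩
    have hcards : Dp.card + 1 ≤ dR A a b c j := by
      have h1 : (insert s Dp).card = Dp.card + 1 := by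
        rw [Finset.card_insert_of_notMem (fun hs => ((hDp s).mp hs).1 rfl)]
      have h2 := Finset.card_le_card hsub
      rw [h1] at h2
      have h3 : (Finset.univ.filter (fun m => m ≠ j ∧ Dom A a b c j m)).card
          = dR A a b c j := by
        unfold dR
        congr 1
      omega
    have := S.two_d_le_strict s j hmin (by omega)
    omega
  -- put it all together
  have h2d := S.two_d_le s hmin
  rw [hOset, Set.ncard_coe_finset]
  refine le_trans ?_ (le_trans (le_of_eq (Set.ncard_coe_finset _).symm)
    (Set.ncard_le_ncard hSsub (Set.toFinite _)))
  rw [hOFcard, hSFcard]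
  rw [← hDpcard] at h2d
  rcases hMix with h0 | h0
  · omega
  · by_cases hNaccase : Nac.card = 0
    · omega
    · have := hReg (by omega)
      omega


lemma main (S : DC A k a b c) :
    ∃ s : ZMod k,
      (outIn A (Kset a b c) (a s)).ncard ≤ (secondOutIn A (Kset a b c) (a s)).ncard ∨
      (outIn A (Kset a b c) (c s)).ncard ≤ (secondOutIn A (Kset a b c) (c s)).ncard := by
  haveI : NeZero k := ⟨by have := S.hk; omega⟩
  obtain ⟨s, -, hmin⟩ := Finset.exists_min_image Finset.univ (dR A a b c)
    ⟨0, Finset.mem_univ 0⟩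
  refine ⟨s, ?_⟩
  rcases S.adj_ac s with h | h
  · exact Or.inr (S.snp_min s (c s) (a s) (Or.inr ⟨rfl, rfl⟩) h
      (fun j => hmin j (Finset.mem_univ j)))
  · exact Or.inl (S.snp_min s (a s) (c s) (Or.inl ⟨rfl, rfl⟩) h
      (fun j => hmin j (Finset.mem_univ j)))

end DC

end Aux

/-- Proposition 4.13: some `a_s` or `c_s` has the SNP in `D[K(C)]`. -/
theorem stmt12 {V : Type*} [Fintype V] (A : V → V → Prop) (hA : Oriented A)
    (hP : MissingPaths2 A) (k : ℕ) (a b c : ZMod k → V)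
    (hC : IsDoubleCycle A k a b c) (K : Set V) (hK : K = Kset a b c) :
    ∃ s : ZMod k,
      (outIn A K (a s)).ncard ≤ (secondOutIn A K (a s)).ncard ∨
      (outIn A K (c s)).ncard ≤ (secondOutIn A K (c s)).ncard := by
  obtain ⟨hk, hm, hdisj, hloses⟩ := hC
  subst hK
  exact DC.main ⟨hA, hP, hk, fun i => (hm i).1, fun i => (hm i).2.1, fun i => (hm i).2.2,
    hdisj, fun i => (hloses i).1, fun i => (hloses i).2.1, fun i => (hloses i).2.2.1,
    fun i => (hloses i).2.2.2⟩

end SSNC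
end

section
/- Let D be a tournament missing disjoint paths of length 2 and let C = a_1b_1c_1, …, a_kb_kc_k be a double cycle in Δ(D). Then there exists t ∈ {1,…,k} such that, in the induced subdigraph D[K(C)], |N⁺(b_t)| ≤ |N⁺⁺(b_t)|. -/
namespace SSNC

variable {V : Type*}

-- Auxiliary development

lemma IsMissing.symm' {A : V → V → Prop} {u v : V} (h : IsMissing A u v) :
    IsMissing A v u := ⟨h.1.symm, h.2.2, h.2.1⟩

def tri {k : ℕ} (a b c : ZMod k → V) (i : ZMod k) : Set V := {a i, b i, c i}

structure Pat1 (A : V → V → Prop) {k : ℕ} (a b c : ZMod k → V) (i : ZMod k) : Prop where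
  bb : A (b i) (b (i+1))
  ab : A (a (i+1)) (b i)
  cb : A (c (i+1)) (b i)
  ba : A (b (i+1)) (a i)
  bc : A (b (i+1)) (c i)
  aa : A (a i) (a (i+1))
  acx : A (a i) (c (i+1))
  ca : A (c i) (a (i+1))
  cc : A (c i) (c (i+1))
  sba : ¬ SecondOut A (b i) (a (i+1))
  sbc : ¬ SecondOut A (b i) (c (i+1))
  sab : ¬ SecondOut A (a i) (b (i+1))
  scb : ¬ SecondOut A (c i) (b (i+1))

structure Pat2 (A : V → V → Prop) {k : ℕ} (a b c : ZMod k → V) (i : ZMod k) : Prop where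
  bb : A (b (i+1)) (b i)
  ba : A (b i) (a (i+1))
  bc : A (b i) (c (i+1))
  ab : A (a i) (b (i+1))
  cb : A (c i) (b (i+1))
  aa : A (a (i+1)) (a i)
  ac : A (a (i+1)) (c i)
  ca : A (c (i+1)) (a i)
  cc : A (c (i+1)) (c i)
  sbb : ¬ SecondOut A (b i) (b (i+1))
  saa : ¬ SecondOut A (a i) (a (i+1))
  sac : ¬ SecondOut A (a i) (c (i+1))
  sca : ¬ SecondOut A (c i) (a (i+1))
  scc : ¬ SecondOut A (c i) (c (i+1))

structure Ctx_s13 (A : V → V → Prop) {k : ℕ} (a b c : ZMod k → V) : Prop where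
  hA : Oriented A
  hk : 2 ≤ k
  mab : ∀ i, IsMissing A (a i) (b i)
  mbc : ∀ i, IsMissing A (b i) (c i)
  hac : ∀ i, a i ≠ c i
  hdis : ∀ i j, i ≠ j → Disjoint (tri a b c i) (tri a b c j)
  mia : ∀ i w, IsMissing A (a i) w → w = b i
  mib : ∀ i w, IsMissing A (b i) w → w = a i ∨ w = c i
  mic : ∀ i w, IsMissing A (c i) w → w = b i
  hpat : ∀ i, Pat1 A a b c i ∨ Pat2 A a b c i

section CtxLemmas

variable {A : V → V → Prop} {k : ℕ} {a b c : ZMod k → V}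

lemma mta (i : ZMod k) : a i ∈ tri a b c i := Set.mem_insert _ _
lemma mtb (i : ZMod k) : b i ∈ tri a b c i := by simp [tri]
lemma mtc (i : ZMod k) : c i ∈ tri a b c i := by simp [tri]

lemma tri_cases {u : V} {i : ZMod k} (hu : u ∈ tri a b c i) :
    u = a i ∨ u = b i ∨ u = c i := by
  simpa [tri, Set.mem_insert_iff] using hu

lemma tri_symm (i : ZMod k) : tri c b a i = tri a b c i := by
  ext x; simp [tri, Set.mem_insert_iff]; tauto

lemma pat1_symm {i : ZMod k} (p : Pat1 A a b c i) : Pat1 A c b a i :=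
  ⟨p.bb, p.cb, p.ab, p.bc, p.ba, p.cc, p.ca, p.acx, p.aa, p.sbc, p.sba, p.scb, p.sab⟩

lemma pat2_symm {i : ZMod k} (p : Pat2 A a b c i) : Pat2 A c b a i :=
  ⟨p.bb, p.bc, p.ba, p.cb, p.ab, p.cc, p.ca, p.ac, p.aa, p.sbb, p.scc, p.sca, p.sac, p.saa⟩

lemma Ctx_s13.symm (hX : Ctx_s13 A a b c) : Ctx_s13 A c b a where
  hA := hX.hA
  hk := hX.hk
  mab := fun i => (hX.mbc i).symm'
  mbc := fun i => (hX.mab i).symm'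
  hac := fun i => (hX.hac i).symm
  hdis := fun i j hij => by
    rw [tri_symm (a := a) (b := b) (c := c) i, tri_symm (a := a) (b := b) (c := c) j]
    exact hX.hdis i j hij
  mia := hX.mic
  mib := fun i w h => (hX.mib i w h).symm
  mic := hX.mia
  hpat := fun i => (hX.hpat i).imp pat1_symm pat2_symm

lemma Ctx_s13.triNe (hX : Ctx_s13 A a b c) {i j : ZMod k} (hij : i ≠ j) {u v : V}
    (hu : u ∈ tri a b c i) (hv : v ∈ tri a b c j) : u ≠ v := fun h =>
  Set.disjoint_left.mp (hX.hdis i j hij) hu (h ▸ hv)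

lemma Ctx_s13.tot (hX : Ctx_s13 A a b c) {i j : ZMod k} (hij : i ≠ j) {u v : V}
    (hu : u ∈ tri a b c i) (hv : v ∈ tri a b c j) : A u v ∨ A v u := by
  by_contra h
  push_neg at h
  have hm : IsMissing A u v := ⟨hX.triNe hij hu hv, h.1, h.2⟩
  rcases tri_cases hu with rfl | rfl | rfl
  · exact hX.triNe hij (mtb i) hv (hX.mia i v hm).symm
  · rcases hX.mib i v hm with rfl | rfl
    · exact hX.triNe hij (mta i) hv rfl
    · exact hX.triNe hij (mtc i) hv rfl
  · exact hX.triNe hij (mtb i) hv (hX.mic i v hm).symm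

lemma Ctx_s13.onz (hX : Ctx_s13 A a b c) : (1 : ZMod k) ≠ 0 := by
  haveI : Fact (1 < k) := ⟨by have := hX.hk; omega⟩
  exact one_ne_zero

lemma Ctx_s13.succNe (hX : Ctx_s13 A a b c) (i : ZMod k) : i + 1 ≠ i := fun h =>
  hX.onz (by have h2 : i + 1 = i + 0 := by rw [add_zero]; exact h
             exact add_left_cancel h2)

lemma Ctx_s13.subOneNe (hX : Ctx_s13 A a b c) (i : ZMod k) : i - 1 ≠ i := fun h =>
  hX.succNe i (by rw [← sub_eq_iff_eq_add.mp h])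

/-- use a `¬ SecondOut` fact: if `x` beats `v` and there is no 2-path `v → w → x`. -/
lemma Ctx_s13.noSec (hX : Ctx_s13 A a b c) {v x w : V} (hs : ¬ SecondOut A v x)
    (hxv : A x v) (hnx : x ≠ v) (hvw : A v w) (hwx : A w x) : False :=
  hs ⟨hnx, hX.hA x v hxv, w, hvw, hwx⟩

end CtxLemmas

section Chains

variable {A : V → V → Prop} {k : ℕ} {a b c : ZMod k → V}

lemma Ctx_s13.sameTri (hX : Ctx_s13 A a b c) {j : ZMod k} {u : V} (hu : u ∈ tri a b c j)
    (h1 : A (a j) u) (h2 : A (b j) u) : False := by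
  rcases tri_cases hu with rfl | rfl | rfl
  · exact hX.hA _ _ h1 h1
  · exact hX.hA _ _ h2 h2
  · exact (hX.mbc j).2.1 h2

lemma Ctx_s13.nextTri (hX : Ctx_s13 A a b c) {j : ZMod k} {u : V} (hu : u ∈ tri a b c (j+1))
    (h1 : A (a j) u) (h2 : A (b j) u) : False := by
  rcases hX.hpat j with p | p <;> rcases tri_cases hu with rfl | rfl | rfl
  · exact hX.hA _ _ p.ab h2
  · exact hX.hA _ _ p.ba h1
  · exact hX.hA _ _ p.cb h2
  · exact hX.hA _ _ p.aa h1
  · exact hX.hA _ _ p.bb h2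
  · exact hX.hA _ _ p.ca h1

lemma Ctx_s13.chainA (hX : Ctx_s13 A a b c) : ∀ (n : ℕ) (j i : ZMod k) (u : V),
    u ∈ tri a b c i → i = j + (n : ZMod k) → A (a j) u → A (b j) u → False := by
  intro n
  induction n with
  | zero =>
    intro j i u hu hi h1 h2
    rw [Nat.cast_zero, add_zero] at hi
    exact hX.sameTri (hi ▸ hu) h1 h2
  | succ n ih =>
    intro j i u hu hi h1 h2
    by_cases hji : i = j
    · exact hX.sameTri (hji ▸ hu) h1 h2
    by_cases hj1 : i = j + 1
    · exact hX.nextTri (hj1 ▸ hu) h1 h2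
    have hne : i ≠ j + 1 := hj1
    rcases hX.hpat j with p | p
    · have ha1 : A (a (j+1)) u := by
        rcases hX.tot hne hu (mta (j+1)) with h | h
        · exact absurd h (fun hux => hX.noSec p.sba p.ab
            (hX.triNe (hX.succNe j) (mta (j+1)) (mtb j)) h2 hux)
        · exact h
      have hb1 : A (b (j+1)) u := by
        rcases hX.tot hne hu (mtb (j+1)) with h | h
        · exact absurd h (fun hux => hX.noSec p.sab p.ba
            (hX.triNe (hX.succNe j) (mtb (j+1)) (mta j)) h1 hux)
        · exact h
      exact ih (j+1) i u hu (by rw [hi]; push_cast; ring) ha1 hb1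
    · have ha1 : A (a (j+1)) u := by
        rcases hX.tot hne hu (mta (j+1)) with h | h
        · exact absurd h (fun hux => hX.noSec p.saa p.aa
            (hX.triNe (hX.succNe j) (mta (j+1)) (mta j)) h1 hux)
        · exact h
      have hb1 : A (b (j+1)) u := by
        rcases hX.tot hne hu (mtb (j+1)) with h | h
        · exact absurd h (fun hux => hX.noSec p.sbb p.bb
            (hX.triNe (hX.succNe j) (mtb (j+1)) (mtb j)) h2 hux)
        · exact h
      exact ih (j+1) i u hu (by rw [hi]; push_cast; ring) ha1 hb1

/-- If `u` beats `b j` and `u` beats `a j`, contradiction (u in K). -/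
lemma Ctx_s13.disjAB (hX : Ctx_s13 A a b c) (j i : ZMod k) (u : V) (hu : u ∈ tri a b c i)
    (h1 : A (a j) u) (h2 : A (b j) u) : False := by
  haveI : NeZero k := ⟨by have := hX.hk; omega⟩
  exact hX.chainA ((i - j).val) j i u hu
    (by rw [ZMod.natCast_zmod_val]; ring) h1 h2

lemma Ctx_s13.prevDigonAB (hX : Ctx_s13 A a b c) {j : ZMod k} {u : V} (hu : u ∈ tri a b c j)
    (h1 : A u (a (j+1))) (h2 : A u (b (j+1))) : False := by
  rcases hX.hpat j with p | p <;> rcases tri_cases hu with rfl | rfl | rfl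
  · exact hX.hA _ _ p.ba h2
  · exact hX.hA _ _ p.ab h1
  · exact hX.hA _ _ p.bc h2
  · exact hX.hA _ _ p.aa h1
  · exact hX.hA _ _ p.bb h2
  · exact hX.hA _ _ p.ac h1

lemma Ctx_s13.chainB (hX : Ctx_s13 A a b c) : ∀ (n : ℕ) (i m : ZMod k) (u : V),
    u ∈ tri a b c i → m = i + ((n + 1 : ℕ) : ZMod k) →
    A u (a m) → A u (b m) → A u (c m) → False := by
  intro n
  induction n with
  | zero =>
    intro i m u hu hm h1 h2 _
    rw [Nat.cast_one] at hm
    subst hm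
    exact hX.prevDigonAB hu h1 h2
  | succ n ih =>
    intro i m u hu hm h1 h2 h3
    by_cases him : i = m
    · subst him
      rcases tri_cases hu with rfl | rfl | rfl
      · exact hX.hA _ _ h1 h1
      · exact hX.hA _ _ h2 h2
      · exact hX.hA _ _ h3 h3
    by_cases him1 : m = i + 1
    · exact hX.prevDigonAB hu (him1 ▸ h1) (him1 ▸ h2)
    have hne : i ≠ m - 1 := fun h => him1 (by rw [h]; ring)
    have e : m - 1 + 1 = m := sub_add_cancel m 1
    have hmm1 : m ≠ m - 1 := (hX.subOneNe m).symm
    rcases hX.hpat (m-1) with p | p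
    · have pba := p.ba; have pab := p.ab; have pbc := p.bc
      have psab := p.sab; have psba := p.sba; have pscb := p.scb
      rw [e] at pba pab pbc psab psba pscb
      have q1 : A u (a (m-1)) := by
        rcases hX.tot hne hu (mta (m-1)) with h | h
        · exact h
        · exact absurd h (fun hxu => hX.noSec psab pba
            (hX.triNe hmm1 (mtb m) (mta (m-1))) hxu h2)
      have q2 : A u (b (m-1)) := by
        rcases hX.tot hne hu (mtb (m-1)) with h | h
        · exact h
        · exact absurd h (fun hxu => hX.noSec psba pab
            (hX.triNe hmm1 (mta m) (mtb (m-1))) hxu h1)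
      have q3 : A u (c (m-1)) := by
        rcases hX.tot hne hu (mtc (m-1)) with h | h
        · exact h
        · exact absurd h (fun hxu => hX.noSec pscb pbc
            (hX.triNe hmm1 (mtb m) (mtc (m-1))) hxu h2)
      exact ih i (m-1) u hu (by rw [sub_eq_iff_eq_add, hm]; push_cast; ring) q1 q2 q3
    · have paa := p.aa; have pbb := p.bb; have pac := p.ac
      have psaa := p.saa; have psbb := p.sbb; have psca := p.sca
      rw [e] at paa pbb pac psaa psbb psca
      have q1 : A u (a (m-1)) := by
        rcases hX.tot hne hu (mta (m-1)) with h | h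
        · exact h
        · exact absurd h (fun hxu => hX.noSec psaa paa
            (hX.triNe hmm1 (mta m) (mta (m-1))) hxu h1)
      have q2 : A u (b (m-1)) := by
        rcases hX.tot hne hu (mtb (m-1)) with h | h
        · exact h
        · exact absurd h (fun hxu => hX.noSec psbb pbb
            (hX.triNe hmm1 (mtb m) (mtb (m-1))) hxu h2)
      have q3 : A u (c (m-1)) := by
        rcases hX.tot hne hu (mtc (m-1)) with h | h
        · exact h
        · exact absurd h (fun hxu => hX.noSec psca pac
            (hX.triNe hmm1 (mta m) (mtc (m-1))) hxu h1)
      exact ih i (m-1) u hu (by rw [sub_eq_iff_eq_add, hm]; push_cast; ring) q1 q2 q3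

/-- If `u` beats both `a j` and `b j`, contradiction. -/
lemma Ctx_s13.coverAB (hX : Ctx_s13 A a b c) (j i : ZMod k) (u : V) (hu : u ∈ tri a b c i)
    (h1 : A u (a j)) (h2 : A u (b j)) : False := by
  haveI : NeZero k := ⟨by have := hX.hk; omega⟩
  by_cases hij : i = j
  · subst hij
    rcases tri_cases hu with rfl | rfl | rfl
    · exact hX.hA _ _ h1 h1
    · exact hX.hA _ _ h2 h2
    · exact (hX.mbc i).2.2 h2
  by_cases hj1 : j = i + 1
  · exact hX.prevDigonAB hu (hj1 ▸ h1) (hj1 ▸ h2)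
  have hne : i ≠ j - 1 := fun h => hj1 (by rw [h]; ring)
  have e : j - 1 + 1 = j := sub_add_cancel j 1
  have hjj1 : j ≠ j - 1 := (hX.subOneNe j).symm
  have key : A u (a (j-1)) ∧ A u (b (j-1)) ∧ A u (c (j-1)) := by
    rcases hX.hpat (j-1) with p | p
    · have pba := p.ba; have pab := p.ab; have pbc := p.bc
      have psab := p.sab; have psba := p.sba; have pscb := p.scb
      rw [e] at pba pab pbc psab psba pscb
      refine ⟨?_, ?_, ?_⟩
      · rcases hX.tot hne hu (mta (j-1)) with h | h
        · exact h
        · exact absurd h (fun hxu => hX.noSec psab pba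
            (hX.triNe hjj1 (mtb j) (mta (j-1))) hxu h2)
      · rcases hX.tot hne hu (mtb (j-1)) with h | h
        · exact h
        · exact absurd h (fun hxu => hX.noSec psba pab
            (hX.triNe hjj1 (mta j) (mtb (j-1))) hxu h1)
      · rcases hX.tot hne hu (mtc (j-1)) with h | h
        · exact h
        · exact absurd h (fun hxu => hX.noSec pscb pbc
            (hX.triNe hjj1 (mtb j) (mtc (j-1))) hxu h2)
    · have paa := p.aa; have pbb := p.bb; have pac := p.ac
      have psaa := p.saa; have psbb := p.sbb; have psca := p.sca
      rw [e] at paa pbb pac psaa psbb psca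
      refine ⟨?_, ?_, ?_⟩
      · rcases hX.tot hne hu (mta (j-1)) with h | h
        · exact h
        · exact absurd h (fun hxu => hX.noSec psaa paa
            (hX.triNe hjj1 (mta j) (mta (j-1))) hxu h1)
      · rcases hX.tot hne hu (mtb (j-1)) with h | h
        · exact h
        · exact absurd h (fun hxu => hX.noSec psbb pbb
            (hX.triNe hjj1 (mtb j) (mtb (j-1))) hxu h2)
      · rcases hX.tot hne hu (mtc (j-1)) with h | h
        · exact h
        · exact absurd h (fun hxu => hX.noSec psca pac
            (hX.triNe hjj1 (mta j) (mtc (j-1))) hxu h1)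
  have hviz : (j - 1 - i).val ≠ 0 := by
    rw [Ne, ZMod.val_eq_zero, sub_eq_zero]
    exact fun h => hne h.symm
  obtain ⟨n, hn⟩ := Nat.exists_eq_succ_of_ne_zero hviz
  have hcast : ((n+1 : ℕ) : ZMod k) = j - 1 - i := by
    rw [show (n+1 : ℕ) = Nat.succ n from rfl, ← hn, ZMod.natCast_zmod_val]
  exact hX.chainB n i (j-1) u hu (by rw [hcast]; ring) key.1 key.2.1 key.2.2

lemma Ctx_s13.disjCB (hX : Ctx_s13 A a b c) (j i : ZMod k) (u : V) (hu : u ∈ tri a b c i)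
    (h1 : A (c j) u) (h2 : A (b j) u) : False :=
  hX.symm.disjAB j i u (by rw [tri_symm (a:=a) (b:=b) (c:=c)]; exact hu) h1 h2

lemma Ctx_s13.coverCB (hX : Ctx_s13 A a b c) (j i : ZMod k) (u : V) (hu : u ∈ tri a b c i)
    (h1 : A u (c j)) (h2 : A u (b j)) : False :=
  hX.symm.coverAB j i u (by rw [tri_symm (a:=a) (b:=b) (c:=c)]; exact hu) h1 h2

/-- full pattern, part 1: if `b i → b j` then `a j → b i`. -/
lemma Ctx_s13.pba (hX : Ctx_s13 A a b c) {i j : ZMod k} (hij : i ≠ j)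
    (h : A (b i) (b j)) : A (a j) (b i) := by
  rcases hX.tot hij.symm (mta j) (mtb i) with h' | h'
  · exact h'
  · exact (hX.coverAB j i (b i) (mtb i) h' h).elim

lemma Ctx_s13.pbc (hX : Ctx_s13 A a b c) {i j : ZMod k} (hij : i ≠ j)
    (h : A (b i) (b j)) : A (c j) (b i) := by
  rcases hX.tot hij.symm (mtc j) (mtb i) with h' | h'
  · exact h'
  · exact (hX.coverCB j i (b i) (mtb i) h' h).elim

/-- full pattern, part 2: if `b j → b i` then `b i → a j`. -/
lemma Ctx_s13.qba (hX : Ctx_s13 A a b c) {i j : ZMod k} (hij : i ≠ j)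
    (h : A (b j) (b i)) : A (b i) (a j) := by
  rcases hX.tot hij (mtb i) (mta j) with h' | h'
  · exact h'
  · exact (hX.disjAB j i (b i) (mtb i) h' h).elim

lemma Ctx_s13.qbc (hX : Ctx_s13 A a b c) {i j : ZMod k} (hij : i ≠ j)
    (h : A (b j) (b i)) : A (b i) (c j) := by
  rcases hX.tot hij (mtb i) (mtc j) with h' | h'
  · exact h'
  · exact (hX.disjCB j i (b i) (mtb i) h' h).elim

end Chains

section Counting

variable [Fintype V] (A : V → V → Prop) {k : ℕ} (a b c : ZMod k → V)

open scoped Classical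

open scoped Classical in
noncomputable def FTf (j : ZMod k) : Finset V :=
  Finset.univ.filter (fun u => u ∈ tri a b c j)

open scoped Classical in
noncomputable def FOf (i : ZMod k) : Finset V :=
  Finset.univ.filter (fun u => u ∈ Kset a b c ∧ A (b i) u)

open scoped Classical in
noncomputable def FSf (i : ZMod k) : Finset V :=
  Finset.univ.filter (fun u => u ∈ secondOutIn A (Kset a b c) (b i))

open scoped Classical in
noncomputable def Xf (i j : ZMod k) : ℕ := (FOf A a b c i ∩ FTf a b c j).card

open scoped Classical in
noncomputable def idxf (u : V) : ZMod k :=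
  if h : ∃ i, u ∈ tri a b c i then h.choose else 0

variable {A a b c}

lemma memFT {j : ZMod k} {u : V} : u ∈ FTf a b c j ↔ u ∈ tri a b c j := by
  simp [FTf]

lemma memFO {i : ZMod k} {u : V} : u ∈ FOf A a b c i ↔ u ∈ Kset a b c ∧ A (b i) u := by
  simp [FOf]

lemma memFS {i : ZMod k} {u : V} :
    u ∈ FSf A a b c i ↔ u ∈ secondOutIn A (Kset a b c) (b i) := by
  simp [FSf]

lemma memKi {u : V} : u ∈ Kset a b c ↔ ∃ i, u ∈ tri a b c i := by
  simp [Kset, tri, Set.mem_insert_iff]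

lemma memKt (i : ZMod k) {u : V} (hu : u ∈ tri a b c i) : u ∈ Kset a b c :=
  memKi.mpr ⟨i, hu⟩

lemma idx_eq (hX : Ctx_s13 A a b c) {u : V} {i : ZMod k} (hu : u ∈ tri a b c i) :
    idxf a b c u = i := by
  have hex : ∃ i, u ∈ tri a b c i := ⟨i, hu⟩
  have hc : u ∈ tri a b c (idxf a b c u) := by
    simp only [idxf, dif_pos hex]
    exact hex.choose_spec
  by_contra hne
  exact Set.disjoint_left.mp (hX.hdis _ _ hne) hc hu

lemma cardFT (hX : Ctx_s13 A a b c) (j : ZMod k) : (FTf a b c j).card = 3 := by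
  classical
  have h0 : FTf a b c j = {a j, b j, c j} := by
    ext u
    simp [memFT, tri, Set.mem_insert_iff]
  have h1 : (a j) ∉ ({b j, c j} : Finset V) := by
    simp [(hX.mab j).1, hX.hac j]
  have h2 : (b j) ∉ ({c j} : Finset V) := by
    simp [(hX.mbc j).1]
  rw [h0, Finset.card_insert_of_notMem h1, Finset.card_insert_of_notMem h2,
    Finset.card_singleton]

lemma cardFK [NeZero k] (hX : Ctx_s13 A a b c) :
    (Finset.univ.filter (fun u => u ∈ Kset a b c) : Finset V).card = 3 * k := by
  classical
  rw [Finset.card_eq_sum_card_fiberwise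
    (f := idxf a b c) (t := Finset.univ) (fun x _ => Finset.mem_univ _)]
  have hfib : ∀ j, ((Finset.univ.filter (fun u => u ∈ Kset a b c)).filter
      (fun u => idxf a b c u = j)) = FTf a b c j := by
    intro j
    ext u
    simp only [Finset.mem_filter, Finset.mem_univ, true_and, memFT]
    constructor
    · rintro ⟨hK, hid⟩
      obtain ⟨i, hi⟩ := memKi.mp hK
      rwa [← hid, idx_eq hX hi]
    · intro hu
      exact ⟨memKt j hu, idx_eq hX hu⟩
  rw [Finset.sum_congr rfl (fun j _ => by rw [hfib j, cardFT hX j])]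
  simp [Finset.card_univ, ZMod.card, mul_comm]

lemma gdec [NeZero k] (hX : Ctx_s13 A a b c) (i : ZMod k) :
    (FOf A a b c i).card = ∑ j, Xf A a b c i j := by
  classical
  rw [Finset.card_eq_sum_card_fiberwise
    (f := idxf a b c) (t := Finset.univ) (fun x _ => Finset.mem_univ _)]
  refine Finset.sum_congr rfl (fun j _ => ?_)
  have : (FOf A a b c i).filter (fun u => idxf a b c u = j)
      = FOf A a b c i ∩ FTf a b c j := by
    ext u
    simp only [Finset.mem_filter, Finset.mem_inter, memFO, memFT]
    constructor
    · rintro ⟨⟨hK, hA'⟩, hid⟩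
      refine ⟨⟨hK, hA'⟩, ?_⟩
      obtain ⟨i', hi⟩ := memKi.mp hK
      rwa [← hid, idx_eq hX hi]
    · rintro ⟨h1, h2⟩
      exact ⟨h1, idx_eq hX h2⟩
  rw [this, Xf]

lemma Xdiag (hX : Ctx_s13 A a b c) (i : ZMod k) : Xf A a b c i i = 0 := by
  classical
  rw [Xf, Finset.card_eq_zero]
  ext u
  simp only [Finset.mem_inter, memFO, memFT, Finset.notMem_empty, iff_false, not_and]
  rintro ⟨hK, hA'⟩ hT
  rcases tri_cases hT with rfl | rfl | rfl
  · exact (hX.mab i).2.2 hA'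
  · exact hX.hA _ _ hA' hA'
  · exact (hX.mbc i).2.1 hA'

lemma Xsym (hX : Ctx_s13 A a b c) {i j : ZMod k} (hij : i ≠ j) :
    Xf A a b c i j + Xf A a b c j i = 3 := by
  classical
  rcases hX.tot hij (mtb i) (mtb j) with h | h
  · have e1 : FOf A a b c i ∩ FTf a b c j = {b j} := by
      ext u
      simp only [Finset.mem_inter, memFO, memFT, Finset.mem_singleton]
      constructor
      · rintro ⟨⟨hK, hA'⟩, hT⟩
        rcases tri_cases hT with rfl | rfl | rfl
        · exact absurd hA' (hX.hA _ _ (hX.pba hij h))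
        · rfl
        · exact absurd hA' (hX.hA _ _ (hX.pbc hij h))
      · rintro rfl
        exact ⟨⟨memKt j (mtb j), h⟩, mtb j⟩
    have e2 : FOf A a b c j ∩ FTf a b c i = {a i, c i} := by
      ext u
      simp only [Finset.mem_inter, memFO, memFT, Finset.mem_insert, Finset.mem_singleton]
      constructor
      · rintro ⟨⟨hK, hA'⟩, hT⟩
        rcases tri_cases hT with rfl | rfl | rfl
        · exact Or.inl rfl
        · exact absurd h (hX.hA _ _ hA')
        · exact Or.inr rfl
      · rintro (rfl | rfl)
        · exact ⟨⟨memKt i (mta i), hX.qba hij.symm h⟩, mta i⟩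
        · exact ⟨⟨memKt i (mtc i), hX.qbc hij.symm h⟩, mtc i⟩
    rw [Xf, Xf, e1, e2, Finset.card_singleton,
      Finset.card_insert_of_notMem (by simp [hX.hac i]), Finset.card_singleton]
  · have e1 : FOf A a b c i ∩ FTf a b c j = {a j, c j} := by
      ext u
      simp only [Finset.mem_inter, memFO, memFT, Finset.mem_insert, Finset.mem_singleton]
      constructor
      · rintro ⟨⟨hK, hA'⟩, hT⟩
        rcases tri_cases hT with rfl | rfl | rfl
        · exact Or.inl rfl
        · exact absurd h (hX.hA _ _ hA')
        · exact Or.inr rfl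
      · rintro (rfl | rfl)
        · exact ⟨⟨memKt j (mta j), hX.qba hij h⟩, mta j⟩
        · exact ⟨⟨memKt j (mtc j), hX.qbc hij h⟩, mtc j⟩
    have e2 : FOf A a b c j ∩ FTf a b c i = {b i} := by
      ext u
      simp only [Finset.mem_inter, memFO, memFT, Finset.mem_singleton]
      constructor
      · rintro ⟨⟨hK, hA'⟩, hT⟩
        rcases tri_cases hT with rfl | rfl | rfl
        · exact absurd hA' (hX.hA _ _ (hX.pba hij.symm h))
        · rfl
        · exact absurd hA' (hX.hA _ _ (hX.pbc hij.symm h))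
      · rintro rfl
        exact ⟨⟨memKt i (mtb i), h⟩, mtb i⟩
    rw [Xf, Xf, e1, e2, Finset.card_singleton,
      Finset.card_insert_of_notMem (by simp [hX.hac j]), Finset.card_singleton]

lemma Xpos (hX : Ctx_s13 A a b c) (i : ZMod k) : 1 ≤ Xf A a b c i (i+1) := by
  classical
  have hne : i ≠ i + 1 := fun h => hX.succNe i h.symm
  rw [Xf]
  apply Finset.card_pos.mpr
  rcases hX.tot hne (mtb i) (mtb (i+1)) with h | h
  · exact ⟨b (i+1), Finset.mem_inter.mpr
      ⟨memFO.mpr ⟨memKt _ (mtb _), h⟩, memFT.mpr (mtb _)⟩⟩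
  · exact ⟨a (i+1), Finset.mem_inter.mpr
      ⟨memFO.mpr ⟨memKt _ (mta _), hX.qba hne h⟩, memFT.mpr (mta _)⟩⟩

lemma Ecard (hX : Ctx_s13 A a b c) (i : ZMod k) :
    (FTf a b c (i+1) \ FOf A a b c i).card + Xf A a b c i (i+1) = 3 := by
  classical
  have h := Finset.card_sdiff_add_card_inter (FTf a b c (i+1)) (FOf A a b c i)
  rw [cardFT hX] at h
  rw [Xf, Finset.inter_comm]
  exact h

end Counting

section Main

variable [Fintype V] {A : V → V → Prop} {k : ℕ} {a b c : ZMod k → V}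

open scoped Classical

lemma hcontain (hX : Ctx_s13 A a b c) (i : ZMod k) :
    (Finset.univ.filter (fun u => u ∈ Kset a b c) : Finset V) ⊆
      insert (b i) ((FOf A a b c i ∪ (FTf a b c (i+1) \ FOf A a b c i)) ∪ FSf A a b c i) := by
  intro u hu
  have hKu : u ∈ Kset a b c := (Finset.mem_filter.mp hu).2
  by_cases h1 : u = b i
  · simp [h1]
  by_cases h2 : u ∈ FOf A a b c i
  · simp [h2]
  by_cases h3 : u ∈ FTf a b c (i+1)
  · have hsd : u ∈ FTf a b c (i+1) \ FOf A a b c i := Finset.mem_sdiff.mpr ⟨h3, h2⟩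
    simp only [Finset.mem_insert, Finset.mem_union]
    tauto
  have hnA : ¬ A (b i) u := fun hA' => h2 (memFO.mpr ⟨hKu, hA'⟩)
  obtain ⟨m, hm⟩ := memKi.mp hKu
  have hmi1 : m ≠ i + 1 := fun h => h3 (memFT.mpr (h ▸ hm))
  suffices hFS : u ∈ secondOutIn A (Kset a b c) (b i) by
    have : u ∈ FSf A a b c i := memFS.mpr hFS
    simp only [Finset.mem_insert, Finset.mem_union]
    tauto
  by_cases hmi : m = i
  · subst hmi
    rcases tri_cases hm with rfl | rfl | rfl
    · rcases hX.hpat m with p | p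
      · exact ⟨hKu, h1, hnA, b (m+1), memKt _ (mtb _), p.bb, p.ba⟩
      · exact ⟨hKu, h1, hnA, a (m+1), memKt _ (mta _), p.ba, p.aa⟩
    · exact absurd rfl h1
    · rcases hX.hpat m with p | p
      · exact ⟨hKu, h1, hnA, b (m+1), memKt _ (mtb _), p.bb, p.bc⟩
      · exact ⟨hKu, h1, hnA, a (m+1), memKt _ (mta _), p.ba, p.ac⟩
  have him : i ≠ m := fun h => hmi h.symm
  have hub : A u (b i) := by
    rcases hX.tot (fun h => hmi h : m ≠ i) hm (mtb i) with h | h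
    · exact h
    · exact absurd h hnA
  have hm1i : i ≠ m - 1 := fun h => hmi1 (by rw [h, sub_add_cancel])
  have e : m - 1 + 1 = m := sub_add_cancel m 1
  have hmm1 : m ≠ m - 1 := (hX.subOneNe m).symm
  refine ⟨hKu, h1, hnA, ?_⟩
  rcases tri_cases hm with rfl | rfl | rfl
  · -- u = a m
    have hbm : A (b i) (b m) := by
      rcases hX.tot him (mtb i) (mtb m) with h | h
      · exact h
      · exact absurd (hX.qba him h) hnA
    rcases hX.tot hm1i (mtb i) (mtb (m-1)) with hq | hq
    · rcases hX.hpat (m-1) with p | p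
      · have pba := p.ba; have psab := p.sab; rw [e] at pba psab
        exact absurd (⟨hX.triNe hmm1 (mtb m) (mta (m-1)), hX.hA _ _ pba,
          b i, hX.pba hm1i hq, hbm⟩ : SecondOut A (a (m-1)) (b m)) psab
      · have pba := p.ba; rw [e] at pba
        exact ⟨b (m-1), memKt _ (mtb _), hq, pba⟩
    · have hq2 : A (b i) (a (m-1)) := hX.qba hm1i hq
      rcases hX.hpat (m-1) with p | p
      · have paa := p.aa; rw [e] at paa
        exact ⟨a (m-1), memKt _ (mta _), hq2, paa⟩
      · have pbb := p.bb; have psbb := p.sbb; rw [e] at pbb psbb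
        exact absurd (⟨hX.triNe hmm1 (mtb m) (mtb (m-1)), hX.hA _ _ pbb,
          b i, hq, hbm⟩ : SecondOut A (b (m-1)) (b m)) psbb
  · -- u = b m
    have h1m : A (b i) (a m) := hX.qba him hub
    rcases hX.tot hm1i (mtb i) (mtb (m-1)) with hq | hq
    · rcases hX.hpat (m-1) with p | p
      · have pbb := p.bb; rw [e] at pbb
        exact ⟨b (m-1), memKt _ (mtb _), hq, pbb⟩
      · have paa := p.aa; have psaa := p.saa; rw [e] at paa psaa
        exact absurd (⟨hX.triNe hmm1 (mta m) (mta (m-1)), hX.hA _ _ paa,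
          b i, hX.pba hm1i hq, h1m⟩ : SecondOut A (a (m-1)) (a m)) psaa
    · have hq2 : A (b i) (a (m-1)) := hX.qba hm1i hq
      rcases hX.hpat (m-1) with p | p
      · have pab := p.ab; have psba := p.sba; rw [e] at pab psba
        exact absurd (⟨hX.triNe hmm1 (mta m) (mtb (m-1)), hX.hA _ _ pab,
          b i, hq, h1m⟩ : SecondOut A (b (m-1)) (a m)) psba
      · have pab := p.ab; rw [e] at pab
        exact ⟨a (m-1), memKt _ (mta _), hq2, pab⟩
  · -- u = c m
    have hbm : A (b i) (b m) := by
      rcases hX.tot him (mtb i) (mtb m) with h | h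
      · exact h
      · exact absurd (hX.qbc him h) hnA
    rcases hX.tot hm1i (mtb i) (mtb (m-1)) with hq | hq
    · rcases hX.hpat (m-1) with p | p
      · have pba := p.ba; have psab := p.sab; rw [e] at pba psab
        exact absurd (⟨hX.triNe hmm1 (mtb m) (mta (m-1)), hX.hA _ _ pba,
          b i, hX.pba hm1i hq, hbm⟩ : SecondOut A (a (m-1)) (b m)) psab
      · have pbc := p.bc; rw [e] at pbc
        exact ⟨b (m-1), memKt _ (mtb _), hq, pbc⟩
    · have hq2 : A (b i) (a (m-1)) := hX.qba hm1i hq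
      rcases hX.hpat (m-1) with p | p
      · have pacx := p.acx; rw [e] at pacx
        exact ⟨a (m-1), memKt _ (mta _), hq2, pacx⟩
      · have pbb := p.bb; have psbb := p.sbb; rw [e] at pbb psbb
        exact absurd (⟨hX.triNe hmm1 (mtb m) (mtb (m-1)), hX.hA _ _ pbb,
          b i, hq, hbm⟩ : SecondOut A (b (m-1)) (b m)) psbb

lemma mainCount (hX : Ctx_s13 A a b c) :
    ∃ t : ZMod k, (outIn A (Kset a b c) (b t)).ncard
      ≤ (secondOutIn A (Kset a b c) (b t)).ncard := by
  classical
  haveI : NeZero k := ⟨by have := hX.hk; omega⟩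
  by_contra hcon
  push_neg at hcon
  have hout : ∀ i, (outIn A (Kset a b c) (b i)).ncard = (FOf A a b c i).card := by
    intro i
    rw [← Set.ncard_coe_finset]
    congr 1
    ext u
    simp [outIn, memFO]
  have hsec : ∀ i, (secondOutIn A (Kset a b c) (b i)).ncard = (FSf A a b c i).card := by
    intro i
    rw [← Set.ncard_coe_finset]
    congr 1
    ext u
    simp [memFS]
  have hflip : ∀ i, (FSf A a b c i).card + 1 ≤ (FOf A a b c i).card := by
    intro i
    have := hcon i
    rw [hout i, hsec i] at this
    omega
  -- per index inequality
  have key : ∀ i, 3 * k + Xf A a b c i (i+1) ≤ 2 * (FOf A a b c i).card + 3 := by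
    intro i
    have hsub := Finset.card_le_card (hcontain hX i)
    have hins := Finset.card_insert_le (b i)
      ((FOf A a b c i ∪ (FTf a b c (i+1) \ FOf A a b c i)) ∪ FSf A a b c i)
    have hu1 := Finset.card_union_le
      (FOf A a b c i ∪ (FTf a b c (i+1) \ FOf A a b c i)) (FSf A a b c i)
    have hu2 := Finset.card_union_le (FOf A a b c i) (FTf a b c (i+1) \ FOf A a b c i)
    have hE := Ecard hX i
    have hfl := hflip i
    have hFK := cardFK hX
    omega
  have hsum := Finset.sum_le_sum (s := (Finset.univ : Finset (ZMod k)))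
    (fun i _ => key i)
  have hcards : (Finset.univ : Finset (ZMod k)).card = k := by
    rw [Finset.card_univ, ZMod.card]
  -- left side
  have hL : ∑ i : ZMod k, (3 * k + Xf A a b c i (i+1))
      = k * (3 * k) + ∑ i : ZMod k, Xf A a b c i (i+1) := by
    rw [Finset.sum_add_distrib, Finset.sum_const, hcards, smul_eq_mul]
  have hR : ∑ i : ZMod k, (2 * (FOf A a b c i).card + 3)
      = 2 * (∑ i : ZMod k, (FOf A a b c i).card) + 3 * k := by
    rw [Finset.sum_add_distrib, Finset.sum_const, hcards, smul_eq_mul, Finset.mul_sum,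
      mul_comm k 3]
  -- double counting
  have hinner : ∀ i : ZMod k, ∑ j : ZMod k, (Xf A a b c i j + Xf A a b c j i)
      = 3 * (k - 1) := by
    intro i
    rw [← Finset.sum_erase_add _ _ (Finset.mem_univ i), Xdiag hX i, add_zero]
    rw [Finset.sum_congr rfl (fun j hj => Xsym hX (Finset.mem_erase.mp hj).1.symm)]
    rw [Finset.sum_const, Finset.card_erase_of_mem (Finset.mem_univ i), hcards,
      smul_eq_mul]
    omega
  have h2G : 2 * (∑ i : ZMod k, (FOf A a b c i).card) = k * (3 * (k - 1)) := by
    have e1 : ∑ i : ZMod k, ∑ j : ZMod k, (Xf A a b c i j + Xf A a b c j i)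
        = 2 * (∑ i : ZMod k, (FOf A a b c i).card) := by
      rw [Finset.sum_congr rfl (fun i _ => Finset.sum_add_distrib),
        Finset.sum_add_distrib, Finset.sum_comm (f := fun i j => Xf A a b c j i)]
      rw [Finset.sum_congr rfl (fun i _ => (gdec hX i).symm), two_mul]
    rw [← e1, Finset.sum_congr rfl (fun i _ => hinner i), Finset.sum_const, hcards,
      smul_eq_mul]
  have hXk : k ≤ ∑ i : ZMod k, Xf A a b c i (i+1) := by
    calc k = ∑ _i : ZMod k, 1 := by rw [Finset.sum_const, hcards, smul_eq_mul, mul_one]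
      _ ≤ ∑ i : ZMod k, Xf A a b c i (i+1) := Finset.sum_le_sum (fun i _ => Xpos hX i)
  have hk2 := hX.hk
  have hmul : k * (3 * (k - 1)) + 3 * k = k * (3 * k) := by
    have h5 : 3 * (k - 1) + 3 = 3 * k := by omega
    calc k * (3 * (k - 1)) + 3 * k = k * (3 * (k - 1) + 3) := by ring
      _ = k * (3 * k) := by rw [h5]
  rw [hL, hR, h2G] at hsum
  have : False := by
    have hks : k * (3 * (k-1)) + 3 * k = k * (3 * k) := hmul
    omega
  exact this

end Main

/-- Proposition 4.14: some `b_t` has the SNP in `D[K(C)]`. -/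
theorem stmt13 {V : Type*} [Fintype V] (A : V → V → Prop) (hA : Oriented A)
    (hP : MissingPaths2 A) (k : ℕ) (a b c : ZMod k → V)
    (hC : IsDoubleCycle A k a b c) (K : Set V) (hK : K = Kset a b c) :
    ∃ t : ZMod k,
      (outIn A K (b t)).ncard ≤ (secondOutIn A K (b t)).ncard := by
  obtain ⟨hk, htri, hdis, hlos⟩ := hC
  subst hK
  haveI : NeZero k := ⟨by omega⟩
  haveI : Fact (1 < k) := ⟨by omega⟩
  have hfin : ∀ v : V, ({w | IsMissing A v w} : Set V).Finite := fun v => Set.toFinite _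
  have hmb2 : ∀ i, mdeg A (b i) = 2 := by
    intro i
    rcases hP _ _ (htri i).1 with ⟨_, h2⟩ | ⟨_, h2⟩
    · exact h2
    · exfalso
      have hsub : ({a i, c i} : Set V) ⊆ {w | IsMissing A (b i) w} := by
        rintro w (rfl | rfl)
        · exact (htri i).1.symm'
        · exact (htri i).2.1
      have h3 : ({a i, c i} : Set V).ncard ≤ mdeg A (b i) :=
        Set.ncard_le_ncard hsub (hfin _)
      rw [Set.ncard_pair (htri i).2.2] at h3
      omega
  have hma1 : ∀ i, mdeg A (a i) = 1 := by
    intro i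
    rcases hP _ _ (htri i).1 with ⟨h1, _⟩ | ⟨_, h2⟩
    · exact h1
    · have := hmb2 i; omega
  have hmc1 : ∀ i, mdeg A (c i) = 1 := by
    intro i
    rcases hP _ _ (htri i).2.1 with ⟨h1, _⟩ | ⟨_, h2⟩
    · have := hmb2 i; omega
    · exact h2
  have mia : ∀ i w, IsMissing A (a i) w → w = b i := by
    intro i w hw
    obtain ⟨x, hx⟩ := Set.ncard_eq_one.mp (hma1 i)
    have hw' : w ∈ {w | IsMissing A (a i) w} := hw
    have hb : b i ∈ {w | IsMissing A (a i) w} := (htri i).1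
    rw [hx] at hw' hb
    exact hw'.trans hb.symm
  have mic : ∀ i w, IsMissing A (c i) w → w = b i := by
    intro i w hw
    obtain ⟨x, hx⟩ := Set.ncard_eq_one.mp (hmc1 i)
    have hw' : w ∈ {w | IsMissing A (c i) w} := hw
    have hb : b i ∈ {w | IsMissing A (c i) w} := (htri i).2.1.symm'
    rw [hx] at hw' hb
    exact hw'.trans hb.symm
  have mib : ∀ i w, IsMissing A (b i) w → w = a i ∨ w = c i := by
    intro i w hw
    have hsub : ({a i, c i} : Set V) ⊆ {w | IsMissing A (b i) w} := by
      rintro w (rfl | rfl)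
      · exact (htri i).1.symm'
      · exact (htri i).2.1
    have heq : ({a i, c i} : Set V) = {w | IsMissing A (b i) w} :=
      Set.eq_of_subset_of_ncard_le hsub
        (by rw [Set.ncard_pair (htri i).2.2]; exact le_of_eq (hmb2 i)) (hfin _)
    have hw' : w ∈ ({a i, c i} : Set V) := by rw [heq]; exact hw
    rcases hw' with h | h
    · exact Or.inl h
    · exact Or.inr h
  have triNe : ∀ {i j : ZMod k}, i ≠ j → ∀ {u v : V},
      u ∈ tri a b c i → v ∈ tri a b c j → u ≠ v := by
    intro i j hij u v hu hv h
    exact Set.disjoint_left.mp (hdis i j hij) hu (h ▸ hv)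
  have tot : ∀ {i j : ZMod k}, i ≠ j → ∀ {u v : V},
      u ∈ tri a b c i → v ∈ tri a b c j → A u v ∨ A v u := by
    intro i j hij u v hu hv
    by_contra h
    push_neg at h
    have hm : IsMissing A u v := ⟨triNe hij hu hv, h.1, h.2⟩
    rcases tri_cases hu with rfl | rfl | rfl
    · exact triNe hij (mtb i) hv (mia i v hm).symm
    · rcases mib i v hm with rfl | rfl
      · exact triNe hij (mta i) hv rfl
      · exact triNe hij (mtc i) hv rfl
    · exact triNe hij (mtb i) hv (mic i v hm).symm
  have hsucc : ∀ i : ZMod k, i ≠ i + 1 := by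
    intro i h
    have h1 : (1 : ZMod k) ≠ 0 := one_ne_zero
    apply h1
    have h2 : i + 1 = i + 0 := by rw [add_zero]; exact h.symm
    exact add_left_cancel h2
  have hpat : ∀ i, Pat1 A a b c i ∨ Pat2 A a b c i := by
    intro i
    have hne := hsucc i
    obtain ⟨L1, L2, L3, L4⟩ := hlos i
    rcases L1 with ⟨h1, h2, h3, h4, h5, h6⟩ | ⟨h1, h2, h3, h4, h5, h6⟩
    · left
      rcases L2 with ⟨g1, g2, g3, g4, g5, g6⟩ | ⟨g1, g2, g3, g4, g5, g6⟩
      · exact absurd g1 h3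
      rcases L3 with ⟨f1, f2, f3, f4, f5, f6⟩ | ⟨f1, f2, f3, f4, f5, f6⟩
      · exact absurd f1 h5
      rcases L4 with ⟨e1, e2, e3, e4, e5, e6⟩ | ⟨e1, e2, e3, e4, e5, e6⟩
      · exact ⟨h2,
          (tot hne (mtb i) (mta (i+1))).resolve_left h5,
          (tot hne (mtb i) (mtc (i+1))).resolve_left g5,
          (tot hne (mta i) (mtb (i+1))).resolve_left h3,
          (tot hne (mtc i) (mtb (i+1))).resolve_left f5,
          h1, g1, f2, e2, h6, g6, h4, f6⟩
      · exact absurd e1 g5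
    · right
      rcases L2 with ⟨g1, g2, g3, g4, g5, g6⟩ | ⟨g1, g2, g3, g4, g5, g6⟩
      · rcases L3 with ⟨f1, f2, f3, f4, f5, f6⟩ | ⟨f1, f2, f3, f4, f5, f6⟩
        · rcases L4 with ⟨e1, e2, e3, e4, e5, e6⟩ | ⟨e1, e2, e3, e4, e5, e6⟩
          · exact absurd e1 h5
          · exact ⟨(tot hne (mtb i) (mtb (i+1))).resolve_left h5,
              h2, g2, h1, f2,
              (tot hne (mta i) (mta (i+1))).resolve_left h3,
              (tot hne (mtc i) (mta (i+1))).resolve_left f5,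
              (tot hne (mta i) (mtc (i+1))).resolve_left g3,
              (tot hne (mtc i) (mtc (i+1))).resolve_left e5,
              h6, h4, g4, f6, e6⟩
        · exact absurd f1 h5
      · exact absurd g2 h5
  have hX : Ctx_s13 A a b c :=
    ⟨hA, hk, fun i => (htri i).1, fun i => (htri i).2.1,
      fun i => (htri i).2.2, hdis, mia, mib, mic, hpat⟩
  exact mainCount hX

end SSNC
end

section
/- Let D be a digraph and let {a_1,b_1}, …, {a_k,b_k} (k ≥ 2) be pairwise vertex-disjoint missing edges of D such that for every i ∈ {1,…,k−1}: a_i→a_{i+1}, b_i→b_{i+1}, b_{i+1} ∉ N⁺(a_i) ∪ N⁺⁺(a_i), and a_{i+1} ∉ N⁺(b_i) ∪ N⁺⁺(b_i); and such that {a_k,b_k} loses to {a_1,b_1}. Suppose further that within K(C) = {a_i, b_i : 1 ≤ i ≤ k} the only missing edges of D are the pairs {a_i,b_i} (so the induced subdigraph D[K(C)] is a tournament missing a matching). Then: (i) if k is odd, a_k→a_1 and b_k→b_1; (ii) if k is even, a_k→b_1 and b_k→a_1. -/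
namespace SSNC

variable {V : Type*}

/-- Lemma 4.16: the closing arcs of a cycle of `Δ(D)` inside a tournament missing a
matching, according to the parity of the length. (Indices `1,…,k` are represented by
`0,…,k-1`.) -/
theorem stmt14 {V : Type*} [Fintype V] (A : V → V → Prop) (hA : Oriented A)
    (k : ℕ) (hk : 2 ≤ k) (a b : ℕ → V)
    (hm : ∀ i < k, IsMissing A (a i) (b i))
    (hdisj : ∀ i < k, ∀ j < k, i ≠ j →
      Disjoint ({a i, b i} : Set V) ({a j, b j} : Set V))
    (hchain : ∀ i, i + 1 < k → LosesOrd A (a i) (b i) (a (i + 1)) (b (i + 1)))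
    (hcycle : Loses A (a (k - 1)) (b (k - 1)) (a 0) (b 0))
    (K : Set V) (hK : K = {w | ∃ i < k, w = a i ∨ w = b i})
    (htourn : ∀ u ∈ K, ∀ v ∈ K, IsMissing A u v →
      ∃ i < k, ({u, v} : Set V) = ({a i, b i} : Set V)) :
    (Odd k → A (a (k - 1)) (a 0) ∧ A (b (k - 1)) (b 0)) ∧
    (Even k → A (a (k - 1)) (b 0) ∧ A (b (k - 1)) (a 0)) := by
  -- distinctness of vertices of different pairs
  have hne : ∀ i < k, ∀ j < k, i ≠ j → ∀ u, (u = a i ∨ u = b i) →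
      ∀ v, (v = a j ∨ v = b j) → u ≠ v := by
    intro i hi j hj hij u hu v hv huv
    have hd := hdisj i hi j hj hij
    have h1 : u ∈ ({a i, b i} : Set V) := by rcases hu with h | h <;> simp [h]
    have h2 : u ∈ ({a j, b j} : Set V) := by rcases hv with h | h <;> simp [huv, h]
    exact Set.disjoint_left.mp hd h1 h2
  have hsame : ∀ i < k, ∀ m < k, ∀ u, (u = a i ∨ u = b i) → (u = a m ∨ u = b m) → i = m := by
    intro i hi m hm u hu hum
    by_contra hne'
    exact hne i hi m hm hne' u hu u hum rfl
  -- vertices in different pairs are adjacent (tournament property)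
  have adj : ∀ i < k, ∀ j < k, i ≠ j → ∀ u, (u = a i ∨ u = b i) →
      ∀ v, (v = a j ∨ v = b j) → ¬ A u v → A v u := by
    intro i hi j hj hij u hu v hv huv
    by_contra hvu
    have hKu : u ∈ K := by rw [hK]; exact ⟨i, hi, hu⟩
    have hKv : v ∈ K := by rw [hK]; exact ⟨j, hj, hv⟩
    have hmis : IsMissing A u v := ⟨hne i hi j hj hij u hu v hv, huv, hvu⟩
    obtain ⟨m, hm, hset⟩ := htourn u hKu v hKv hmis
    have hum : u ∈ ({a m, b m} : Set V) := by rw [← hset]; simp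
    have hvm : v ∈ ({a m, b m} : Set V) := by rw [← hset]; simp
    have him : i = m := hsame i hi m hm u hu (by simpa using hum)
    have hjm : j = m := hsame j hj m hm v hv (by simpa using hvm)
    exact hij (him.trans hjm.symm)
  -- main induction on the distance d between two pairs
  have main : ∀ d, 1 ≤ d → ∀ i, i + d < k →
      (Odd d → A (a (i + d)) (b i) ∧ A (b (i + d)) (a i)) ∧
      (Even d → A (a (i + d)) (a i) ∧ A (b (i + d)) (b i)) := by
    intro d
    induction d with
    | zero => intro h; omega
    | succ d ih =>
      intro _ i hik
      by_cases hd : d = 0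
      · subst hd
        obtain ⟨h1, h2, h3, h4, h5, h6⟩ := hchain i (by omega)
        refine ⟨fun _ => ⟨?_, ?_⟩, fun he => absurd he (by decide)⟩
        · exact adj i (by omega) (i + 1) hik (by omega) (b i) (Or.inr rfl)
            (a (i + 1)) (Or.inl rfl) h5
        · exact adj i (by omega) (i + 1) hik (by omega) (a i) (Or.inl rfl)
            (b (i + 1)) (Or.inr rfl) h3
      · have hik' : i + d < k := by omega
        have IH := ih (by omega) i hik'
        obtain ⟨h1, h2, h3, h4, h5, h6⟩ := hchain (i + d) (by omega)
        have hab : a (i + d + 1) ≠ b (i + d) :=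
          hne (i + d + 1) (by omega) (i + d) hik' (by omega)
            (a (i + d + 1)) (Or.inl rfl) (b (i + d)) (Or.inr rfl)
        have hba : b (i + d + 1) ≠ a (i + d) :=
          hne (i + d + 1) (by omega) (i + d) hik' (by omega)
            (b (i + d + 1)) (Or.inr rfl) (a (i + d)) (Or.inl rfl)
        rcases Nat.even_or_odd d with hdE | hdO
        · -- d even, so d+1 odd : cross arcs
          obtain ⟨ha, hb⟩ := IH.2 hdE
          have g1 : A (a (i + d + 1)) (b i) := by
            refine adj i (by omega) (i + d + 1) (by omega) (by omega)
              (b i) (Or.inr rfl) (a (i + d + 1)) (Or.inl rfl) ?_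
            intro hbi
            exact h6 ⟨hab, h5, b i, hb, hbi⟩
          have g2 : A (b (i + d + 1)) (a i) := by
            refine adj i (by omega) (i + d + 1) (by omega) (by omega)
              (a i) (Or.inl rfl) (b (i + d + 1)) (Or.inr rfl) ?_
            intro hai
            exact h4 ⟨hba, h3, a i, ha, hai⟩
          exact ⟨fun _ => ⟨g1, g2⟩, fun he => absurd hdE (by
            rw [Nat.even_add_one] at he; exact fun h => he h)⟩
        · -- d odd, so d+1 even : same-letter arcs
          obtain ⟨ha, hb⟩ := IH.1 hdO
          have g1 : A (a (i + d + 1)) (a i) := by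
            refine adj i (by omega) (i + d + 1) (by omega) (by omega)
              (a i) (Or.inl rfl) (a (i + d + 1)) (Or.inl rfl) ?_
            intro hai
            exact h6 ⟨hab, h5, a i, hb, hai⟩
          have g2 : A (b (i + d + 1)) (b i) := by
            refine adj i (by omega) (i + d + 1) (by omega) (by omega)
              (b i) (Or.inr rfl) (b (i + d + 1)) (Or.inr rfl) ?_
            intro hbi
            exact h4 ⟨hba, h3, b i, ha, hbi⟩
          refine ⟨fun ho => absurd ho ?_, fun _ => ⟨g1, g2⟩⟩
          have := Nat.odd_iff.mp hdO
          rw [Nat.odd_iff]; omega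
  have hmain := main (k - 1) (by omega) 0 (by omega)
  rw [Nat.zero_add] at hmain
  constructor
  · intro hodd
    have he : Even (k - 1) := by
      have := Nat.odd_iff.mp hodd
      rw [Nat.even_iff]; omega
    exact hmain.2 he
  · intro heven
    have ho : Odd (k - 1) := by
      have := Nat.even_iff.mp heven
      rw [Nat.odd_iff]; omega
    exact hmain.1 ho

end SSNC
end

section
/- Let D be a tournament missing disjoint paths of length 2 and let C = a_1b_1c_1, …, a_kb_kc_k be a double cycle in Δ(D). Then K(C) is an interval of D: for all u, v ∈ K(C), N⁺(u) ∖ K(C) = N⁺(v) ∖ K(C) and N⁻(u) ∖ K(C) = N⁻(v) ∖ K(C). -/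
namespace SSNC

variable {V : Type*}

/-- Proposition 4.17: `K(C)` is an interval of `D` for any double cycle `C`. -/
theorem stmt15 {V : Type*} [Fintype V] (A : V → V → Prop) (hA : Oriented A)
    (hP : MissingPaths2 A) (k : ℕ) (a b c : ZMod k → V)
    (hC : IsDoubleCycle A k a b c) (K : Set V) (hK : K = Kset a b c) :
    ∀ u ∈ K, ∀ v ∈ K,
      ({w | A u w} : Set V) \ K = ({w | A v w} : Set V) \ K ∧
      ({w | A w u} : Set V) \ K = ({w | A w v} : Set V) \ K := by
  classical
  subst hK
  obtain ⟨hk2, hmiss, hdisj, hlose⟩ := hC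
  haveI : NeZero k := ⟨by omega⟩
  -- basic facts about the missing paths
  have hab : ∀ i, IsMissing A (a i) (b i) := fun i => (hmiss i).1
  have hbc : ∀ i, IsMissing A (b i) (c i) := fun i => (hmiss i).2.1
  have hac : ∀ i, a i ≠ c i := fun i => (hmiss i).2.2
  have msymm : ∀ {x y : V}, IsMissing A x y → IsMissing A y x := by
    rintro x y ⟨h1, h2, h3⟩; exact ⟨h1.symm, h3, h2⟩
  have hsubb : ∀ i, ({a i, c i} : Set V) ⊆ {w | IsMissing A (b i) w} := by
    intro i z hz
    simp only [Set.mem_insert_iff, Set.mem_singleton_iff] at hz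
    rcases hz with rfl | rfl
    · exact msymm (hab i)
    · exact hbc i
  have hdeg : ∀ i, mdeg A (a i) = 1 ∧ mdeg A (b i) = 2 ∧ mdeg A (c i) = 1 := by
    intro i
    have h2le : 2 ≤ mdeg A (b i) := by
      have := Set.ncard_le_ncard (hsubb i) (Set.toFinite _)
      rwa [Set.ncard_pair (hac i)] at this
    rcases hP _ _ (hab i) with ⟨h1, h2⟩ | ⟨h1, h2⟩
    · rcases hP _ _ (hbc i) with ⟨h3, h4⟩ | ⟨h3, h4⟩
      · omega
      · exact ⟨h1, h2, h4⟩
    · omega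
  have hNa : ∀ i, {w | IsMissing A (a i) w} = {b i} := by
    intro i
    obtain ⟨x, hx⟩ := Set.ncard_eq_one.mp (hdeg i).1
    have hb : b i ∈ {w | IsMissing A (a i) w} := hab i
    rw [hx] at hb ⊢
    rw [Set.mem_singleton_iff] at hb
    rw [hb]
  have hNc : ∀ i, {w | IsMissing A (c i) w} = {b i} := by
    intro i
    obtain ⟨x, hx⟩ := Set.ncard_eq_one.mp (hdeg i).2.2
    have hb : b i ∈ {w | IsMissing A (c i) w} := msymm (hbc i)
    rw [hx] at hb ⊢
    rw [Set.mem_singleton_iff] at hb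
    rw [hb]
  have hNb : ∀ i, {w | IsMissing A (b i) w} = {a i, c i} := by
    intro i
    exact (Set.eq_of_subset_of_ncard_le (hsubb i)
      (by rw [Set.ncard_pair (hac i)]; exact le_of_eq (hdeg i).2.1) (Set.toFinite _)).symm
  -- adjacency: each vertex of path i is adjacent to every vertex outside path i
  have hadj : ∀ (i : ZMod k) v z, (v = a i ∨ v = b i ∨ v = c i) →
      z ≠ a i → z ≠ b i → z ≠ c i → A v z ∨ A z v := by
    intro i v z hv hza hzb hzc
    by_contra h
    push_neg at h
    rcases hv with rfl | rfl | rfl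
    · have hm : z ∈ {w | IsMissing A (a i) w} := ⟨fun he => hza he.symm, h.1, h.2⟩
      rw [hNa i] at hm
      exact hzb hm
    · have hm : z ∈ {w | IsMissing A (b i) w} := ⟨fun he => hzb he.symm, h.1, h.2⟩
      rw [hNb i] at hm
      simp only [Set.mem_insert_iff, Set.mem_singleton_iff] at hm
      rcases hm with rfl | rfl
      · exact hza rfl
      · exact hzc rfl
    · have hm : z ∈ {w | IsMissing A (c i) w} := ⟨fun he => hzc he.symm, h.1, h.2⟩
      rw [hNc i] at hm
      exact hzb hm
  -- distinctness of vertices of different paths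
  have hne : ∀ (i j : ZMod k), i ≠ j → ∀ p q, (p = a i ∨ p = b i ∨ p = c i) →
      (q = a j ∨ q = b j ∨ q = c j) → p ≠ q := by
    intro i j hij p q hp hq heq
    subst heq
    have hpi : p ∈ ({a i, b i, c i} : Set V) := by
      rcases hp with rfl | rfl | rfl <;> simp
    have hpj : p ∈ ({a j, b j, c j} : Set V) := by
      rcases hq with rfl | rfl | rfl <;> simp
    exact Set.disjoint_left.mp (hdisj i j hij) hpi hpj
  -- adjacency between different paths
  have hadj2 : ∀ (i j : ZMod k), i ≠ j → ∀ p q, (p = a i ∨ p = b i ∨ p = c i) →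
      (q = a j ∨ q = b j ∨ q = c j) → A p q ∨ A q p := by
    intro i j hij p q hp hq
    have h1 := hne i j hij p (a j) hp (Or.inl rfl)
    have h2 := hne i j hij p (b j) hp (Or.inr (Or.inl rfl))
    have h3 := hne i j hij p (c j) hp (Or.inr (Or.inr rfl))
    exact (hadj j q p hq h1 h2 h3).symm
  -- ZMod arithmetic helpers
  have hcast : ∀ m : ℕ, 1 ≤ m → m ≤ k - 1 → (m : ZMod k) ≠ 0 := by
    intro m h1 h2 h0
    rw [ZMod.natCast_eq_zero_iff] at h0
    have := Nat.le_of_dvd (by omega) h0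
    omega
  have hone : (1 : ZMod k) ≠ 0 := by
    have := hcast 1 le_rfl (by omega)
    simpa using this
  have hisucc : ∀ i : ZMod k, i ≠ i + 1 := by
    intro i h
    exact hone (left_eq_add.mp h)
  have iter : ∀ PL : ZMod k → Prop, (∀ i, PL i → PL (i + 1)) → ∀ i, PL i → ∀ j, PL j := by
    intro PL hstep i hi j
    have hn : ∀ n : ℕ, PL (i + n) := by
      intro n
      induction n with
      | zero => simpa using hi
      | succ m ih =>
        have h1 : ((m + 1 : ℕ) : ZMod k) = (m : ZMod k) + 1 := by push_cast; ring
        rw [h1, ← add_assoc]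
        exact hstep _ ih
    have h2 := hn (j - i).val
    rwa [ZMod.natCast_rightInverse (j - i), show i + (j - i) = j by ring] at h2
  -- the main claim: any vertex outside K relates the same way to all of K
  have main : ∀ w, w ∉ Kset a b c → ∀ p, p ∈ Kset a b c → ∀ q, q ∈ Kset a b c →
      (A p w ↔ A q w) := by
    intro w hw p hp q hq
    have hwne : ∀ i : ZMod k, w ≠ a i ∧ w ≠ b i ∧ w ≠ c i := by
      intro i
      refine ⟨?_, ?_, ?_⟩ <;> intro h <;> exact hw ⟨i, by simp [h]⟩
    have hXadj : ∀ (i : ZMod k) v, (v = a i ∨ v = b i ∨ v = c i) → A v w ∨ A w v := by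
      intro i v hv
      exact hadj i v w hv (hwne i).1 (hwne i).2.1 (hwne i).2.2
    -- core consequence of an ordered losing relation
    have core : ∀ u v x y : V, LosesOrd A u v x y → y ≠ u → x ≠ v →
        (A y w ∨ A w y) → (A x w ∨ A w x) →
        (A u w → A y w) ∧ (A v w → A x w) ∧
        (∀ z, ¬(A u z ∧ A z y)) ∧ (∀ z, ¬(A v z ∧ A z x)) := by
      rintro u v x y ⟨hux, hvy, huy, hsy, hvx, hsx⟩ hyu hxv hyw hxw
      have f1 : ∀ z, ¬(A u z ∧ A z y) := fun z hz => hsy ⟨hyu, huy, z, hz.1, hz.2⟩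
      have f2 : ∀ z, ¬(A v z ∧ A z x) := fun z hz => hsx ⟨hxv, hvx, z, hz.1, hz.2⟩
      refine ⟨?_, ?_, f1, f2⟩
      · intro huw
        rcases hyw with h | h
        · exact h
        · exact absurd ⟨huw, h⟩ (f1 w)
      · intro hvw
        rcases hxw with h | h
        · exact h
        · exact absurd ⟨hvw, h⟩ (f2 w)
    have steps : ∀ u v x y : V, Loses A u v x y → y ≠ u → x ≠ v → x ≠ u → y ≠ v →
        (A x w ∨ A w x) → (A y w ∨ A w y) →
        ((A u w ∨ A v w) → (A x w ∨ A y w)) ∧ ((A u w ∧ A v w) → A x w ∧ A y w) := by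
      rintro u v x y (h | h) hyu hxv hxu hyv hxw hyw
      · obtain ⟨c1, c2, -, -⟩ := core u v x y h hyu hxv hyw hxw
        exact ⟨fun hh => hh.elim (fun h' => Or.inr (c1 h')) (fun h' => Or.inl (c2 h')),
               fun hh => ⟨c2 hh.2, c1 hh.1⟩⟩
      · obtain ⟨c1, c2, -, -⟩ := core u v y x h hxu hyv hxw hyw
        exact ⟨fun hh => hh.elim (fun h' => Or.inl (c1 h')) (fun h' => Or.inr (c2 h')),
               fun hh => ⟨c1 hh.1, c2 hh.2⟩⟩
    have go2 : ∀ i : ZMod k, ∀ u v x y : V, Loses A u v x y →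
        (u = a i ∨ u = b i ∨ u = c i) → (v = a i ∨ v = b i ∨ v = c i) →
        (x = a (i+1) ∨ x = b (i+1) ∨ x = c (i+1)) →
        (y = a (i+1) ∨ y = b (i+1) ∨ y = c (i+1)) →
        ((A u w ∨ A v w) → (A x w ∨ A y w)) ∧ ((A u w ∧ A v w) → A x w ∧ A y w) := by
      intro i u v x y hl tu tv tx ty
      have hij := hisucc i
      exact steps u v x y hl
        (hne (i+1) i (Ne.symm hij) y u ty tu) (hne (i+1) i (Ne.symm hij) x v tx tv)
        (hne (i+1) i (Ne.symm hij) x u tx tu) (hne (i+1) i (Ne.symm hij) y v ty tv)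
        (hXadj (i+1) x tx) (hXadj (i+1) y ty)
    have Pstep : ∀ i : ZMod k,
        ((A (a i) w ∨ A (b i) w) ∨ (A (b i) w ∨ A (c i) w)) →
        (A (a (i+1)) w ∨ A (b (i+1)) w) ∧ (A (b (i+1)) w ∨ A (c (i+1)) w) := by
      intro i hi
      obtain ⟨l1, l2, l3, l4⟩ := hlose i
      rcases hi with hi | hi
      · exact ⟨(go2 i _ _ _ _ l1 (Or.inl rfl) (Or.inr (Or.inl rfl)) (Or.inl rfl)
                 (Or.inr (Or.inl rfl))).1 hi,
               (go2 i _ _ _ _ l2 (Or.inl rfl) (Or.inr (Or.inl rfl)) (Or.inr (Or.inl rfl))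
                 (Or.inr (Or.inr rfl))).1 hi⟩
      · exact ⟨(go2 i _ _ _ _ l3 (Or.inr (Or.inl rfl)) (Or.inr (Or.inr rfl)) (Or.inl rfl)
                 (Or.inr (Or.inl rfl))).1 hi,
               (go2 i _ _ _ _ l4 (Or.inr (Or.inl rfl)) (Or.inr (Or.inr rfl)) (Or.inr (Or.inl rfl))
                 (Or.inr (Or.inr rfl))).1 hi⟩
    have Qstep : ∀ i : ZMod k,
        ((A (a i) w ∧ A (b i) w) ∨ (A (b i) w ∧ A (c i) w)) →
        A (a (i+1)) w ∧ A (b (i+1)) w ∧ A (c (i+1)) w := by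
      intro i hi
      obtain ⟨l1, l2, l3, l4⟩ := hlose i
      rcases hi with hi | hi
      · have h1 := (go2 i _ _ _ _ l1 (Or.inl rfl) (Or.inr (Or.inl rfl)) (Or.inl rfl)
          (Or.inr (Or.inl rfl))).2 hi
        have h2 := (go2 i _ _ _ _ l2 (Or.inl rfl) (Or.inr (Or.inl rfl)) (Or.inr (Or.inl rfl))
          (Or.inr (Or.inr rfl))).2 hi
        exact ⟨h1.1, h1.2, h2.2⟩
      · have h1 := (go2 i _ _ _ _ l3 (Or.inr (Or.inl rfl)) (Or.inr (Or.inr rfl)) (Or.inl rfl)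
          (Or.inr (Or.inl rfl))).2 hi
        have h2 := (go2 i _ _ _ _ l4 (Or.inr (Or.inl rfl)) (Or.inr (Or.inr rfl))
          (Or.inr (Or.inl rfl)) (Or.inr (Or.inr rfl))).2 hi
        exact ⟨h1.1, h1.2, h2.2⟩
    obtain ⟨i₁, hp⟩ := hp
    obtain ⟨i₂, hq⟩ := hq
    by_cases hex : ∃ i : ZMod k, A (a i) w ∨ A (b i) w ∨ A (c i) w
    case neg =>
      push_neg at hex
      have h1 : ¬ A p w := by
        rcases hp with rfl | rfl | rfl
        exacts [(hex i₁).1, (hex i₁).2.1, (hex i₁).2.2]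
      have h2 : ¬ A q w := by
        rcases hq with rfl | rfl | rfl
        exacts [(hex i₂).1, (hex i₂).2.1, (hex i₂).2.2]
      exact iff_of_false h1 h2
    case pos =>
      obtain ⟨i0, h0⟩ := hex
      have hP0 : ((A (a i0) w ∨ A (b i0) w) ∨ (A (b i0) w ∨ A (c i0) w)) := by
        rcases h0 with h | h | h
        · exact Or.inl (Or.inl h)
        · exact Or.inl (Or.inr h)
        · exact Or.inr (Or.inr h)
      have hPall : ∀ j, (A (a j) w ∨ A (b j) w) ∧ (A (b j) w ∨ A (c j) w) :=
        iter (fun j => (A (a j) w ∨ A (b j) w) ∧ (A (b j) w ∨ A (c j) w))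
          (fun i hi => Pstep i (Or.inl hi.1)) (i0 + 1) (Pstep i0 hP0)
      by_cases hQ : ∀ i : ZMod k, A (a i) w ∧ A (b i) w ∧ A (c i) w
      · have h1 : A p w := by
          rcases hp with rfl | rfl | rfl
          exacts [(hQ i₁).1, (hQ i₁).2.1, (hQ i₁).2.2]
        have h2 : A q w := by
          rcases hq with rfl | rfl | rfl
          exacts [(hQ i₂).1, (hQ i₂).2.1, (hQ i₂).2.2]
        exact iff_of_true h1 h2
      · exfalso
        rw [not_forall] at hQ
        obtain ⟨iq, hiq⟩ := hQ
        have hnQ : ∀ i : ZMod k, ¬(A (a i) w ∧ A (b i) w) ∧ ¬(A (b i) w ∧ A (c i) w) := by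
          intro i
          constructor <;> intro hh
          · exact hiq (iter (fun j => A (a j) w ∧ A (b j) w ∧ A (c j) w)
              (fun i' hi' => Qstep i' (Or.inl ⟨hi'.1, hi'.2.1⟩)) (i + 1)
              (Qstep i (Or.inl hh)) iq)
          · exact hiq (iter (fun j => A (a j) w ∧ A (b j) w ∧ A (c j) w)
              (fun i' hi' => Qstep i' (Or.inl ⟨hi'.1, hi'.2.1⟩)) (i + 1)
              (Qstep i (Or.inr hh)) iq)
        -- the refined (labeled) consequence of losing, in the exactly-one case
        have pa : ∀ u v x y : V, Loses A u v x y → y ≠ u → x ≠ v → x ≠ u → y ≠ v →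
            (A u y ∨ A y u) → (A v x ∨ A x v) → (A u x ∨ A x u) → (A v y ∨ A y v) →
            (A x w ∨ A w x) → (A y w ∨ A w y) →
            ∀ q', ((q' = u ∧ ¬ A v w) ∨ (q' = v ∧ ¬ A u w)) → A q' w →
            ∀ p', ((p' = x ∧ ¬ A y w) ∨ (p' = y ∧ ¬ A x w)) → A p' w →
            A p' q' ∧ ∀ z, ¬(A q' z ∧ A z p') := by
          rintro u v x y hl hyu hxv hxu hyv auy avx aux avy hxw hyw q' hqc hqw p' hpc hpw
          rcases hl with h | h
          · obtain ⟨c1, c2, f1, f2⟩ := core u v x y h hyu hxv hyw hxw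
            obtain ⟨hux, hvy, huy, -, hvx, -⟩ := h
            rcases hqc with ⟨rfl, hnv⟩ | ⟨rfl, hnu⟩
            · have hy := c1 hqw
              rcases hpc with ⟨rfl, hny⟩ | ⟨rfl, -⟩
              · exact absurd hy hny
              · refine ⟨?_, f1⟩
                rcases auy with h' | h'
                · exact absurd h' huy
                · exact h'
            · have hx := c2 hqw
              rcases hpc with ⟨rfl, -⟩ | ⟨rfl, hnx⟩
              · refine ⟨?_, f2⟩
                rcases avx with h' | h'
                · exact absurd h' hvx
                · exact h'
              · exact absurd hx hnx
          · obtain ⟨c1, c2, f1, f2⟩ := core u v y x h hxu hyv hxw hyw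
            obtain ⟨huy2, hvx2, hux2, -, hvy2, -⟩ := h
            rcases hqc with ⟨rfl, hnv⟩ | ⟨rfl, hnu⟩
            · have hx := c1 hqw
              rcases hpc with ⟨rfl, -⟩ | ⟨rfl, hnx⟩
              · refine ⟨?_, f1⟩
                rcases aux with h' | h'
                · exact absurd h' hux2
                · exact h'
              · exact absurd hx hnx
            · have hy := c2 hqw
              rcases hpc with ⟨rfl, hny⟩ | ⟨rfl, -⟩
              · exact absurd hy hny
              · refine ⟨?_, f2⟩
                rcases avy with h' | h'
                · exact absurd h' hvy2
                · exact h'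
        have pair_arc : ∀ (i : ZMod k) p' q',
            (p' = a (i+1) ∨ p' = b (i+1) ∨ p' = c (i+1)) → A p' w →
            (q' = a i ∨ q' = b i ∨ q' = c i) → A q' w →
            A p' q' ∧ ∀ z, ¬(A q' z ∧ A z p') := by
          intro i p' q' hpm hpw hqm hqw
          obtain ⟨l1, l2, l3, l4⟩ := hlose i
          have hij := hisucc i
          obtain ⟨hnab, hnbc⟩ := hnQ i
          obtain ⟨hnab', hnbc'⟩ := hnQ (i+1)
          have go : ∀ u v x y : V, Loses A u v x y →
              (u = a i ∨ u = b i ∨ u = c i) → (v = a i ∨ v = b i ∨ v = c i) →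
              (x = a (i+1) ∨ x = b (i+1) ∨ x = c (i+1)) →
              (y = a (i+1) ∨ y = b (i+1) ∨ y = c (i+1)) →
              ((q' = u ∧ ¬ A v w) ∨ (q' = v ∧ ¬ A u w)) →
              ((p' = x ∧ ¬ A y w) ∨ (p' = y ∧ ¬ A x w)) →
              A p' q' ∧ ∀ z, ¬(A q' z ∧ A z p') :=
            fun u v x y hl tu tv tx ty hqc hpc =>
              pa u v x y hl (hne (i+1) i (Ne.symm hij) y u ty tu)
                (hne (i+1) i (Ne.symm hij) x v tx tv)
                (hne (i+1) i (Ne.symm hij) x u tx tu)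
                (hne (i+1) i (Ne.symm hij) y v ty tv)
                (hadj2 i (i+1) hij u y tu ty) (hadj2 i (i+1) hij v x tv tx)
                (hadj2 i (i+1) hij u x tu tx) (hadj2 i (i+1) hij v y tv ty)
                (hXadj (i+1) x tx) (hXadj (i+1) y ty)
                q' hqc hqw p' hpc hpw
          rcases hqm with rfl | rfl | rfl <;> rcases hpm with rfl | rfl | rfl
          · exact go _ _ _ _ l1 (Or.inl rfl) (Or.inr (Or.inl rfl)) (Or.inl rfl)
              (Or.inr (Or.inl rfl))
              (Or.inl ⟨rfl, fun hb => hnab ⟨hqw, hb⟩⟩)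
              (Or.inl ⟨rfl, fun hb => hnab' ⟨hpw, hb⟩⟩)
          · exact go _ _ _ _ l1 (Or.inl rfl) (Or.inr (Or.inl rfl)) (Or.inl rfl)
              (Or.inr (Or.inl rfl))
              (Or.inl ⟨rfl, fun hb => hnab ⟨hqw, hb⟩⟩)
              (Or.inr ⟨rfl, fun ha => hnab' ⟨ha, hpw⟩⟩)
          · exact go _ _ _ _ l2 (Or.inl rfl) (Or.inr (Or.inl rfl)) (Or.inr (Or.inl rfl))
              (Or.inr (Or.inr rfl))
              (Or.inl ⟨rfl, fun hb => hnab ⟨hqw, hb⟩⟩)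
              (Or.inr ⟨rfl, fun hb => hnbc' ⟨hb, hpw⟩⟩)
          · exact go _ _ _ _ l1 (Or.inl rfl) (Or.inr (Or.inl rfl)) (Or.inl rfl)
              (Or.inr (Or.inl rfl))
              (Or.inr ⟨rfl, fun ha => hnab ⟨ha, hqw⟩⟩)
              (Or.inl ⟨rfl, fun hb => hnab' ⟨hpw, hb⟩⟩)
          · exact go _ _ _ _ l1 (Or.inl rfl) (Or.inr (Or.inl rfl)) (Or.inl rfl)
              (Or.inr (Or.inl rfl))
              (Or.inr ⟨rfl, fun ha => hnab ⟨ha, hqw⟩⟩)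
              (Or.inr ⟨rfl, fun ha => hnab' ⟨ha, hpw⟩⟩)
          · exact go _ _ _ _ l2 (Or.inl rfl) (Or.inr (Or.inl rfl)) (Or.inr (Or.inl rfl))
              (Or.inr (Or.inr rfl))
              (Or.inr ⟨rfl, fun ha => hnab ⟨ha, hqw⟩⟩)
              (Or.inr ⟨rfl, fun hb => hnbc' ⟨hb, hpw⟩⟩)
          · exact go _ _ _ _ l3 (Or.inr (Or.inl rfl)) (Or.inr (Or.inr rfl)) (Or.inl rfl)
              (Or.inr (Or.inl rfl))
              (Or.inr ⟨rfl, fun hb => hnbc ⟨hb, hqw⟩⟩)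
              (Or.inl ⟨rfl, fun hb => hnab' ⟨hpw, hb⟩⟩)
          · exact go _ _ _ _ l3 (Or.inr (Or.inl rfl)) (Or.inr (Or.inr rfl)) (Or.inl rfl)
              (Or.inr (Or.inl rfl))
              (Or.inr ⟨rfl, fun hb => hnbc ⟨hb, hqw⟩⟩)
              (Or.inr ⟨rfl, fun ha => hnab' ⟨ha, hpw⟩⟩)
          · exact go _ _ _ _ l4 (Or.inr (Or.inl rfl)) (Or.inr (Or.inr rfl))
              (Or.inr (Or.inl rfl)) (Or.inr (Or.inr rfl))
              (Or.inr ⟨rfl, fun hb => hnbc ⟨hb, hqw⟩⟩)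
              (Or.inr ⟨rfl, fun hb => hnbc' ⟨hb, hpw⟩⟩)
        -- the arcs go backwards along the cycle, any number of steps
        have claim : ∀ n : ℕ, 1 ≤ n → n ≤ k - 1 → ∀ i : ZMod k, ∀ p',
            (p' = a (i + (n : ZMod k)) ∨ p' = b (i + (n : ZMod k)) ∨
             p' = c (i + (n : ZMod k))) → A p' w →
            ∀ q', (q' = a i ∨ q' = b i ∨ q' = c i) → A q' w → A p' q' := by
          intro n
          induction n with
          | zero => exact fun h => absurd h (by omega)
          | succ m ih =>
            intro h1 h2 i p' hpm hpw q' hqm hqw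
            by_cases hm : m = 0
            · subst hm
              have hcc : ((0 + 1 : ℕ) : ZMod k) = 1 := by push_cast; ring
              rw [hcc] at hpm
              exact (pair_arc i p' q' hpm hpw hqm hqw).1
            · have hshift : i + ((m + 1 : ℕ) : ZMod k) = (i + 1) + ((m : ℕ) : ZMod k) := by
                push_cast; ring
              rw [hshift] at hpm
              obtain ⟨r, hrm, hrw⟩ : ∃ r, (r = a (i+1) ∨ r = b (i+1) ∨ r = c (i+1)) ∧ A r w := by
                rcases (hPall (i+1)).1 with hr | hr
                · exact ⟨a (i+1), Or.inl rfl, hr⟩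
                · exact ⟨b (i+1), Or.inr (Or.inl rfl), hr⟩
              have hApr : A p' r := ih (by omega) (by omega) (i+1) p' hpm hpw r hrm hrw
              have hforb := (pair_arc i r q' hrm hrw hqm hqw).2
              have hnqp : ¬ A q' p' := fun hqp => hforb p' ⟨hqp, hApr⟩
              have hne0 : ((m + 1 : ℕ) : ZMod k) ≠ 0 := hcast (m+1) (by omega) (by omega)
              have hii : i ≠ i + ((m + 1 : ℕ) : ZMod k) := fun h => hne0 (left_eq_add.mp h)
              rw [← hshift] at hpm
              rcases hadj2 (i + ((m+1 : ℕ) : ZMod k)) i (Ne.symm hii) p' q' hpm hqm with h | h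
              · exact h
              · exact absurd h hnqp
        obtain ⟨q0, hq0m, hq0w⟩ : ∃ q0, (q0 = a 0 ∨ q0 = b 0 ∨ q0 = c 0) ∧ A q0 w := by
          rcases (hPall 0).1 with h | h
          · exact ⟨_, Or.inl rfl, h⟩
          · exact ⟨_, Or.inr (Or.inl rfl), h⟩
        obtain ⟨p1, hp1m, hp1w⟩ : ∃ p1, (p1 = a 1 ∨ p1 = b 1 ∨ p1 = c 1) ∧ A p1 w := by
          rcases (hPall 1).1 with h | h
          · exact ⟨_, Or.inl rfl, h⟩
          · exact ⟨_, Or.inr (Or.inl rfl), h⟩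
        have e1 : A p1 q0 := by
          refine claim 1 le_rfl (by omega) 0 p1 ?_ hp1w q0 hq0m hq0w
          rw [show ((0 : ZMod k) + ((1 : ℕ) : ZMod k)) = 1 by push_cast; ring]
          exact hp1m
        have e2 : A q0 p1 := by
          refine claim (k-1) (by omega) le_rfl 1 q0 ?_ hq0w p1 hp1m hp1w
          have hc2 : (1 : ZMod k) + ((k - 1 : ℕ) : ZMod k) = 0 := by
            have h : ((1 : ℕ) : ZMod k) + ((k - 1 : ℕ) : ZMod k) = ((k : ℕ) : ZMod k) := by
              rw [← Nat.cast_add]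
              congr 1
              omega
            rw [Nat.cast_one, ZMod.natCast_self] at h
            exact h
          rw [hc2]
          exact hq0m
        exact hA p1 q0 e1 e2
  -- assemble the conclusion
  intro u hu v hv
  have adjK : ∀ x, x ∈ Kset a b c → ∀ z, z ∉ Kset a b c → A x z ∨ A z x := by
    intro x hx z hz
    obtain ⟨i, hx⟩ := hx
    refine hadj i x z hx ?_ ?_ ?_ <;> intro h <;> exact hz ⟨i, by simp [h]⟩
  constructor
  · ext z
    simp only [Set.mem_diff, Set.mem_setOf_eq]
    constructor
    · rintro ⟨h1, h2⟩
      exact ⟨(main z h2 v hv u hu).mpr h1, h2⟩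
    · rintro ⟨h1, h2⟩
      exact ⟨(main z h2 u hu v hv).mpr h1, h2⟩
  · ext z
    simp only [Set.mem_diff, Set.mem_setOf_eq]
    constructor
    · rintro ⟨h1, h2⟩
      refine ⟨?_, h2⟩
      have hnu : ¬ A u z := fun h => hA u z h h1
      have hnv : ¬ A v z := fun h => hnu ((main z h2 u hu v hv).mpr h)
      rcases adjK v hv z h2 with h | h
      · exact absurd h hnv
      · exact h
    · rintro ⟨h1, h2⟩
      refine ⟨?_, h2⟩
      have hnv : ¬ A v z := fun h => hA v z h h1
      have hnu : ¬ A u z := fun h => hnv ((main z h2 v hv u hu).mpr h)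
      rcases adjK u hu z h2 with h | h
      · exact absurd h hnu
      · exact h

end SSNC
end
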